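/- arXiv:1203.6574 — 7 statements merged into one kernel-verified Lean document; each statement's English description precedes it below -/
import Mathlib

section
/- For a nonnegative random variable X and 0 < θ ≤ 1, X^θ is long-tailed if and only if lim_{x→∞} P(X > x − ξ x^{1−θ})/P(X > x) = 1 for all ξ ∈ ℝ. -/
open MeasureTheory Filter Set ProbabilityTheory Real

/-- The tail probability `P(X > x)` as a real number. -/
noncomputable def tailP {Ω : Type*} [MeasurableSpace Ω] (μ : Measure Ω) (X : Ω → ℝ) (x : ℝ) : ℝ :=
  (μ {ω | x < X ω}).toReal

lemma tailP_antitone {Ω : Type*} [MeasurableSpace Ω] (μ : Measure Ω) [IsProbabilityMeasure μ]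
    (X : Ω → ℝ) : Antitone (tailP μ X) := by
  intro a b hab
  exact ENNReal.toReal_mono (measure_ne_top μ _)
    (measure_mono (fun ω hω => lt_of_le_of_lt hab hω))

lemma tailP_rpow {Ω : Type*} [MeasurableSpace Ω] (μ : Measure Ω) (X : Ω → ℝ)
    (hX : ∀ ω, 0 ≤ X ω) {θ : ℝ} (hθ0 : 0 < θ) {x : ℝ} (hx : 0 ≤ x) :
    tailP μ (fun ω => X ω ^ θ) x = tailP μ X (x ^ θ⁻¹) := by
  unfold tailP
  congr 2
  ext ω
  simp only [mem_setOf_eq]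
  constructor
  · intro h
    have := Real.rpow_lt_rpow hx h (by positivity : (0:ℝ) < θ⁻¹)
    rwa [Real.rpow_rpow_inv (hX ω) hθ0.ne'] at this
  · intro h
    have := Real.rpow_lt_rpow (by positivity) h hθ0
    rwa [Real.rpow_inv_rpow hx hθ0.ne'] at this

lemma tendsto_div_symm {f g : ℝ → ℝ} (h : Tendsto (fun x => f x / g x) atTop (nhds 1)) :
    Tendsto (fun x => g x / f x) atTop (nhds 1) := by
  have := h.inv₀ one_ne_zero
  simpa [inv_div] using this

lemma key_tendsto (θ ξ : ℝ) (hθ0 : 0 < θ) :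
    Tendsto (fun u : ℝ => (u - ξ) ^ θ * u ^ (1 - θ) - u) atTop (nhds (-(θ * ξ))) := by
  rcases eq_or_ne ξ 0 with rfl | hξ
  · simp only [sub_zero, mul_zero, neg_zero]
    have h : (fun u : ℝ => u ^ θ * u ^ (1 - θ) - u) =ᶠ[atTop] fun _ => (0:ℝ) := by
      filter_upwards [eventually_gt_atTop 0] with u hu
      rw [← Real.rpow_add hu]
      norm_num
    exact tendsto_const_nhds.congr' h.symm
  · have hg : HasDerivAt (fun t : ℝ => (1 + t) ^ θ) θ 0 := by
      have h1 : HasDerivAt (fun t : ℝ => 1 + t) 1 0 := (hasDerivAt_id 0).const_add 1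
      have h2 := h1.rpow_const (p := θ) (Or.inl (by norm_num))
      simpa using h2
    have hs := hasDerivAt_iff_tendsto_slope.mp hg
    have ht : Tendsto (fun u : ℝ => -ξ / u) atTop (nhdsWithin 0 {0}ᶜ) := by
      apply tendsto_nhdsWithin_of_tendsto_nhds_of_eventually_within
      · have := tendsto_inv_atTop_zero (𝕜 := ℝ)
        have h2 := this.const_mul (-ξ)
        simpa [div_eq_mul_inv] using h2
      · filter_upwards [eventually_gt_atTop 0] with u hu
        simp only [mem_compl_iff, mem_singleton_iff]
        exact div_ne_zero (neg_ne_zero.mpr hξ) hu.ne'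
    have hcomp := (hs.comp ht).const_mul (-ξ)
    rw [show -ξ * θ = -(θ * ξ) by ring] at hcomp
    refine hcomp.congr' ?_
    filter_upwards [eventually_gt_atTop (max |ξ| 0)] with u hu
    have hu0 : 0 < u := lt_of_le_of_lt (le_max_right _ _) hu
    have hξu : |ξ| < u := lt_of_le_of_lt (le_max_left _ _) hu
    have h1 : 0 < 1 + -ξ / u := by
      have h2 : ξ / u < 1 := (div_lt_one hu0).mpr (lt_of_le_of_lt (le_abs_self ξ) hξu)
      have h3 : -ξ / u = -(ξ / u) := by ring
      rw [h3]; linarith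
    have e1 : u - ξ = u * (1 + -ξ / u) := by field_simp; ring
    have e2 : (u - ξ) ^ θ * u ^ (1 - θ) = (1 + -ξ / u) ^ θ * u := by
      rw [e1, Real.mul_rpow hu0.le h1.le, mul_right_comm, ← Real.rpow_add hu0]
      norm_num [mul_comm]
    simp only [Function.comp_apply, slope_def_field]
    rw [e2]
    have hfz : (1 + (0:ℝ)) ^ θ = 1 := by norm_num
    rw [hfz]
    field_simp
    ring_nf
    rw [mul_right_comm ξ, mul_inv_cancel₀ hξ]
    ring

/-- A nonnegative random variable `X` is long-tailed if `P(X > x) > 0` for all `x ≥ 0` and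
`P(X > x + y) / P(X > x) → 1` as `x → ∞` for all `y > 0`. -/
def LongTailed {Ω : Type*} [MeasurableSpace Ω] (μ : Measure Ω) (X : Ω → ℝ) : Prop :=
  (∀ x ≥ 0, 0 < tailP μ X x) ∧
  ∀ y > 0, Tendsto (fun x => tailP μ X (x + y) / tailP μ X x) atTop (nhds 1)


/-- For a nonnegative random variable `X` and `0 < θ ≤ 1`, `X^θ` is long-tailed if and only if
`P(X > x - ξ x^{1-θ}) / P(X > x) → 1` for all `ξ ∈ ℝ` (together with positivity of the tail). -/
theorem stmt2 {Ω : Type*} [MeasurableSpace Ω] (μ : Measure Ω) [IsProbabilityMeasure μ]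
    (X : Ω → ℝ) (hX : ∀ ω, 0 ≤ X ω) (θ : ℝ) (hθ0 : 0 < θ) (hθ1 : θ ≤ 1) :
    LongTailed μ (fun ω => X ω ^ θ) ↔
      ((∀ x ≥ 0, 0 < tailP μ X x) ∧
        ∀ ξ : ℝ, Tendsto (fun x => tailP μ X (x - ξ * x ^ (1 - θ)) / tailP μ X x)
          atTop (nhds 1)) := by
  have hθinv : 0 < θ⁻¹ := by positivity
  set Y : Ω → ℝ := fun ω => X ω ^ θ with hYdef
  have hTP : ∀ x : ℝ, 0 ≤ x → tailP μ Y x = tailP μ X (x ^ θ⁻¹) :=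
    fun x hx => tailP_rpow μ X hX hθ0 hx
  have hposiff : (∀ x ≥ 0, 0 < tailP μ Y x) ↔ (∀ x ≥ 0, 0 < tailP μ X x) := by
    constructor
    · intro h x hx
      have h2 := h (x ^ θ) (Real.rpow_nonneg hx θ)
      rwa [hTP _ (Real.rpow_nonneg hx θ), Real.rpow_rpow_inv hx hθ0.ne'] at h2
    · intro h x hx
      rw [hTP x hx]
      exact h _ (Real.rpow_nonneg hx θ⁻¹)
  have hcompθ : Tendsto (fun x : ℝ => x ^ θ) atTop atTop := tendsto_rpow_atTop hθ0
  constructor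
  · rintro ⟨hpos, hlim⟩
    have hposX := hposiff.mp hpos
    refine ⟨hposX, fun ξ => ?_⟩
    set y : ℝ := θ * |ξ| + 1 with hydef
    have hy : 0 < y := by positivity
    have H1 : Tendsto (fun x => tailP μ X ((x ^ θ + y) ^ θ⁻¹) / tailP μ X x) atTop (nhds 1) := by
      have h0 := (hlim y hy).comp hcompθ
      refine h0.congr' ?_
      filter_upwards [eventually_gt_atTop 0] with x hx
      have hxθ : (0:ℝ) ≤ x ^ θ := Real.rpow_nonneg hx.le θ
      simp only [Function.comp_apply]
      rw [hTP _ (by linarith), hTP _ hxθ, Real.rpow_rpow_inv hx.le hθ0.ne']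
    have H2 : Tendsto (fun x => tailP μ X ((x ^ θ - y) ^ θ⁻¹) / tailP μ X x) atTop (nhds 1) := by
      have hsub : Tendsto (fun x : ℝ => x ^ θ - y) atTop atTop := by
        have := tendsto_atTop_add_const_right atTop (-y) hcompθ
        simpa [sub_eq_add_neg] using this
      have h0 := (hlim y hy).comp hsub
      have h1 : Tendsto (fun x => tailP μ Y (x ^ θ) / tailP μ Y (x ^ θ - y)) atTop (nhds 1) := by
        refine h0.congr (fun x => ?_)
        simp only [Function.comp_apply, sub_add_cancel]
      have h2 := tendsto_div_symm h1
      refine h2.congr' ?_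
      filter_upwards [hcompθ.eventually_ge_atTop y, eventually_gt_atTop 0] with x hxy hx
      have hxθ : (0:ℝ) ≤ x ^ θ := Real.rpow_nonneg hx.le θ
      rw [hTP _ (by linarith), hTP _ hxθ, Real.rpow_rpow_inv hx.le hθ0.ne']
    have hK := (key_tendsto θ ξ hθ0).comp hcompθ
    have habs : |θ * ξ| = θ * |ξ| := by rw [abs_mul, abs_of_pos hθ0]
    have hlt1 : -(θ * ξ) < y := by
      have := neg_abs_le (θ * ξ); rw [habs] at this; linarith [hydef ▸ (le_refl y)]
    have hlt2 : -y < -(θ * ξ) := by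
      have := le_abs_self (θ * ξ); rw [habs] at this; linarith
    have hub : ∀ᶠ x : ℝ in atTop, (x ^ θ - ξ) ^ θ * (x ^ θ) ^ (1 - θ) - x ^ θ < y :=
      hK.eventually (eventually_lt_nhds hlt1)
    have hlb : ∀ᶠ x : ℝ in atTop, -y < (x ^ θ - ξ) ^ θ * (x ^ θ) ^ (1 - θ) - x ^ θ :=
      hK.eventually (eventually_gt_nhds hlt2)
    have hmain : ∀ᶠ x : ℝ in atTop,
        tailP μ X ((x ^ θ + y) ^ θ⁻¹) / tailP μ X x
          ≤ tailP μ X (x - ξ * x ^ (1 - θ)) / tailP μ X x ∧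
        tailP μ X (x - ξ * x ^ (1 - θ)) / tailP μ X x
          ≤ tailP μ X ((x ^ θ - y) ^ θ⁻¹) / tailP μ X x := by
      filter_upwards [eventually_gt_atTop 0, hcompθ.eventually_gt_atTop (max ξ y), hub, hlb]
        with x hx hxθm hu hl
      have hxξ : ξ < x ^ θ := lt_of_le_of_lt (le_max_left _ _) hxθm
      have hxy2 : y < x ^ θ := lt_of_le_of_lt (le_max_right _ _) hxθm
      set a := x - ξ * x ^ (1 - θ) with ha
      have hx1θ : (0:ℝ) < x ^ (1 - θ) := Real.rpow_pos_of_pos hx _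
      have ha' : a = (x ^ θ - ξ) * x ^ (1 - θ) := by
        rw [ha, sub_mul]
        congr 1
        rw [← Real.rpow_add hx]
        norm_num
      have ha0 : 0 < a := by
        rw [ha']
        exact mul_pos (by linarith) hx1θ
      have haθ : a ^ θ = (x ^ θ - ξ) ^ θ * (x ^ θ) ^ (1 - θ) := by
        rw [ha', Real.mul_rpow (by linarith) hx1θ.le, ← Real.rpow_mul hx.le,
          ← Real.rpow_mul hx.le, mul_comm (1 - θ) θ]
      have hle1 : x ^ θ - y ≤ a ^ θ := by rw [haθ]; linarith
      have hle2 : a ^ θ ≤ x ^ θ + y := by rw [haθ]; linarith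
      have hA1 : (x ^ θ - y) ^ θ⁻¹ ≤ a := by
        have h2 := Real.rpow_le_rpow (by linarith) hle1 hθinv.le
        rwa [Real.rpow_rpow_inv ha0.le hθ0.ne'] at h2
      have hA2 : a ≤ (x ^ θ + y) ^ θ⁻¹ := by
        have h2 := Real.rpow_le_rpow (Real.rpow_nonneg ha0.le θ) hle2 hθinv.le
        rwa [Real.rpow_rpow_inv ha0.le hθ0.ne'] at h2
      have hTx : 0 < tailP μ X x := hposX x hx.le
      exact ⟨(div_le_div_iff_of_pos_right hTx).mpr (tailP_antitone μ X hA2),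
        (div_le_div_iff_of_pos_right hTx).mpr (tailP_antitone μ X hA1)⟩
    exact tendsto_of_tendsto_of_tendsto_of_le_of_le' H1 H2
      (hmain.mono fun x h => h.1) (hmain.mono fun x h => h.2)
  · rintro ⟨hposX, hlim⟩
    refine ⟨hposiff.mpr hposX, fun y hy => ?_⟩
    set c : ℝ := (y + 1) / θ with hcdef
    have hc0 : 0 < c := by positivity
    have hθc : θ * c = y + 1 := by rw [hcdef]; field_simp
    have hG : Tendsto (fun z => tailP μ X (z + c * z ^ (1 - θ)) / tailP μ X z)
        atTop (nhds 1) := by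
      refine (hlim (-c)).congr (fun z => ?_)
      rw [neg_mul, sub_neg_eq_add]
    have hK := (key_tendsto θ (-c) hθ0).comp hcompθ
    have hyc : y < -(θ * -c) := by rw [mul_neg, neg_neg, hθc]; linarith
    have hev : ∀ᶠ z : ℝ in atTop,
        y < (z ^ θ - -c) ^ θ * (z ^ θ) ^ (1 - θ) - z ^ θ :=
      hK.eventually (eventually_gt_nhds hyc)
    have hG2 : Tendsto (fun z => tailP μ X ((z ^ θ + y) ^ θ⁻¹) / tailP μ X z)
        atTop (nhds 1) := by
      have hup : ∀ᶠ z : ℝ in atTop,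
          tailP μ X ((z ^ θ + y) ^ θ⁻¹) / tailP μ X z ≤ 1 := by
        filter_upwards [eventually_gt_atTop 0] with z hz
        have hTz := hposX z hz.le
        rw [div_le_one hTz]
        apply tailP_antitone
        have hle : z ^ θ ≤ z ^ θ + y := by linarith
        have h2 := Real.rpow_le_rpow (Real.rpow_nonneg hz.le θ) hle hθinv.le
        rwa [Real.rpow_rpow_inv hz.le hθ0.ne'] at h2
      have hdown : ∀ᶠ z : ℝ in atTop,
          tailP μ X (z + c * z ^ (1 - θ)) / tailP μ X z
            ≤ tailP μ X ((z ^ θ + y) ^ θ⁻¹) / tailP μ X z := by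
        filter_upwards [eventually_gt_atTop 0, hev] with z hz hz2
        have hTz := hposX z hz.le
        have hz1θ : (0:ℝ) < z ^ (1 - θ) := Real.rpow_pos_of_pos hz _
        have hb' : z + c * z ^ (1 - θ) = (z ^ θ + c) * z ^ (1 - θ) := by
          rw [add_mul]
          congr 1
          rw [← Real.rpow_add hz]
          norm_num
        have hzθ0 : (0:ℝ) < z ^ θ := Real.rpow_pos_of_pos hz _
        have hb0 : 0 < z + c * z ^ (1 - θ) := by positivity
        have hbθ : (z + c * z ^ (1 - θ)) ^ θ = (z ^ θ + c) ^ θ * (z ^ θ) ^ (1 - θ) := by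
          rw [hb', Real.mul_rpow (by linarith) hz1θ.le, ← Real.rpow_mul hz.le,
            ← Real.rpow_mul hz.le, mul_comm (1 - θ) θ]
        rw [sub_neg_eq_add] at hz2
        have hle : z ^ θ + y ≤ (z + c * z ^ (1 - θ)) ^ θ := by rw [hbθ]; linarith
        have h3 := Real.rpow_le_rpow (by linarith) hle hθinv.le
        rw [Real.rpow_rpow_inv hb0.le hθ0.ne'] at h3
        exact (div_le_div_iff_of_pos_right hTz).mpr (tailP_antitone μ X h3)
      exact tendsto_of_tendsto_of_tendsto_of_le_of_le' hG tendsto_const_nhds hdown hup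
    have hfin := hG2.comp (tendsto_rpow_atTop hθinv)
    refine hfin.congr' ?_
    filter_upwards [eventually_gt_atTop 0] with x hx
    simp only [Function.comp_apply]
    rw [Real.rpow_inv_rpow hx.le hθ0.ne', hTP _ (by linarith), hTP _ hx.le]
end

section
/- For a nonnegative random variable X and 0 < θ ≤ 1, if lim_{x→∞} P(X > x − ξ x^{1−θ})/P(X > x) = 1 for some ξ ∈ ℝ \\ {0}, then X^θ is long-tailed. -/
open MeasureTheory Filter Set ProbabilityTheory Real

lemma aux_double {L : ℝ → ℝ} (hanti : Antitone L) (hpos : ∀ x, 0 < L x) {θ a : ℝ}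
    (hθ1 : θ ≤ 1) (ha : 0 < a)
    (h : Tendsto (fun u => L (u + a * u ^ (1 - θ)) / L u) atTop (nhds 1)) :
    Tendsto (fun u => L (u + (2 * a) * u ^ (1 - θ)) / L u) atTop (nhds 1) := by
  have hφ : Tendsto (fun u : ℝ => u + a * u ^ (1 - θ)) atTop atTop := by
    apply tendsto_atTop_mono' atTop ?_ tendsto_id
    filter_upwards [eventually_ge_atTop (1:ℝ)] with u hu
    have h1 : 0 ≤ u ^ (1-θ) := Real.rpow_nonneg (by linarith) _
    simp only [id]
    nlinarith
  have hmul : Tendsto (fun u => (L (u + a * u ^ (1-θ)) / L u) *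
      (L ((u + a * u ^ (1-θ)) + a * (u + a * u ^ (1-θ)) ^ (1-θ)) / L (u + a * u ^ (1-θ))))
      atTop (nhds 1) := by
    have := h.mul (h.comp hφ)
    simpa using this
  refine tendsto_of_tendsto_of_tendsto_of_le_of_le' hmul tendsto_const_nhds ?_ ?_
  · filter_upwards [eventually_ge_atTop (1:ℝ)] with u hu
    obtain ⟨v, hv⟩ : ∃ v, v = u + a * u ^ (1-θ) := ⟨_, rfl⟩
    rw [← hv]
    have hu0 : (0:ℝ) < u := by linarith
    have hpow : 0 ≤ u ^ (1-θ) := Real.rpow_nonneg hu0.le _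
    have huv : u ≤ v := by rw [hv]; nlinarith
    have hvpow : u ^ (1-θ) ≤ v ^ (1-θ) := Real.rpow_le_rpow hu0.le huv (by linarith)
    have key : u + 2 * a * u ^ (1-θ) ≤ v + a * v ^ (1-θ) := by rw [hv]; rw [hv] at hvpow; nlinarith
    have h1 : L (v + a * v ^ (1-θ)) ≤ L (u + 2 * a * u ^ (1-θ)) := hanti key
    have h2 : L v / L u * (L (v + a * v ^ (1-θ)) / L v) = L (v + a * v ^ (1-θ)) / L u := by
      rw [div_mul_div_comm, mul_comm (L v) (L (v + a * v ^ (1-θ))), mul_div_mul_right _ _ (hpos v).ne']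
    rw [h2]
    gcongr
    exact (hpos u).le
  · filter_upwards [eventually_ge_atTop (1:ℝ)] with u hu
    have hpow : 0 ≤ u ^ (1-θ) := Real.rpow_nonneg (by linarith) _
    exact div_le_one_of_le₀ (hanti (by nlinarith)) (hpos u).le

lemma aux_mono {L : ℝ → ℝ} (hanti : Antitone L) (hpos : ∀ x, 0 < L x) {θ a c : ℝ}
    (hθ1 : θ ≤ 1) (hc : 0 < c) (hca : c ≤ a)
    (h : Tendsto (fun u => L (u + a * u ^ (1 - θ)) / L u) atTop (nhds 1)) :
    Tendsto (fun u => L (u + c * u ^ (1 - θ)) / L u) atTop (nhds 1) := by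
  refine tendsto_of_tendsto_of_tendsto_of_le_of_le' h tendsto_const_nhds ?_ ?_
  · filter_upwards [eventually_ge_atTop (1:ℝ)] with u hu
    have hpow : 0 ≤ u ^ (1-θ) := Real.rpow_nonneg (by linarith) _
    have : L (u + a * u ^ (1-θ)) ≤ L (u + c * u ^ (1-θ)) := hanti (by nlinarith)
    gcongr
    exact (hpos u).le
  · filter_upwards [eventually_ge_atTop (1:ℝ)] with u hu
    have hpow : 0 ≤ u ^ (1-θ) := Real.rpow_nonneg (by linarith) _
    exact div_le_one_of_le₀ (hanti (by nlinarith)) (hpos u).le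

lemma aux_all {L : ℝ → ℝ} (hanti : Antitone L) (hpos : ∀ x, 0 < L x) {θ a : ℝ}
    (hθ1 : θ ≤ 1) (ha : 0 < a)
    (h : Tendsto (fun u => L (u + a * u ^ (1 - θ)) / L u) atTop (nhds 1))
    {c : ℝ} (hc : 0 < c) :
    Tendsto (fun u => L (u + c * u ^ (1 - θ)) / L u) atTop (nhds 1) := by
  have H : ∀ n : ℕ, Tendsto (fun u => L (u + ((2:ℝ)^n * a) * u ^ (1 - θ)) / L u)
      atTop (nhds 1) := by
    intro n
    induction n with
    | zero => simpa using h
    | succ k ih =>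
        have := aux_double hanti hpos hθ1 (by positivity : (0:ℝ) < (2:ℝ)^k * a) ih
        have heq : (2:ℝ) * ((2:ℝ)^k * a) = (2:ℝ)^(k+1) * a := by ring
        rw [heq] at this
        exact this
  obtain ⟨n, hn⟩ := exists_nat_ge (c / a)
  have h2n : (n:ℝ) ≤ (2:ℝ)^n := by
    exact_mod_cast (Nat.lt_two_pow_self (n := n)).le
  have hcn : c ≤ (2:ℝ)^n * a := by
    have : c / a ≤ (2:ℝ)^n := hn.trans h2n
    rw [div_le_iff₀ ha] at this
    linarith [this]
  exact aux_mono hanti hpos hθ1 hc hcn (H n)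

lemma aux_flip {L : ℝ → ℝ} (hanti : Antitone L) (hpos : ∀ x, 0 < L x) {θ ξ : ℝ}
    (hθ0 : 0 < θ) (hθ1 : θ ≤ 1) (hξ : 0 < ξ)
    (h : Tendsto (fun u => L (u - ξ * u ^ (1 - θ)) / L u) atTop (nhds 1)) :
    Tendsto (fun v => L (v + ξ * v ^ (1 - θ)) / L v) atTop (nhds 1) := by
  -- g tends to atTop
  have hg : Tendsto (fun u : ℝ => u - ξ * u ^ (1 - θ)) atTop atTop := by
    have hhalf : Tendsto (fun u : ℝ => u / 2) atTop atTop :=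
      tendsto_id.atTop_div_const two_pos
    apply tendsto_atTop_mono' atTop ?_ hhalf
    filter_upwards [eventually_ge_atTop (1:ℝ),
      (tendsto_rpow_atTop hθ0).eventually_ge_atTop (2*ξ)] with u hu1 hu2
    have hu0 : (0:ℝ) < u := by linarith
    have hA : u ^ (1-θ) * u ^ θ = u := by
      rw [← Real.rpow_add hu0, sub_add_cancel, Real.rpow_one]
    have hB : (0:ℝ) < u ^ (1-θ) := Real.rpow_pos_of_pos hu0 _
    nlinarith
  rw [Metric.tendsto_atTop] at h ⊢
  intro ε hε
  obtain ⟨N₀, hN₀⟩ := h (ε/2) (by linarith)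
  refine ⟨max N₀ 1, fun v hv => ?_⟩
  have hv1 : (1:ℝ) ≤ v := le_trans (le_max_right _ _) hv
  have hvN : N₀ ≤ v := le_trans (le_max_left _ _) hv
  have hv0 : (0:ℝ) < v := by linarith
  -- find u ≥ v with g u = v
  obtain ⟨W, hWv, hWg⟩ : ∃ W, v ≤ W ∧ v ≤ W - ξ * W ^ (1-θ) := by
    have := (hg.eventually_ge_atTop v).and (eventually_ge_atTop v)
    obtain ⟨W, hW⟩ := this.exists
    exact ⟨W, hW.2, hW.1⟩
  have hcont : ContinuousOn (fun u : ℝ => u - ξ * u ^ (1-θ)) (Icc v W) := by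
    intro u hu
    have hu0 : u ≠ 0 := by have := hu.1; intro h0; rw [h0] at this; linarith
    exact ((continuousAt_id.sub (continuousAt_const.mul
      (Real.continuousAt_rpow_const u _ (Or.inl hu0)))).continuousWithinAt)
  have hgv : v - ξ * v ^ (1-θ) ≤ v := by
    have : 0 ≤ ξ * v ^ (1-θ) := by positivity
    linarith
  obtain ⟨u, hu_mem, hgu⟩ : ∃ u ∈ Icc v W, u - ξ * u ^ (1-θ) = v := by
    have := intermediate_value_Icc hWv hcont
    exact this ⟨hgv, hWg⟩
  have huv : v ≤ u := hu_mem.1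
  have hu1 : (1:ℝ) ≤ u := hv1.trans huv
  -- from hypothesis at u
  have hduN : dist (L (u - ξ * u ^ (1-θ)) / L u) 1 < ε/2 := hN₀ u (hvN.trans huv)
  rw [hgu] at hduN
  have hLu := hpos u
  have hLv := hpos v
  have hratio : L v / L u < 1 + ε/2 := by
    have := abs_lt.mp (by rwa [Real.dist_eq] at hduN)
    linarith [this.2]
  have hLu_lb : L v / (1 + ε/2) < L u := by
    rw [div_lt_iff₀ (by linarith)]
    rw [div_lt_iff₀ hLu] at hratio
    linarith
  -- u ≥ v + ξ v^{1-θ}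
  have hupow : v ^ (1-θ) ≤ u ^ (1-θ) := Real.rpow_le_rpow hv0.le huv (by linarith)
  have hkey : v + ξ * v ^ (1-θ) ≤ u := by nlinarith [hgu]
  have hLlb : L u ≤ L (v + ξ * v ^ (1-θ)) := hanti hkey
  have hLub : L (v + ξ * v ^ (1-θ)) ≤ L v := hanti (le_add_of_nonneg_right (by positivity))
  set r := L (v + ξ * v ^ (1-θ)) / L v with hr
  have hr1 : r ≤ 1 := div_le_one_of_le₀ hLub hLv.le
  have hδ : (0:ℝ) < 1 + ε/2 := by linarith
  have hrlb : 1 / (1 + ε/2) < r := by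
    rw [hr, div_lt_div_iff₀ hδ hLv]
    have h3 : L v / (1 + ε/2) < L (v + ξ * v ^ (1-θ)) := lt_of_lt_of_le hLu_lb hLlb
    rw [div_lt_iff₀ hδ] at h3
    linarith
  have hinv : 1 - ε/2 ≤ 1/(1+ε/2) := by
    rw [le_div_iff₀ hδ]
    nlinarith
  rw [Real.dist_eq, abs_of_nonpos (by linarith)]
  linarith

lemma key_ineq {θ y : ℝ} (hθ0 : 0 < θ) (hθ1 : θ ≤ 1) (hy : 0 < y) :
    ∀ᶠ x : ℝ in atTop, (x + y) ^ θ⁻¹ ≤ x ^ θ⁻¹ + (2*y/θ) * (x ^ θ⁻¹) ^ (1 - θ) := by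
  set K := 2*y/θ with hK
  have hK0 : 0 < K := by positivity
  filter_upwards [eventually_ge_atTop (1:ℝ), eventually_ge_atTop K] with x hx1 hxK
  have hx0 : (0:ℝ) < x := by linarith
  set u := x ^ θ⁻¹ with hu
  have hu0 : (0:ℝ) < u := Real.rpow_pos_of_pos hx0 _
  have hu1 : (1:ℝ) ≤ u := Real.one_le_rpow hx1 (by positivity)
  have huθ : u ^ θ = x := Real.rpow_inv_rpow hx0.le hθ0.ne'
  set h := K * u ^ (1-θ) with hh
  have hpow_pos : (0:ℝ) < u ^ (1-θ) := Real.rpow_pos_of_pos hu0 _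
  have hh0 : (0:ℝ) < h := by positivity
  set A := u + h with hA
  have hA0 : (0:ℝ) < A := by positivity
  have hid : u ^ (1-θ) * u ^ (θ-1) = 1 := by
    rw [← Real.rpow_add hu0]
    norm_num
  have hpow_pos' : (0:ℝ) < u ^ (θ-1) := Real.rpow_pos_of_pos hu0 _
  have hhu : h ≤ u := by
    have : u ^ (1-θ) * u ^ θ = u := by
      rw [← Real.rpow_add hu0, sub_add_cancel, Real.rpow_one]
    nlinarith
  -- Bernoulli: (u/A)^θ ≤ 1 - θ * h / A
  have hbern : (u/A) ^ θ ≤ 1 - θ * (h/A) := by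
    have hs : (-1:ℝ) ≤ -(h/A) := by
      rw [neg_le_neg_iff, div_le_one hA0]
      linarith
    have := rpow_one_add_le_one_add_mul_self hs hθ0.le hθ1
    have he : 1 + -(h/A) = u/A := by
      field_simp
      rw [hA]; ring
    rw [he] at this
    linarith [this]
  -- multiply by A^θ
  have hmulA : (u/A) ^ θ * A ^ θ = u ^ θ := by
    rw [← Real.mul_rpow (by positivity) hA0.le, div_mul_cancel₀ _ hA0.ne']
  have hAθ : (0:ℝ) < A ^ θ := Real.rpow_pos_of_pos hA0 _
  have hstep : u ^ θ ≤ A ^ θ - θ * h * A ^ (θ-1) := by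
    have h1 : u ^ θ ≤ (1 - θ * (h/A)) * A ^ θ := by
      rw [← hmulA]
      exact mul_le_mul_of_nonneg_right hbern hAθ.le
    have h2 : (1 - θ * (h/A)) * A ^ θ = A ^ θ - θ * h * (A ^ θ / A) := by
      field_simp
    rw [Real.rpow_sub_one hA0.ne'] at *
    linarith [h1, h2.symm ▸ h1]
  -- θ * h * A^{θ-1} ≥ y
  have hAle : A ≤ 2 * u := by rw [hA]; linarith
  have hanti' : (2*u) ^ (θ-1) ≤ A ^ (θ-1) :=
    antitoneOn_rpow_Ioi_of_exponent_nonpos (by linarith)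
      (mem_Ioi.mpr hA0) (mem_Ioi.mpr (by linarith)) hAle
  have h2u : (2*u) ^ (θ-1) = (2:ℝ)^(θ-1) * u^(θ-1) := Real.mul_rpow (by norm_num) hu0.le
  have h2half : (1:ℝ)/2 ≤ (2:ℝ)^(θ-1) := by
    have := Real.rpow_le_rpow_of_exponent_le (by norm_num : (1:ℝ) ≤ 2)
      (by linarith : (-1:ℝ) ≤ θ-1)
    rwa [Real.rpow_neg_one, show ((2:ℝ))⁻¹ = 1/2 by norm_num] at this
  have hlow : y ≤ θ * h * A ^ (θ-1) := by
    have hApow : (0:ℝ) < A ^ (θ-1) := Real.rpow_pos_of_pos hA0 _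
    have e1 : θ * h * A ^ (θ-1) = (θ*K) * (u^(1-θ) * A^(θ-1)) := by rw [hh]; ring
    have e2 : u^(1-θ) * ((2:ℝ)^(θ-1) * u^(θ-1)) ≤ u^(1-θ) * A^(θ-1) := by
      rw [← h2u]
      exact mul_le_mul_of_nonneg_left hanti' hpow_pos.le
    have e3 : u^(1-θ) * ((2:ℝ)^(θ-1) * u^(θ-1)) = (2:ℝ)^(θ-1) := by
      rw [show u^(1-θ) * ((2:ℝ)^(θ-1) * u^(θ-1)) = (2:ℝ)^(θ-1) * (u^(1-θ) * u^(θ-1)) by ring,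
        hid, mul_one]
    have e4 : θ * K = 2 * y := by rw [hK]; field_simp
    rw [e1, e4]
    nlinarith [e2, e3, h2half]
  -- conclude
  have hfin : x + y ≤ A ^ θ := by
    rw [← huθ]; linarith
  have := Real.rpow_le_rpow (by linarith : (0:ℝ) ≤ x + y) hfin (by positivity : (0:ℝ) ≤ θ⁻¹)
  rwa [Real.rpow_rpow_inv hA0.le hθ0.ne'] at this


/-- For a nonnegative random variable `X` and `0 < θ ≤ 1`, if
`P(X > x - ξ x^{1-θ}) / P(X > x) → 1` for some `ξ ≠ 0`, then `X^θ` is long-tailed. -/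
theorem stmt3 {Ω : Type*} [MeasurableSpace Ω] (μ : Measure Ω) [IsProbabilityMeasure μ]
    (X : Ω → ℝ) (hX : ∀ ω, 0 ≤ X ω) (θ : ℝ) (hθ0 : 0 < θ) (hθ1 : θ ≤ 1)
    (hpos : ∀ x ≥ 0, 0 < tailP μ X x)
    (ξ : ℝ) (hξ : ξ ≠ 0)
    (hlim : Tendsto (fun x => tailP μ X (x - ξ * x ^ (1 - θ)) / tailP μ X x) atTop (nhds 1)) :
    LongTailed μ (fun ω => X ω ^ θ) := by
  set L := tailP μ X with hL
  have hanti : Antitone L := by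
    intro a b hab
    apply ENNReal.toReal_mono (measure_ne_top μ _)
    exact measure_mono (fun ω hω => lt_of_le_of_lt hab hω)
  have hLpos : ∀ x, 0 < L x := fun x =>
    lt_of_lt_of_le (hpos (max x 0) (le_max_right _ _)) (hanti (le_max_left x 0))
  have hset : ∀ x : ℝ, 0 ≤ x → {ω | x < X ω ^ θ} = {ω | x ^ θ⁻¹ < X ω} := by
    intro x hx
    ext ω
    simp only [mem_setOf_eq]
    constructor
    · intro hlt
      have := Real.rpow_lt_rpow hx hlt (by positivity : (0:ℝ) < θ⁻¹)
      rwa [Real.rpow_rpow_inv (hX ω) hθ0.ne'] at this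
    · intro hlt
      have := Real.rpow_lt_rpow (Real.rpow_nonneg hx _) hlt hθ0
      rwa [Real.rpow_inv_rpow hx hθ0.ne'] at this
  have hT : ∀ x : ℝ, 0 ≤ x → tailP μ (fun ω => X ω ^ θ) x = L (x ^ θ⁻¹) := by
    intro x hx
    show (μ {ω | x < X ω ^ θ}).toReal = (μ {ω | x ^ θ⁻¹ < X ω}).toReal
    rw [hset x hx]
  have habs : 0 < |ξ| := abs_pos.mpr hξ
  have hup : Tendsto (fun u => L (u + |ξ| * u ^ (1-θ)) / L u) atTop (nhds 1) := by
    rcases lt_or_gt_of_ne hξ with hneg | hposξ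
    · have heq : ∀ u:ℝ, u - ξ * u ^ (1-θ) = u + |ξ| * u ^ (1-θ) := by
        intro u; rw [abs_of_neg hneg]; ring
      simp only [heq] at hlim
      exact hlim
    · rw [abs_of_pos hposξ]
      exact aux_flip hanti hLpos hθ0 hθ1 hposξ hlim
  constructor
  · intro x hx
    rw [hT x hx]
    exact hLpos _
  · intro y hy
    have hK : (0:ℝ) < 2*y/θ := by positivity
    have hcomp : Tendsto ((fun u => L (u + (2*y/θ) * u ^ (1-θ)) / L u) ∘ fun x : ℝ => x ^ θ⁻¹)
        atTop (nhds 1) :=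
      (aux_all hanti hLpos hθ1 habs hup hK).comp (tendsto_rpow_atTop (by positivity))
    refine tendsto_of_tendsto_of_tendsto_of_le_of_le' hcomp tendsto_const_nhds ?_ ?_
    · filter_upwards [eventually_ge_atTop (0:ℝ), key_ineq hθ0 hθ1 hy] with x hx hkey
      rw [hT x hx, hT (x+y) (by linarith)]
      have h1 : L (x^θ⁻¹ + (2*y/θ) * (x^θ⁻¹)^(1-θ)) ≤ L ((x+y)^θ⁻¹) := hanti hkey
      simp only [Function.comp_apply]
      gcongr
      exact (hLpos _).le
    · filter_upwards [eventually_ge_atTop (0:ℝ)] with x hx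
      rw [hT x hx, hT (x+y) (by linarith)]
      exact div_le_one_of_le₀
        (hanti (Real.rpow_le_rpow hx (by linarith) (by positivity))) (hLpos _).le
end

section
/- Let X be a nonnegative random variable with X^θ long-tailed for some 0 < θ ≤ 1, and let g : [0,∞) → [0,∞) satisfy limsup_{x→∞} g(x)/x < 1. Then for every ε > 0 there exists x̆_ε > 0 such that for all x > x̆_ε and all 0 ≤ u ≤ g(x): P(X > x − u) ≤ P(X > x) · e^{ε(u^θ + 1)}. -/
open MeasureTheory Filter Set ProbabilityTheory Real

lemma tailP_nonneg {Ω : Type*} [MeasurableSpace Ω] (μ : Measure Ω) (X : Ω → ℝ) (x : ℝ) :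
    0 ≤ tailP μ X x := ENNReal.toReal_nonneg

lemma tailP_anti {Ω : Type*} [MeasurableSpace Ω] (μ : Measure Ω) [IsProbabilityMeasure μ]
    (X : Ω → ℝ) {a b : ℝ} (hab : a ≤ b) : tailP μ X b ≤ tailP μ X a := by
  apply ENNReal.toReal_mono (measure_ne_top μ _)
  exact measure_mono fun ω h => lt_of_le_of_lt hab h

lemma tailP_le_one {Ω : Type*} [MeasurableSpace Ω] (μ : Measure Ω) [IsProbabilityMeasure μ]
    (X : Ω → ℝ) (x : ℝ) : tailP μ X x ≤ 1 := by
  have h : μ {ω | x < X ω} ≤ 1 := (measure_mono (subset_univ _)).trans_eq measure_univ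
  simpa [tailP] using ENNReal.toReal_mono ENNReal.one_ne_top h

lemma rpow_superadd {a b θ : ℝ} (ha : 0 ≤ a) (hb : 0 ≤ b) (h0 : 0 ≤ θ) (h1 : θ ≤ 1) :
    (a + b) ^ θ ≤ a ^ θ + b ^ θ := by
  have := NNReal.rpow_add_le_add_rpow a.toNNReal b.toNNReal h0 h1
  have h2 := NNReal.coe_le_coe.2 this
  push_cast [NNReal.coe_rpow, Real.coe_toNNReal a ha, Real.coe_toNNReal b hb] at h2
  simpa [Real.coe_toNNReal a ha, Real.coe_toNNReal b hb] using h2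

/-- If `X^θ` is long-tailed for some `0 < θ ≤ 1` and `g ≥ 0` satisfies
`limsup_{x→∞} g(x)/x < 1`, then for any `ε > 0` there is `x̆_ε > 0` such that
`P(X > x - u) ≤ P(X > x) e^{ε(u^θ + 1)}` for all `x > x̆_ε` and `0 ≤ u ≤ g(x)`. -/
theorem stmt5 {Ω : Type*} [MeasurableSpace Ω] (μ : Measure Ω) [IsProbabilityMeasure μ]
    (X : Ω → ℝ) (hX : ∀ ω, 0 ≤ X ω) (θ : ℝ) (hθ0 : 0 < θ) (hθ1 : θ ≤ 1)
    (hL : LongTailed μ (fun ω => X ω ^ θ))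
    (g : ℝ → ℝ) (hg0 : ∀ x, 0 ≤ g x)
    (hg : Filter.limsup (fun x => g x / x) atTop < 1) :
    ∀ ε > 0, ∃ x₀ > (0 : ℝ), ∀ x > x₀, ∀ u, 0 ≤ u → u ≤ g x →
      tailP μ X (x - u) ≤ tailP μ X x * Real.exp (ε * (u ^ θ + 1)) := by
  intro ε hε
  set Y : Ω → ℝ := fun ω => X ω ^ θ with hY
  obtain ⟨hpos, htend⟩ := hL
  -- tail identity
  have tail_eq : ∀ s : ℝ, 0 ≤ s → tailP μ X s = tailP μ Y (s ^ θ) := by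
    intro s hs
    have hset : {ω | s < X ω} = {ω | s ^ θ < Y ω} := by
      ext ω
      simp only [Set.mem_setOf_eq, hY]
      exact (Real.rpow_lt_rpow_iff hs (hX ω) hθ0).symm
    unfold tailP
    rw [hset]
  -- the one-step bound eventually
  have h1 : Real.exp (-(ε/2)) < 1 := by
    rw [Real.exp_lt_one_iff]; linarith
  have hev : ∀ᶠ t in atTop, Real.exp (-(ε/2)) < tailP μ Y (t + 1) / tailP μ Y t :=
    (htend 1 one_pos).eventually (eventually_gt_nhds h1)
  obtain ⟨T₀, hT₀⟩ := eventually_atTop.mp hev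
  set T : ℝ := max T₀ 0 with hTdef
  have hT0 : (0:ℝ) ≤ T := le_max_right _ _
  have step : ∀ t, T ≤ t → tailP μ Y t ≤ Real.exp (ε/2) * tailP μ Y (t + 1) := by
    intro t ht
    have h := hT₀ t (le_trans (le_max_left _ _) ht)
    have hpt : 0 < tailP μ Y t := hpos t (le_trans hT0 ht)
    rw [lt_div_iff₀ hpt] at h
    have h2 := mul_le_mul_of_nonneg_left h.le (Real.exp_pos (ε/2)).le
    calc tailP μ Y t = Real.exp (ε/2) * (Real.exp (-(ε/2)) * tailP μ Y t) := by
          rw [← mul_assoc, ← Real.exp_add]; simp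
      _ ≤ Real.exp (ε/2) * tailP μ Y (t + 1) := h2
  -- iterated chain bound over naturals
  have chainN : ∀ n : ℕ, ∀ t, T ≤ t →
      tailP μ Y t ≤ Real.exp (ε/2 * n) * tailP μ Y (t + n) := by
    intro n
    induction n with
    | zero => intro t ht; simp
    | succ n ih =>
      intro t ht
      push_cast
      have h1 := step t ht
      have h2 := ih (t + 1) (by linarith)
      calc tailP μ Y t ≤ Real.exp (ε/2) * tailP μ Y (t + 1) := h1
        _ ≤ Real.exp (ε/2) * (Real.exp (ε/2 * n) * tailP μ Y (t + 1 + n)) := by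
            exact mul_le_mul_of_nonneg_left h2 (Real.exp_pos _).le
        _ = Real.exp (ε/2 * ((n:ℝ) + 1)) * tailP μ Y (t + ((n:ℝ) + 1)) := by
            rw [← mul_assoc, ← Real.exp_add,
              show ε/2 + ε/2 * (n:ℝ) = ε/2 * ((n:ℝ) + 1) by ring,
              show t + 1 + (n:ℝ) = t + ((n:ℝ) + 1) by ring]
  -- real-valued chain bound
  have chainR : ∀ s, T ≤ s → ∀ v, 0 ≤ v →
      tailP μ Y s ≤ Real.exp (ε/2 * (v + 1)) * tailP μ Y (s + v) := by
    intro s hs v hv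
    set n : ℕ := ⌈v⌉₊ with hn
    have hvn : v ≤ n := Nat.le_ceil v
    have hn1 : (n : ℝ) ≤ v + 1 := (Nat.ceil_lt_add_one hv).le
    calc tailP μ Y s ≤ Real.exp (ε/2 * n) * tailP μ Y (s + n) := chainN n s hs
      _ ≤ Real.exp (ε/2 * (v + 1)) * tailP μ Y (s + v) := by
          apply mul_le_mul
          · exact Real.exp_le_exp.2 (by nlinarith)
          · exact tailP_anti μ Y (by linarith)
          · exact tailP_nonneg μ Y _
          · exact (Real.exp_pos _).le
  -- constants
  set pT : ℝ := tailP μ Y T with hpTdef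
  have hpT : 0 < pT := hpos T hT0
  have hpT1 : pT ≤ 1 := tailP_le_one μ Y T
  set L : ℝ := -Real.log pT with hLdef
  have hL0 : 0 ≤ L := by
    have h := Real.log_nonpos hpT.le hpT1
    rw [hLdef]; linarith
  set M : ℝ := T + (2/ε) * L with hMdef
  have hTM : T ≤ M := by
    have h : 0 ≤ (2/ε) * L := mul_nonneg (by positivity) hL0
    rw [hMdef]; linarith
  have hM0 : 0 ≤ M := le_trans hT0 hTM
  refine ⟨max 1 (M ^ (1/θ)), lt_of_lt_of_le one_pos (le_max_left _ _), ?_⟩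
  intro x hx u hu0 _
  have hx1 : (1:ℝ) < x := lt_of_le_of_lt (le_max_left _ _) hx
  have hx0 : (0:ℝ) < x := by linarith
  have hxM : M < x ^ θ := by
    have h1 : M ^ (1/θ) < x := lt_of_le_of_lt (le_max_right _ _) hx
    have h2 : (M ^ (1/θ)) ^ θ < x ^ θ :=
      Real.rpow_lt_rpow (Real.rpow_nonneg hM0 _) h1 hθ0
    rwa [one_div, Real.rpow_inv_rpow hM0 hθ0.ne'] at h2
  have hxT : T ≤ x ^ θ := le_trans hTM hxM.le
  have hLt : L < ε/2 * (x ^ θ - T) := by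
    have h1 : (2/ε) * L < x ^ θ - T := by
      have hxM' := hxM
      rw [hMdef] at hxM'
      linarith
    have h2 := mul_lt_mul_of_pos_left h1 (show (0:ℝ) < ε/2 by positivity)
    have h3 : ε/2 * ((2/ε) * L) = L := by field_simp
    linarith [h2, h3.symm.le]
  have hwt : 0 ≤ u ^ θ := Real.rpow_nonneg hu0 θ
  by_cases hcase : u ≤ x ∧ T ≤ x ^ θ - u ^ θ
  · -- main case: x - u ≥ 0 and x^θ - u^θ ≥ T
    obtain ⟨hux, hTt⟩ := hcase
    have hxu0 : 0 ≤ x - u := sub_nonneg.2 hux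
    have hsup : x ^ θ - u ^ θ ≤ (x - u) ^ θ := by
      have h := rpow_superadd hxu0 hu0 hθ0.le hθ1
      rw [sub_add_cancel] at h
      linarith
    have hchain := chainR (x ^ θ - u ^ θ) hTt (u ^ θ) hwt
    rw [sub_add_cancel] at hchain
    calc tailP μ X (x - u) = tailP μ Y ((x - u) ^ θ) := tail_eq (x - u) hxu0
      _ ≤ tailP μ Y (x ^ θ - u ^ θ) := tailP_anti μ Y hsup
      _ ≤ Real.exp (ε/2 * (u ^ θ + 1)) * tailP μ Y (x ^ θ) := hchain
      _ ≤ Real.exp (ε * (u ^ θ + 1)) * tailP μ Y (x ^ θ) := by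
          apply mul_le_mul_of_nonneg_right _ (tailP_nonneg μ Y _)
          exact Real.exp_le_exp.2 (by nlinarith [mul_nonneg hε.le hwt])
      _ = tailP μ X x * Real.exp (ε * (u ^ θ + 1)) := by
          rw [tail_eq x hx0.le]; ring
  · -- degenerate case: u^θ ≥ x^θ - T
    have hkey : x ^ θ - T ≤ u ^ θ := by
      by_cases hux : u ≤ x
      · by_contra h
        push_neg at h
        exact hcase ⟨hux, by linarith⟩
      · push_neg at hux
        have := Real.rpow_le_rpow hx0.le hux.le hθ0.le
        linarith
    -- lower bound on tailP μ Y (x^θ)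
    have hlow : pT ≤ Real.exp (ε/2 * (x ^ θ - T + 1)) * tailP μ Y (x ^ θ) := by
      have h := chainR T le_rfl (x ^ θ - T) (by linarith)
      rwa [show T + (x ^ θ - T) = x ^ θ by ring] at h
    have hE : L ≤ ε * (u ^ θ + 1) - ε/2 * (x ^ θ - T + 1) := by
      nlinarith [mul_nonneg hε.le (sub_nonneg.2 hkey)]
    calc tailP μ X (x - u) ≤ 1 := tailP_le_one μ X _
      _ = pT * Real.exp L := by
          rw [hLdef, Real.exp_neg, Real.exp_log hpT]; field_simp
      _ ≤ (Real.exp (ε/2 * (x ^ θ - T + 1)) * tailP μ Y (x ^ θ)) *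
            Real.exp (ε * (u ^ θ + 1) - ε/2 * (x ^ θ - T + 1)) := by
          apply mul_le_mul hlow (Real.exp_le_exp.2 hE) (Real.exp_pos _).le
          exact mul_nonneg (Real.exp_pos _).le (tailP_nonneg μ Y _)
      _ = tailP μ Y (x ^ θ) * Real.exp (ε * (u ^ θ + 1)) := by
          rw [mul_comm (Real.exp _) (tailP μ Y _), mul_assoc, ← Real.exp_add]
          congr 2
          ring
      _ = tailP μ X x * Real.exp (ε * (u ^ θ + 1)) := by rw [tail_eq x hx0.le]
end

section
/- Let Q be a subexponential concave cumulative hazard function with parameter α ∈ (0,1). If a nonnegative random variable X has cumulative hazard function Q_X = Q (i.e., P(X > x) = e^{-Q(x)}), then for every β with α < β ≤ 1, the random variable X^β is long-tailed. If moreover Q(x)/x^α → 0 as x → ∞, then X^α is long-tailed. -/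
open MeasureTheory Filter Set ProbabilityTheory Real

/-- A cumulative hazard function `Q` belongs to the subexponential concave class `𝓢𝓒_α` if:
(i) `Q` is eventually concave; (ii) `Q(x)/log x → ∞`; and
(iii) `Q(x)/x^α` is nonincreasing for all sufficiently large `x`. -/
def SCHazard (Q : ℝ → ℝ) (α : ℝ) : Prop :=
  (∃ x₀ : ℝ, ConcaveOn ℝ (Set.Ici x₀) Q) ∧
  Tendsto (fun x => Q x / Real.log x) atTop atTop ∧
  (∃ x₀ > (0 : ℝ), AntitoneOn (fun x => Q x / x ^ α) (Set.Ici x₀))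



lemma monoOn_of_concave {Q : ℝ → ℝ} {x₀ : ℝ} (hC : ConcaveOn ℝ (Set.Ici x₀) Q)
    (hT : Tendsto Q atTop atTop) : MonotoneOn Q (Set.Ici x₀) := by
  intro a ha b hb hab
  by_contra h
  push_neg at h
  have hab' : a < b := hab.lt_of_ne (by rintro rfl; exact absurd rfl h.ne)
  obtain ⟨x, hx1, hx2⟩ : ∃ x, b < x ∧ Q b < Q x := by
    obtain ⟨x, h1, h2⟩ := ((hT.eventually_gt_atTop (Q b)).and (eventually_gt_atTop b)).exists
    exact ⟨x, h2, h1⟩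
  have hax : a < x := hab'.trans hx1
  have hxa : (0:ℝ) < x - a := by linarith
  set t : ℝ := (x - b) / (x - a) with ht
  set s : ℝ := (b - a) / (x - a) with hs
  have htpos : 0 < t := div_pos (by linarith) hxa
  have hspos : 0 < s := div_pos (by linarith) hxa
  have hts : t + s = 1 := by rw [ht, hs, ← add_div, div_eq_one_iff_eq hxa.ne']; ring
  have hcomb : t • a + s • x = b := by
    simp only [smul_eq_mul, ht, hs]; field_simp; ring
  have := hC.2 ha (show x ∈ Set.Ici x₀ from le_trans ha hax.le) htpos.le hspos.le hts
  rw [hcomb] at this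
  simp only [smul_eq_mul] at this
  have hQb : t * Q b + s * Q b = Q b := by rw [← add_mul, hts, one_mul]
  nlinarith [mul_pos htpos (sub_pos.2 h), mul_pos hspos (sub_pos.2 hx2)]

lemma exp_sub_one_le {s : ℝ} (h0 : 0 ≤ s) (h : s ≤ 1/2) : Real.exp s - 1 ≤ 2*s := by
  have h1 : 1 - s ≤ Real.exp (-s) := by have := Real.add_one_le_exp (-s); linarith
  have h2 : Real.exp (-s) = (Real.exp s)⁻¹ := Real.exp_neg s
  have h3 : (0:ℝ) < Real.exp s := Real.exp_pos s
  rw [h2] at h1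
  have h4 : (1 - s) * Real.exp s ≤ 1 := by
    calc (1 - s) * Real.exp s ≤ (Real.exp s)⁻¹ * Real.exp s :=
          mul_le_mul_of_nonneg_right h1 h3.le
      _ = 1 := inv_mul_cancel₀ h3.ne'
  nlinarith

lemma one_add_rpow_sub_one_le {t γ : ℝ} (ht : 0 ≤ t) (hγ : 0 < γ) (h : γ * t ≤ 1/2) :
    (1+t)^γ - 1 ≤ 2*(γ*t) := by
  have h1 : (0:ℝ) < 1 + t := by linarith
  have h2 : (1+t)^γ = Real.exp (Real.log (1+t) * γ) := Real.rpow_def_of_pos h1 γ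
  have h3 : Real.log (1+t) ≤ t := by
    have := Real.log_le_sub_one_of_pos h1; linarith
  have h4 : Real.log (1+t) * γ ≤ γ * t := by
    rw [mul_comm]; exact mul_le_mul_of_nonneg_left h3 hγ.le
  have h5 : (1+t)^γ ≤ Real.exp (γ*t) := by rw [h2]; exact Real.exp_le_exp.2 h4
  have h6 := exp_sub_one_le (mul_nonneg hγ.le ht) h
  linarith


lemma key_tendsto_s7 {Q : ℝ → ℝ} {α γ y x₀ x₁ : ℝ} (hα0 : 0 < α) (hα1 : α ≤ 1)
    (hγ : 1 ≤ γ) (hy : 0 < y) (hx₀ : 0 < x₀)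
    (hmono : MonotoneOn Q (Set.Ici x₁))
    (hanti : AntitoneOn (fun x => Q x / x ^ α) (Set.Ici x₀))
    (hposQ : ∀ᶠ x in atTop, 0 ≤ Q x)
    (hz : Tendsto (fun x => (Q (x ^ γ) / (x ^ γ) ^ α) * x ^ (γ * α - 1)) atTop (nhds 0)) :
    Tendsto (fun x => Q ((x + y) ^ γ) - Q (x ^ γ)) atTop (nhds 0) := by
  have hγ0 : (0:ℝ) < γ := lt_of_lt_of_le one_pos hγ
  have hcomp : Tendsto (fun x : ℝ => x ^ γ) atTop atTop := tendsto_rpow_atTop hγ0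
  have hbig : ∀ᶠ x : ℝ in atTop,
      (0 < x ∧ x₀ ≤ x ^ γ ∧ x₁ ≤ x ^ γ ∧ 0 ≤ Q (x ^ γ) ∧ γ * α * (y / x) ≤ 1/2) := by
    filter_upwards [eventually_gt_atTop (0:ℝ), hcomp.eventually (eventually_ge_atTop x₀),
      hcomp.eventually (eventually_ge_atTop x₁), hcomp.eventually hposQ,
      eventually_ge_atTop (2 * (γ * α) * y)] with x h1 h2 h3 h4 h5
    refine ⟨h1, h2, h3, h4, ?_⟩
    have heq : γ * α * (y / x) = (γ * α * y) / x := by ring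
    rw [heq, div_le_iff₀ h1]
    linarith
  have hbound : ∀ᶠ x : ℝ in atTop,
      0 ≤ Q ((x + y) ^ γ) - Q (x ^ γ) ∧
      Q ((x + y) ^ γ) - Q (x ^ γ) ≤
        (2 * (γ * α) * y) * ((Q (x ^ γ) / (x ^ γ) ^ α) * x ^ (γ * α - 1)) := by
    filter_upwards [hbig] with x ⟨hx0, hux₀, hux₁, hQu0, hsm⟩
    have hxy0 : (0:ℝ) < x + y := by linarith
    set u := x ^ γ with hu
    set v := (x + y) ^ γ with hv
    have hu0 : 0 < u := Real.rpow_pos_of_pos hx0 γ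
    have hv0 : 0 < v := Real.rpow_pos_of_pos hxy0 γ
    have huv : u ≤ v := Real.rpow_le_rpow hx0.le (by linarith) hγ0.le
    have hvx₀ : x₀ ≤ v := le_trans hux₀ huv
    have hvx₁ : x₁ ≤ v := le_trans hux₁ huv
    constructor
    · have := hmono hux₁ hvx₁ huv
      linarith
    · have huα : (0:ℝ) < u ^ α := Real.rpow_pos_of_pos hu0 α
      have hvα : (0:ℝ) < v ^ α := Real.rpow_pos_of_pos hv0 α
      have h1 : Q v / v ^ α ≤ Q u / u ^ α := hanti hux₀ hvx₀ huv
      have h2 : Q v ≤ (Q u / u ^ α) * v ^ α := by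
        calc Q v = (Q v / v ^ α) * v ^ α := by field_simp
          _ ≤ (Q u / u ^ α) * v ^ α := mul_le_mul_of_nonneg_right h1 hvα.le
      have h3 : Q u = (Q u / u ^ α) * u ^ α := by field_simp
      have hfrac0 : 0 ≤ Q u / u ^ α := div_nonneg hQu0 huα.le
      have hvα' : v ^ α = x ^ (γ * α) * (1 + y / x) ^ (γ * α) := by
        rw [hv, ← Real.rpow_mul hxy0.le]
        have : x + y = x * (1 + y / x) := by field_simp
        rw [this, Real.mul_rpow hx0.le (by positivity)]
      have huα' : u ^ α = x ^ (γ * α) * 1 := by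
        rw [hu, ← Real.rpow_mul hx0.le, mul_one]
      have hxγα : (0:ℝ) < x ^ (γ * α) := Real.rpow_pos_of_pos hx0 _
      have hexp : (1 + y / x) ^ (γ * α) - 1 ≤ 2 * ((γ * α) * (y / x)) :=
        one_add_rpow_sub_one_le (by positivity) (mul_pos hγ0 hα0) hsm
      have hdiff : v ^ α - u ^ α ≤ x ^ (γ * α) * (2 * ((γ * α) * (y / x))) := by
        have heq : v ^ α - u ^ α = x ^ (γ * α) * ((1 + y / x) ^ (γ * α) - 1) := by
          rw [hvα', huα']; ring
        rw [heq]
        exact mul_le_mul_of_nonneg_left hexp hxγα.le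
      have h4 : Q v - Q u ≤ (Q u / u ^ α) * (x ^ (γ * α) * (2 * ((γ * α) * (y / x)))) := by
        have hstep : Q v - Q u ≤ (Q u / u ^ α) * (v ^ α - u ^ α) := by
          rw [mul_sub]; nlinarith
        exact le_trans hstep (mul_le_mul_of_nonneg_left hdiff hfrac0)
      refine le_trans h4 (le_of_eq ?_)
      rw [Real.rpow_sub hx0, Real.rpow_one]
      field_simp
  have hlim : Tendsto (fun x : ℝ =>
      (2 * (γ * α) * y) * ((Q (x ^ γ) / (x ^ γ) ^ α) * x ^ (γ * α - 1))) atTop (nhds 0) := by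
    simpa using hz.const_mul (2 * (γ * α) * y)
  exact tendsto_of_tendsto_of_tendsto_of_le_of_le' tendsto_const_nhds hlim
    (hbound.mono fun x h => h.1) (hbound.mono fun x h => h.2)

lemma longtailed_helper {Ω : Type*} [MeasurableSpace Ω] (μ : Measure Ω) [IsProbabilityMeasure μ]
    (X : Ω → ℝ) (hX : ∀ ω, 0 ≤ X ω) (Q : ℝ → ℝ)
    (htail : ∀ x ≥ 0, tailP μ X x = Real.exp (-(Q x)))
    {β : ℝ} (hβ0 : 0 < β)
    (hlim : ∀ y > 0, Tendsto (fun x => Q ((x + y) ^ β⁻¹) - Q (x ^ β⁻¹)) atTop (nhds 0)) :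
    LongTailed μ (fun ω => X ω ^ β) := by
  have hkey : ∀ x ≥ 0, tailP μ (fun ω => X ω ^ β) x = Real.exp (-(Q (x ^ β⁻¹))) := by
    intro x hx
    have hset : {ω | x < X ω ^ β} = {ω | x ^ β⁻¹ < X ω} := by
      ext ω
      simp only [Set.mem_setOf_eq]
      exact (Real.rpow_inv_lt_iff_of_pos hx (hX ω) hβ0).symm
    have : tailP μ (fun ω => X ω ^ β) x = tailP μ X (x ^ β⁻¹) := by
      unfold tailP; rw [hset]
    rw [this, htail _ (Real.rpow_nonneg hx _)]
  constructor
  · intro x hx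
    rw [hkey x hx]
    exact Real.exp_pos _
  · intro y hy
    have h1 : Tendsto (fun x => Q (x ^ β⁻¹) - Q ((x + y) ^ β⁻¹)) atTop (nhds 0) := by
      have := (hlim y hy).neg
      simpa using this
    have h2 : Tendsto (fun x => Real.exp (Q (x ^ β⁻¹) - Q ((x + y) ^ β⁻¹))) atTop (nhds 1) := by
      have := (Real.continuous_exp.tendsto 0).comp h1
      simpa [Function.comp_def] using this
    refine h2.congr' ?_
    filter_upwards [eventually_ge_atTop (0:ℝ)] with x hx
    rw [hkey x hx, hkey (x + y) (by linarith), ← Real.exp_sub]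
    congr 1
    ring

/-- Let `Q ∈ 𝓢𝓒_α` with `α ∈ (0,1)` and let `X ≥ 0` have `P(X > x) = e^{-Q(x)}`.
Then `X^β` is long-tailed for every `α < β ≤ 1`; if moreover `Q(x)/x^α → 0`,
then `X^α` is long-tailed. -/
theorem stmt7 {Ω : Type*} [MeasurableSpace Ω] (μ : Measure Ω) [IsProbabilityMeasure μ]
    (X : Ω → ℝ) (hX : ∀ ω, 0 ≤ X ω)
    (Q : ℝ → ℝ) (α : ℝ) (hα0 : 0 < α) (hα1 : α < 1) (hQ : SCHazard Q α)
    (htail : ∀ x ≥ 0, tailP μ X x = Real.exp (-(Q x))) :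
    (∀ β : ℝ, α < β → β ≤ 1 → LongTailed μ (fun ω => X ω ^ β)) ∧
    (Tendsto (fun x => Q x / x ^ α) atTop (nhds 0) →
      LongTailed μ (fun ω => X ω ^ α)) := by
  obtain ⟨⟨xc, hconc⟩, hlog, ⟨xa, hxa, hanti⟩⟩ := hQ
  have hlogQ : ∀ᶠ x in atTop, Real.log x ≤ Q x := by
    filter_upwards [hlog.eventually_ge_atTop 1, eventually_gt_atTop (1:ℝ)] with x h hx
    have hl : 0 < Real.log x := Real.log_pos hx
    rw [le_div_iff₀ hl] at h
    linarith
  have hQtop : Tendsto Q atTop atTop :=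
    tendsto_atTop_mono' atTop hlogQ Real.tendsto_log_atTop
  have hposQ : ∀ᶠ x in atTop, 0 ≤ Q x := by
    filter_upwards [hlogQ, eventually_ge_atTop (1:ℝ)] with x h hx
    have := Real.log_nonneg hx
    linarith
  have hmono : MonotoneOn Q (Set.Ici xc) := monoOn_of_concave hconc hQtop
  constructor
  · intro β hαβ hβ1
    have hβ0 : 0 < β := hα0.trans hαβ
    have hγ1 : 1 ≤ β⁻¹ := by
      rw [← inv_one]
      exact inv_anti₀ hβ0 hβ1
    refine longtailed_helper μ X hX Q htail hβ0 (fun y hy => ?_)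
    refine key_tendsto_s7 hα0 hα1.le hγ1 hy hxa hmono hanti hposQ ?_
    have hγ0 : (0:ℝ) < β⁻¹ := inv_pos.2 hβ0
    have hcomp : Tendsto (fun x : ℝ => x ^ β⁻¹) atTop atTop := tendsto_rpow_atTop hγ0
    have hγα1 : β⁻¹ * α < 1 := by
      rw [mul_comm, ← div_eq_mul_inv, div_lt_one hβ0]
      exact hαβ
    set C := Q xa / xa ^ α with hC
    have hfb : ∀ᶠ x : ℝ in atTop,
        0 ≤ Q (x ^ β⁻¹) / (x ^ β⁻¹) ^ α ∧ Q (x ^ β⁻¹) / (x ^ β⁻¹) ^ α ≤ C := by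
      filter_upwards [hcomp.eventually (eventually_ge_atTop xa), hcomp.eventually hposQ,
        eventually_gt_atTop (0:ℝ)] with x h1 h2 h3
      constructor
      · exact div_nonneg h2 (Real.rpow_nonneg (Real.rpow_nonneg h3.le _) _)
      · exact hanti (Set.mem_Ici.2 le_rfl) (Set.mem_Ici.2 h1) h1
    have hg : Tendsto (fun x : ℝ => x ^ (β⁻¹ * α - 1)) atTop (nhds 0) := by
      have : β⁻¹ * α - 1 = -(1 - β⁻¹ * α) := by ring
      rw [this]
      exact tendsto_rpow_neg_atTop (by linarith)
    have hCg : Tendsto (fun x : ℝ => C * x ^ (β⁻¹ * α - 1)) atTop (nhds 0) := by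
      simpa using hg.const_mul C
    refine tendsto_of_tendsto_of_tendsto_of_le_of_le' tendsto_const_nhds hCg ?_ ?_
    · filter_upwards [hfb, eventually_gt_atTop (0:ℝ)] with x hf hx
      exact mul_nonneg hf.1 (Real.rpow_nonneg hx.le _)
    · filter_upwards [hfb, eventually_gt_atTop (0:ℝ)] with x hf hx
      exact mul_le_mul_of_nonneg_right hf.2 (Real.rpow_nonneg hx.le _)
  · intro h0
    have hγ1 : 1 ≤ α⁻¹ := by
      rw [← inv_one]
      exact inv_anti₀ hα0 hα1.le
    refine longtailed_helper μ X hX Q htail hα0 (fun y hy => ?_)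
    refine key_tendsto_s7 hα0 hα1.le hγ1 hy hxa hmono hanti hposQ ?_
    have hγ0 : (0:ℝ) < α⁻¹ := inv_pos.2 hα0
    have hc : Tendsto (fun x : ℝ => Q (x ^ α⁻¹) / (x ^ α⁻¹) ^ α) atTop (nhds 0) := by
      have := h0.comp (tendsto_rpow_atTop hγ0)
      exact this
    have hexp0 : α⁻¹ * α - 1 = 0 := by field_simp; ring
    simpa [hexp0, Real.rpow_zero] using hc
end

section
/- Let X, X₁, X₂, … be i.i.d. nonnegative random variables with E[X] > 0 and E[X²] < ∞, and let N_X(x) = max{k ≥ 0 : X₁ + ⋯ + X_k ≤ x}. Then for every δ > 0 there exist finite positive constants C̃ = C̃(δ) and c̃ = c̃(δ) such that for all x ≥ 0 and all 0 ≤ u ≤ δx: P(N_X(x) − x/E[X] > u) ≤ C̃ exp{−c̃ u²/x}. -/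
open MeasureTheory Filter Set ProbabilityTheory Real

lemma exp_neg_le_quad {y : ℝ} (hy : 0 ≤ y) : Real.exp (-y) ≤ 1 - y + y ^ 2 := by
  have h1 : y + 1 ≤ Real.exp y := Real.add_one_le_exp y
  have h2 : -y + 1 ≤ Real.exp (-y) := Real.add_one_le_exp (-y)
  have h3 : Real.exp (-y) * Real.exp y = 1 := by rw [← Real.exp_add]; simp
  nlinarith [Real.exp_pos (-y), Real.exp_pos y]

set_option maxHeartbeats 1000000 in
/-- Renewal counting process bound: if `X, X₁, X₂, …` are i.i.d. nonnegative with
`E[X] > 0` and `E[X²] < ∞`, and `N_X(x) = max{k ≥ 0 : X₁ + ⋯ + X_k ≤ x}`, then for every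
`δ > 0` there are `C̃, c̃ > 0` with
`P(N_X(x) - x/E[X] > u) ≤ C̃ exp(-c̃ u²/x)` for all `x ≥ 0` and `0 ≤ u ≤ δx`. -/
theorem stmt8 {Ω : Type*} [MeasurableSpace Ω] (μ : Measure Ω) [IsProbabilityMeasure μ]
    (X : ℕ → Ω → ℝ) (hmeas : ∀ n, Measurable (X n))
    (hnonneg : ∀ n ω, 0 ≤ X n ω)
    (hindep : iIndepFun X μ)
    (hident : ∀ n, μ.map (X n) = μ.map (X 0))
    (hmean : 0 < ∫ ω, X 0 ω ∂μ)
    (hsq : Integrable (fun ω => (X 0 ω) ^ 2) μ) :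
    ∀ δ > (0 : ℝ), ∃ C > (0 : ℝ), ∃ c > (0 : ℝ), ∀ x ≥ (0 : ℝ), ∀ u, 0 ≤ u → u ≤ δ * x →
      (μ {ω | (↑(sSup {k : ℕ | ∑ i ∈ Finset.range k, X i ω ≤ x}) : ℝ)
          - x / (∫ ω', X 0 ω' ∂μ) > u}).toReal ≤ C * Real.exp (-c * u ^ 2 / x) := by
  intro δ hδ
  set E := ∫ ω, X 0 ω ∂μ with hEdef
  have hE : 0 < E := hmean
  -- integrability of X 0
  have hXint : Integrable (X 0) μ := by
    refine Integrable.mono' ((integrable_const (1:ℝ)).add hsq)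
      (hmeas 0).aestronglyMeasurable (ae_of_all _ fun ω => ?_)
    rw [Real.norm_eq_abs, abs_of_nonneg (hnonneg 0 ω)]
    simp only [Pi.add_apply]
    nlinarith [sq_nonneg (X 0 ω - 1)]
  set B := ∫ ω, (X 0 ω) ^ 2 ∂μ with hBdef
  have hB : 0 < B := by
    rcases (integral_nonneg (f := fun ω => (X 0 ω) ^ 2) (fun ω => sq_nonneg (X 0 ω))).lt_or_eq with h | h
    · exact h
    · exfalso
      have h0 : (fun ω => (X 0 ω) ^ 2) =ᵐ[μ] 0 :=
        (integral_eq_zero_iff_of_nonneg (fun ω => sq_nonneg (X 0 ω)) hsq).1 h.symm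
      have hX0 : X 0 =ᵐ[μ] 0 := h0.mono fun ω hω => by
        simpa [pow_eq_zero_iff] using hω
      have hE0 : E = 0 := by
        rw [hEdef, integral_congr_ae hX0]; simp
      rw [hE0] at hE
      exact lt_irrefl 0 hE
  -- identical mgf's
  have hmgf : ∀ n t, mgf (X n) μ t = mgf (X 0) μ t := by
    intro n t
    have hg : AEStronglyMeasurable (fun y : ℝ => Real.exp (t * y)) (μ.map (X n)) :=
      ((measurable_const.mul measurable_id).exp).aestronglyMeasurable
    have hg0 : AEStronglyMeasurable (fun y : ℝ => Real.exp (t * y)) (μ.map (X 0)) :=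
      ((measurable_const.mul measurable_id).exp).aestronglyMeasurable
    simp only [mgf]
    rw [← integral_map (hmeas n).aemeasurable hg, hident n,
      integral_map (hmeas 0).aemeasurable hg0]
  -- integrability of exponentials
  have hintexp : ∀ (l : ℝ), 0 ≤ l → ∀ n, Integrable (fun ω => Real.exp (-l * X n ω)) μ := by
    intro l hl n
    refine Integrable.mono' (integrable_const (1:ℝ))
      (((hmeas n).const_mul (-l)).exp).aestronglyMeasurable (ae_of_all _ fun ω => ?_)
    rw [Real.norm_eq_abs, abs_of_pos (Real.exp_pos _)]
    have harg : -l * X n ω ≤ 0 :=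
      mul_nonpos_of_nonpos_of_nonneg (neg_nonpos.2 hl) (hnonneg n ω)
    calc Real.exp (-l * X n ω) ≤ Real.exp 0 := Real.exp_le_exp.2 harg
      _ = 1 := Real.exp_zero
  -- Chernoff-type bound
  have key : ∀ (l : ℝ), 0 ≤ l → ∀ (k : ℕ) (x : ℝ),
      (μ {ω | ∑ i ∈ Finset.range k, X i ω ≤ x}).toReal
        ≤ Real.exp (l * x + k * (-(l * E) + l ^ 2 * B)) := by
    intro l hl k x
    have hSint : Integrable (fun ω => Real.exp ((-l) * (∑ i ∈ Finset.range k, X i) ω)) μ :=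
      hindep.integrable_exp_mul_sum hmeas (fun i _ => hintexp l hl i)
    have hcher := measure_le_le_exp_mul_mgf (μ := μ) (X := ∑ i ∈ Finset.range k, X i)
      x (neg_nonpos.2 hl) hSint
    simp only [Finset.sum_apply] at hcher
    rw [hindep.mgf_sum hmeas] at hcher
    have hprod : ∏ i ∈ Finset.range k, mgf (X i) μ (-l) = (mgf (X 0) μ (-l)) ^ k := by
      rw [Finset.prod_congr rfl fun i _ => hmgf i (-l), Finset.prod_const, Finset.card_range]
    rw [hprod] at hcher
    have hbnd : mgf (X 0) μ (-l) ≤ Real.exp (-(l * E) + l ^ 2 * B) := by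
      have h1 : mgf (X 0) μ (-l) ≤ 1 - l * E + l ^ 2 * B := by
        have hform : mgf (X 0) μ (-l) = ∫ ω, Real.exp (-l * X 0 ω) ∂μ := rfl
        rw [hform]
        have hle : ∀ ω, Real.exp (-l * X 0 ω) ≤ 1 - l * X 0 ω + l ^ 2 * (X 0 ω) ^ 2 := by
          intro ω
          have h := exp_neg_le_quad (mul_nonneg hl (hnonneg 0 ω))
          calc Real.exp (-l * X 0 ω) = Real.exp (-(l * X 0 ω)) := by ring_nf
            _ ≤ 1 - l * X 0 ω + (l * X 0 ω) ^ 2 := h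
            _ = 1 - l * X 0 ω + l ^ 2 * (X 0 ω) ^ 2 := by ring
        have hi1 : Integrable (fun ω => 1 - l * X 0 ω) μ :=
          (integrable_const (1:ℝ)).sub (hXint.const_mul l)
        have hi2 : Integrable (fun ω => l ^ 2 * (X 0 ω) ^ 2) μ := hsq.const_mul (l ^ 2)
        have hint2 : Integrable (fun ω => 1 - l * X 0 ω + l ^ 2 * (X 0 ω) ^ 2) μ :=
          hi1.add hi2
        calc (∫ ω, Real.exp (-l * X 0 ω) ∂μ)
            ≤ ∫ ω, (1 - l * X 0 ω + l ^ 2 * (X 0 ω) ^ 2) ∂μ :=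
              integral_mono (hintexp l hl 0) hint2 hle
          _ = 1 - l * E + l ^ 2 * B := by
              rw [integral_add hi1 hi2,
                integral_sub (integrable_const (1:ℝ)) (hXint.const_mul l),
                integral_const, integral_const_mul, integral_const_mul]
              simp [hEdef, hBdef]
      calc mgf (X 0) μ (-l) ≤ 1 - l * E + l ^ 2 * B := h1
        _ ≤ Real.exp (-(l * E) + l ^ 2 * B) := by
            nlinarith [Real.add_one_le_exp (-(l * E) + l ^ 2 * B)]
    calc (μ {ω | ∑ i ∈ Finset.range k, X i ω ≤ x}).toReal
        ≤ Real.exp (-(-l) * x) * (mgf (X 0) μ (-l)) ^ k := hcher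
      _ ≤ Real.exp (l * x) * (Real.exp (-(l * E) + l ^ 2 * B)) ^ k := by
          rw [neg_neg]
          exact mul_le_mul_of_nonneg_left (pow_le_pow_left₀ (mgf_nonneg) hbnd k)
            (Real.exp_pos _).le
      _ = Real.exp (l * x + k * (-(l * E) + l ^ 2 * B)) := by
          rw [← Real.exp_nat_mul, ← Real.exp_add]
  -- constants
  set A : ℝ := 1 / E + δ + 1 with hAdef
  have hA : 0 < A := by positivity
  set c : ℝ := E ^ 2 / (4 * B * A) with hcdef
  have hc : 0 < c := by positivity
  set C : ℝ := Real.exp (c * δ ^ 2) with hCdef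
  have hC : 0 < C := Real.exp_pos _
  have hC1 : 1 ≤ C := Real.one_le_exp (by positivity)
  refine ⟨C, hC, c, hc, ?_⟩
  intro x hx u hu hux
  by_cases hx1 : x < 1
  · -- small x : trivial bound
    have hP : (μ {ω | (↑(sSup {k : ℕ | ∑ i ∈ Finset.range k, X i ω ≤ x}) : ℝ)
        - x / E > u}).toReal ≤ 1 :=
      ENNReal.toReal_mono ENNReal.one_ne_top prob_le_one
    have hux2 : u ^ 2 / x ≤ δ ^ 2 := by
      rcases hx.lt_or_eq with hxpos | hx0
      · rw [div_le_iff₀ hxpos]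
        nlinarith
      · have hu0 : u = 0 := le_antisymm (by rw [← hx0] at hux; simpa using hux) hu
        rw [hu0, ← hx0]
        have hz : (0:ℝ) ^ 2 / 0 = 0 := by norm_num
        rw [hz]
        positivity
    calc (μ _).toReal ≤ 1 := hP
      _ ≤ C * Real.exp (-c * u ^ 2 / x) := by
          rw [hCdef, ← Real.exp_add]
          rw [show (1:ℝ) = Real.exp 0 by simp]
          apply Real.exp_le_exp.2
          have : -c * u ^ 2 / x = -(c * (u ^ 2 / x)) := by ring
          rw [this]
          nlinarith [mul_le_mul_of_nonneg_left hux2 hc.le]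
  · -- main case x ≥ 1
    push_neg at hx1
    have hxpos : 0 < x := lt_of_lt_of_le one_pos hx1
    have hy : 0 ≤ x / E + u := by positivity
    set k : ℕ := ⌊x / E + u⌋₊ + 1 with hkdef
    have hK1 : x / E + u < (k : ℝ) := by
      rw [hkdef]
      push_cast
      exact Nat.lt_floor_add_one _
    have hK2 : (k : ℝ) ≤ A * x := by
      have h1 : (⌊x / E + u⌋₊ : ℝ) ≤ x / E + u := Nat.floor_le hy
      have h2 : (k : ℝ) ≤ x / E + u + 1 := by rw [hkdef]; push_cast; linarith
      have h3 : x / E = x * (1 / E) := by ring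
      rw [hAdef]
      nlinarith
    -- inclusion of events
    have hsub : {ω | (↑(sSup {m : ℕ | ∑ i ∈ Finset.range m, X i ω ≤ x}) : ℝ)
        - x / E > u} ⊆ {ω | ∑ i ∈ Finset.range k, X i ω ≤ x} := by
      intro ω hω
      simp only [Set.mem_setOf_eq] at hω ⊢
      set S : Set ℕ := {m : ℕ | ∑ i ∈ Finset.range m, X i ω ≤ x} with hSdef
      have hdc : ∀ {a b : ℕ}, a ≤ b → b ∈ S → a ∈ S := by
        intro a b hab hb
        exact le_trans (Finset.sum_le_sum_of_subset_of_nonneg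
          (Finset.range_subset_range.2 hab) (fun i _ _ => hnonneg i ω)) hb
      have hmem0 : 0 ∈ S := by simp [hSdef, hx]
      by_cases hbdd : BddAbove S
      · have hmem := Nat.sSup_mem ⟨0, hmem0⟩ hbdd
        have h2 : x / E + u < ((sSup S : ℕ) : ℝ) := by linarith
        have h3 : (⌊x / E + u⌋₊ : ℝ) < ((sSup S : ℕ) : ℝ) := lt_of_le_of_lt (Nat.floor_le hy) h2
        have h4 : ⌊x / E + u⌋₊ < sSup S := by exact_mod_cast h3
        exact hdc (Nat.succ_le_of_lt h4) hmem
      · obtain ⟨m, hm, hkm⟩ := (not_bddAbove_iff.1 hbdd) k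
        exact hdc hkm.le hm
    set l : ℝ := u * E / (2 * B * A * x) with hldef
    have hl : 0 ≤ l := by positivity
    have hmono : (μ {ω | (↑(sSup {m : ℕ | ∑ i ∈ Finset.range m, X i ω ≤ x}) : ℝ)
        - x / E > u}).toReal ≤ (μ {ω | ∑ i ∈ Finset.range k, X i ω ≤ x}).toReal :=
      ENNReal.toReal_mono (measure_ne_top μ _) (measure_mono hsub)
    have hK1' : x + u * E ≤ (k : ℝ) * E := by
      nlinarith [mul_lt_mul_of_pos_right hK1 hE, div_mul_cancel₀ x hE.ne']
    have harg : l * x + (k : ℝ) * (-(l * E) + l ^ 2 * B) ≤ -c * u ^ 2 / x := by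
      have stepa : (k : ℝ) * (l ^ 2 * B) ≤ A * x * (l ^ 2 * B) :=
        mul_le_mul_of_nonneg_right hK2 (by positivity)
      have stepb : (x + u * E) * l ≤ (k : ℝ) * E * l :=
        mul_le_mul_of_nonneg_right hK1' hl
      have heq : -(l * (u * E)) + A * x * (l ^ 2 * B) = -c * u ^ 2 / x := by
        rw [hldef, hcdef]
        field_simp
        ring
      have expand : l * x + (k : ℝ) * (-(l * E) + l ^ 2 * B)
          = l * x - (k : ℝ) * E * l + (k : ℝ) * (l ^ 2 * B) := by ring
      rw [expand, ← heq]
      linarith [stepa, stepb]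
    refine le_trans hmono (le_trans (key l hl k x) (le_trans (Real.exp_le_exp.2 harg)
      (le_mul_of_one_le_left (Real.exp_pos _).le hC1)))
end

section
/- Suppose T has a consistently varying tail (T ∈ 𝓒) and P(T > x) ∼ x^{-α} for some 0 < α < 1, and X is a nonnegative random variable with P(X > x) = (x+1)^{-β} for some 1 < β < α + 1. Then E[X^r] < ∞ for all 1 ≤ r < β, E[T] = ∞, and E[T · 1(T ≤ x)] = O(x P(T > x)), while it is NOT the case that x P(X > x) = o(P(T > x)). -/
open MeasureTheory Filter Set ProbabilityTheory Real

/-- A nonnegative random variable `X` has a consistently varying tail (`X ∈ 𝓒`) if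
`P(X > x) > 0` for all `x ≥ 0` and `lim_{v↓1} liminf_{x→∞} P(X > vx)/P(X > x) = 1`. -/
def ConsistentVar {Ω : Type*} [MeasurableSpace Ω] (μ : Measure Ω) (X : Ω → ℝ) : Prop :=
  (∀ x ≥ 0, 0 < tailP μ X x) ∧
  Tendsto (fun v => Filter.liminf (fun x => tailP μ X (v * x) / tailP μ X x) atTop)
    (nhdsWithin 1 (Set.Ioi 1)) (nhds 1)

/-- Finiteness of `∫⁻ t in Ioi c, ofReal (t ^ s)` for `s < -1`, `0 < c`. -/
lemma aux_fin13 {s c : ℝ} (hs : s < -1) (hc : 0 < c) :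
    ∫⁻ t in Ioi c, ENNReal.ofReal (t ^ s) < ⊤ := by
  have h := (integrableOn_Ioi_rpow_of_lt hs hc).hasFiniteIntegral
  rwa [hasFiniteIntegral_iff_ofReal ?_] at h
  filter_upwards [ae_restrict_mem measurableSet_Ioi] with t ht
  exact Real.rpow_nonneg (hc.trans ht).le s

/-- Divergence of `∫⁻ t in Ioi c, ofReal (t ^ s)` for `-1 ≤ s`, `0 < c`. -/
lemma aux_inf13 {s c : ℝ} (hs : -1 ≤ s) (hc : 0 < c) :
    ∫⁻ t in Ioi c, ENNReal.ofReal (t ^ s) = ⊤ := by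
  by_contra h
  have hmeas : Measurable fun t : ℝ => t ^ s := by fun_prop
  have hint : IntegrableOn (fun t : ℝ => t ^ s) (Ioi c) := by
    refine ⟨hmeas.aestronglyMeasurable, ?_⟩
    rw [hasFiniteIntegral_iff_ofReal ?_]
    · exact lt_top_iff_ne_top.2 h
    · filter_upwards [ae_restrict_mem measurableSet_Ioi] with t ht
      exact Real.rpow_nonneg (hc.trans ht).le s
  rw [integrableOn_Ioi_rpow_iff hc] at hint
  linarith

/-- Counterexample record: if `T ∈ 𝓒` with `P(T > x) ∼ x^{-α}` for some `0 < α < 1`, and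
`X ≥ 0` with `P(X > x) = (x+1)^{-β}` for some `1 < β < α + 1`, then `E[X^r] < ∞` for all
`1 ≤ r < β`, `E[T] = ∞`, and `E[T · 1(T ≤ x)] = O(x P(T > x))`, while it is NOT the case
that `x P(X > x) = o(P(T > x))`. -/
theorem stmt13 {Ω : Type*} [MeasurableSpace Ω] (μ : Measure Ω) [IsProbabilityMeasure μ]
    (T X : Ω → ℝ) (hTmeas : Measurable T) (hXmeas : Measurable X)
    (hT0 : ∀ ω, 0 ≤ T ω) (hX0 : ∀ ω, 0 ≤ X ω)
    (α : ℝ) (hα0 : 0 < α) (hα1 : α < 1)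
    (hTC : ConsistentVar μ T)
    (hTtail : Tendsto (fun x => tailP μ T x / x ^ (-α)) atTop (nhds 1))
    (β : ℝ) (hβ1 : 1 < β) (hβ2 : β < α + 1)
    (hXtail : ∀ x ≥ (0 : ℝ), tailP μ X x = (x + 1) ^ (-β)) :
    (∀ r : ℝ, 1 ≤ r → r < β → Integrable (fun ω => X ω ^ r) μ) ∧
    ¬ Integrable T μ ∧
    ((fun x => ∫ ω in {ω | T ω ≤ x}, T ω ∂μ) =O[atTop] fun x => x * tailP μ T x) ∧
    ¬ ((fun x => x * tailP μ X x) =o[atTop] fun x => tailP μ T x) := by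
  have hmuT : ∀ t : ℝ, μ {ω | t < T ω} = ENNReal.ofReal (tailP μ T t) := fun t =>
    (ENNReal.ofReal_toReal (measure_ne_top μ _)).symm
  have hmuX : ∀ t : ℝ, μ {ω | t < X ω} = ENNReal.ofReal (tailP μ X t) := fun t =>
    (ENNReal.ofReal_toReal (measure_ne_top μ _)).symm
  have htail_nonneg : ∀ t : ℝ, 0 ≤ tailP μ T t := fun t => ENNReal.toReal_nonneg
  have htail_le_one : ∀ t : ℝ, tailP μ T t ≤ 1 := by
    intro t
    have h1 : μ {ω | t < T ω} ≤ 1 := prob_le_one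
    calc tailP μ T t ≤ (1 : ENNReal).toReal := ENNReal.toReal_mono ENNReal.one_ne_top h1
      _ = 1 := by simp
  -- eventual two-sided bound on the tail of T
  obtain ⟨M, hM1, hMb⟩ : ∃ M : ℝ, 1 ≤ M ∧ ∀ x ≥ M,
      1 / 2 * x ^ (-α) ≤ tailP μ T x ∧ tailP μ T x ≤ 2 * x ^ (-α) := by
    have hmem : Ioo (1/2 : ℝ) 2 ∈ nhds (1 : ℝ) := Ioo_mem_nhds (by norm_num) (by norm_num)
    have h : ∀ᶠ x in atTop, tailP μ T x / x ^ (-α) ∈ Ioo (1/2 : ℝ) 2 :=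
      hTtail.eventually_mem hmem
    rw [eventually_atTop] at h
    obtain ⟨M₀, hM₀⟩ := h
    refine ⟨max M₀ 1, le_max_right _ _, fun x hx => ?_⟩
    have hx1 : (1:ℝ) ≤ x := le_trans (le_max_right _ _) hx
    have hx0 : (0:ℝ) < x := by linarith
    have hpow : (0:ℝ) < x ^ (-α) := Real.rpow_pos_of_pos hx0 _
    have hr := hM₀ x (le_trans (le_max_left _ _) hx)
    have hr1 : (1/2 : ℝ) < tailP μ T x / x ^ (-α) := (mem_Ioo.mp hr).1
    have hr2 : tailP μ T x / x ^ (-α) < 2 := (mem_Ioo.mp hr).2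
    constructor
    · rw [lt_div_iff₀ hpow] at hr1; linarith
    · rw [div_lt_iff₀ hpow] at hr2; linarith
  have hM0 : (0:ℝ) < M := by linarith
  -- Part 1
  have P1 : ∀ r : ℝ, 1 ≤ r → r < β → Integrable (fun ω => X ω ^ r) μ := by
    intro r hr1 hrβ
    have hr0 : (0:ℝ) < r := by linarith
    have hmeasf : Measurable fun ω => X ω ^ r := by fun_prop
    have hnn : (0 : Ω → ℝ) ≤ᵐ[μ] fun ω => X ω ^ r :=
      Eventually.of_forall fun ω => Real.rpow_nonneg (hX0 ω) r
    refine ⟨hmeasf.aestronglyMeasurable, ?_⟩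
    rw [hasFiniteIntegral_iff_ofReal hnn,
      lintegral_eq_lintegral_meas_lt μ hnn hmeasf.aemeasurable,
      ← Ioc_union_Ioi_eq_Ioi (zero_le_one : (0:ℝ) ≤ 1),
      lintegral_union measurableSet_Ioi Ioc_disjoint_Ioi_same]
    have hsub : ∀ t : ℝ, 0 < t →
        μ {a | t < X a ^ r} ≤ ENNReal.ofReal ((t ^ r⁻¹ + 1) ^ (-β)) := by
      intro t ht
      have hss : {a | t < X a ^ r} ⊆ {a | t ^ r⁻¹ < X a} := by
        intro a ha
        have h2 : t ^ r⁻¹ < (X a ^ r) ^ r⁻¹ :=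
          Real.rpow_lt_rpow ht.le ha (by positivity)
        rwa [← Real.rpow_mul (hX0 a), mul_inv_cancel₀ hr0.ne', Real.rpow_one] at h2
      calc μ {a | t < X a ^ r} ≤ μ {a | t ^ r⁻¹ < X a} := measure_mono hss
        _ = ENNReal.ofReal (tailP μ X (t ^ r⁻¹)) := hmuX _
        _ = ENNReal.ofReal ((t ^ r⁻¹ + 1) ^ (-β)) := by
            rw [hXtail _ (Real.rpow_nonneg ht.le _)]
    refine ENNReal.add_lt_top.2 ⟨?_, ?_⟩
    · calc ∫⁻ t in Ioc (0:ℝ) 1, μ {a | t < X a ^ r}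
          ≤ ∫⁻ _ in Ioc (0:ℝ) 1, 1 := lintegral_mono fun t => prob_le_one
        _ = 1 * volume (Ioc (0:ℝ) 1) := setLIntegral_const _ _
        _ < ⊤ := by simp [Real.volume_Ioc]
    · have hslt : r⁻¹ * (-β) < -1 := by
        have h1 : (1:ℝ) < β / r := (one_lt_div hr0).2 hrβ
        have h2 : β / r = r⁻¹ * β := by rw [div_eq_mul_inv]; ring
        nlinarith
      calc ∫⁻ t in Ioi (1:ℝ), μ {a | t < X a ^ r}
          ≤ ∫⁻ t in Ioi (1:ℝ), ENNReal.ofReal (t ^ (r⁻¹ * -β)) := by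
            apply lintegral_mono_ae
            filter_upwards [ae_restrict_mem measurableSet_Ioi] with t ht
            have ht0 : (0:ℝ) < t := lt_trans zero_lt_one ht
            refine le_trans (hsub t ht0) (ENNReal.ofReal_le_ofReal ?_)
            have hb : (t ^ r⁻¹ + 1) ^ (-β) ≤ (t ^ r⁻¹) ^ (-β) :=
              Real.rpow_le_rpow_of_nonpos (Real.rpow_pos_of_pos ht0 _)
                (by linarith) (by linarith)
            rwa [← Real.rpow_mul ht0.le] at hb
        _ < ⊤ := aux_fin13 hslt zero_lt_one
  -- Part 2
  have P2 : ¬ Integrable T μ := by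
    intro hint
    have h1 : ∫⁻ t in Ioi (0:ℝ), μ {a | t < T a} < ⊤ := by
      rw [← lintegral_eq_lintegral_meas_lt μ (Eventually.of_forall hT0) hTmeas.aemeasurable]
      exact hint.lintegral_lt_top
    have h2 : ∫⁻ t in Ioi M, μ {a | t < T a} < ⊤ :=
      lt_of_le_of_lt (lintegral_mono_set (Ioi_subset_Ioi hM0.le)) h1
    have h3 : ∫⁻ t in Ioi M, ENNReal.ofReal (1/2 * t ^ (-α))
        ≤ ∫⁻ t in Ioi M, μ {a | t < T a} := by
      apply lintegral_mono_ae
      filter_upwards [ae_restrict_mem measurableSet_Ioi] with t ht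
      rw [hmuT]
      exact ENNReal.ofReal_le_ofReal (hMb t (le_of_lt ht)).1
    have h4 : ∫⁻ t in Ioi M, ENNReal.ofReal (1/2 * t ^ (-α)) = ⊤ := by
      have hm : Measurable fun t : ℝ => ENNReal.ofReal (t ^ (-α)) := by fun_prop
      calc ∫⁻ t in Ioi M, ENNReal.ofReal (1/2 * t ^ (-α))
          = ∫⁻ t in Ioi M, ENNReal.ofReal (1/2) * ENNReal.ofReal (t ^ (-α)) := by
            congr 1; funext t; rw [ENNReal.ofReal_mul (by norm_num)]
        _ = ENNReal.ofReal (1/2) * ∫⁻ t in Ioi M, ENNReal.ofReal (t ^ (-α)) :=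
            lintegral_const_mul _ hm
        _ = ⊤ := by
            rw [aux_inf13 (by linarith) hM0, ENNReal.mul_top]
            simp
    rw [h4] at h3
    exact absurd (eq_top_iff.2 h3) h2.ne
  -- Part 3
  have P3 : (fun x => ∫ ω in {ω | T ω ≤ x}, T ω ∂μ) =O[atTop] fun x => x * tailP μ T x := by
    set C := max 2 (M ^ α) with hCdef
    have hC2 : (2:ℝ) ≤ C := le_max_left _ _
    have hCpos : (0:ℝ) < C := by linarith
    have h1α : (0:ℝ) < 1 - α := by linarith
    have hμbound : ∀ t : ℝ, 0 < t → μ {a | t < T a} ≤ ENNReal.ofReal (C * t ^ (-α)) := by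
      intro t ht
      rw [hmuT]
      apply ENNReal.ofReal_le_ofReal
      rcases le_or_gt M t with h | h
      · calc tailP μ T t ≤ 2 * t ^ (-α) := (hMb t h).2
          _ ≤ C * t ^ (-α) :=
            mul_le_mul_of_nonneg_right hC2 (Real.rpow_nonneg ht.le _)
      · have hmono : M ^ (-α) ≤ t ^ (-α) :=
          Real.rpow_le_rpow_of_nonpos ht h.le (by linarith)
        have hMM : M ^ α * M ^ (-α) = 1 := by
          rw [← Real.rpow_add hM0]; simp
        calc tailP μ T t ≤ 1 := htail_le_one t
          _ ≤ M ^ α * t ^ (-α) := by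
              have := mul_le_mul_of_nonneg_left hmono
                (Real.rpow_nonneg hM0.le α)
              linarith
          _ ≤ C * t ^ (-α) :=
            mul_le_mul_of_nonneg_right (le_max_right _ _) (Real.rpow_nonneg ht.le _)
    rw [Asymptotics.isBigO_iff]
    refine ⟨2 * C / (1 - α), ?_⟩
    filter_upwards [eventually_ge_atTop M] with x hx
    have hx1 : (1:ℝ) ≤ x := le_trans hM1 hx
    have hx0 : (0:ℝ) < x := by linarith
    have hs : MeasurableSet {ω | T ω ≤ x} := measurableSet_le hTmeas measurable_const
    have hxpow : x * x ^ (-α) = x ^ (1 - α) := by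
      rw [show (1:ℝ) - α = 1 + (-α) by ring, Real.rpow_add hx0, Real.rpow_one]
    -- the key upper bound on the truncated expectation
    have key : ∫ ω in {ω | T ω ≤ x}, T ω ∂μ ≤ C / (1 - α) * x ^ (1 - α) := by
      have e1 : ∫ ω in {ω | T ω ≤ x}, T ω ∂μ
          = (∫⁻ ω in {ω | T ω ≤ x}, ENNReal.ofReal (T ω) ∂μ).toReal :=
        integral_eq_lintegral_of_nonneg_ae (Eventually.of_forall hT0)
          hTmeas.aestronglyMeasurable.restrict
      have hminmeas : Measurable fun ω => min (T ω) x := hTmeas.min measurable_const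
      have e2 : ∫⁻ ω in {ω | T ω ≤ x}, ENNReal.ofReal (T ω) ∂μ
          ≤ ∫⁻ ω, ENNReal.ofReal (min (T ω) x) ∂μ := by
        calc ∫⁻ ω in {ω | T ω ≤ x}, ENNReal.ofReal (T ω) ∂μ
            = ∫⁻ ω in {ω | T ω ≤ x}, ENNReal.ofReal (min (T ω) x) ∂μ :=
              setLIntegral_congr_fun hs (fun ω hω => by
                rw [min_eq_left hω])
          _ ≤ _ := setLIntegral_le_lintegral _ _
      have e3 : ∫⁻ ω, ENNReal.ofReal (min (T ω) x) ∂μ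
          = ∫⁻ t in Ioi (0:ℝ), μ {a | t < min (T a) x} :=
        lintegral_eq_lintegral_meas_lt μ
          (Eventually.of_forall fun ω => le_min (hT0 ω) hx0.le) hminmeas.aemeasurable
      have e4 : ∫⁻ t in Ioi (0:ℝ), μ {a | t < min (T a) x}
          = ∫⁻ t in Ioc (0:ℝ) x, μ {a | t < min (T a) x} := by
        rw [← Ioc_union_Ioi_eq_Ioi hx0.le,
          lintegral_union measurableSet_Ioi Ioc_disjoint_Ioi_same]
        have hz : ∫⁻ t in Ioi x, μ {a | t < min (T a) x} = 0 := by
          have : ∀ t ∈ Ioi x, μ {a | t < min (T a) x} = (0 : ENNReal) := by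
            intro t ht
            have : {a | t < min (T a) x} = ∅ :=
              eq_empty_of_forall_notMem fun a ha =>
                absurd (show t < min (T a) x from ha) (not_lt.2 ((min_le_right _ _).trans ht.le))
            rw [this, measure_empty]
          calc ∫⁻ t in Ioi x, μ {a | t < min (T a) x}
              = ∫⁻ _ in Ioi x, (0:ENNReal) :=
                setLIntegral_congr_fun measurableSet_Ioi this
            _ = 0 := by simp
        rw [hz, add_zero]
      have hIntC : IntegrableOn (fun t : ℝ => C * t ^ (-α)) (Ioc 0 x) := by
        exact ((intervalIntegral.intervalIntegrable_rpow'
          (by linarith : (-1:ℝ) < -α)).1).const_mul C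
      have hnnC : (0 : ℝ → ℝ) ≤ᵐ[volume.restrict (Ioc (0:ℝ) x)] fun t => C * t ^ (-α) := by
        filter_upwards [ae_restrict_mem measurableSet_Ioc] with t ht
        exact mul_nonneg hCpos.le (Real.rpow_nonneg ht.1.le _)
      have hval : ∫ t in Ioc (0:ℝ) x, C * t ^ (-α) = C / (1 - α) * x ^ (1 - α) := by
        rw [MeasureTheory.integral_const_mul, ← intervalIntegral.integral_of_le hx0.le,
          integral_rpow (Or.inl (by linarith : (-1:ℝ) < -α)),
          Real.zero_rpow (by linarith : -α + 1 ≠ 0),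
          show -α + 1 = 1 - α by ring, sub_zero]
        field_simp
      have e5 : ∫⁻ t in Ioc (0:ℝ) x, μ {a | t < min (T a) x}
          ≤ ENNReal.ofReal (C / (1 - α) * x ^ (1 - α)) := by
        calc ∫⁻ t in Ioc (0:ℝ) x, μ {a | t < min (T a) x}
            ≤ ∫⁻ t in Ioc (0:ℝ) x, ENNReal.ofReal (C * t ^ (-α)) := by
              apply lintegral_mono_ae
              filter_upwards [ae_restrict_mem measurableSet_Ioc] with t ht
              refine le_trans (measure_mono ?_) (hμbound t ht.1)
              intro a ha
              simp only [Set.mem_setOf_eq] at ha ⊢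
              exact lt_of_lt_of_le ha (min_le_left _ _)
          _ = ENNReal.ofReal (∫ t in Ioc (0:ℝ) x, C * t ^ (-α)) :=
              (ofReal_integral_eq_lintegral_ofReal hIntC hnnC).symm
          _ = ENNReal.ofReal (C / (1 - α) * x ^ (1 - α)) := by rw [hval]
      have hle : ∫⁻ ω in {ω | T ω ≤ x}, ENNReal.ofReal (T ω) ∂μ
          ≤ ENNReal.ofReal (C / (1 - α) * x ^ (1 - α)) := by
        refine le_trans e2 ?_
        rw [e3, e4]; exact e5
      rw [e1]
      calc (∫⁻ ω in {ω | T ω ≤ x}, ENNReal.ofReal (T ω) ∂μ).toReal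
          ≤ (ENNReal.ofReal (C / (1 - α) * x ^ (1 - α))).toReal :=
            ENNReal.toReal_mono ENNReal.ofReal_ne_top hle
        _ = C / (1 - α) * x ^ (1 - α) :=
            ENNReal.toReal_ofReal
              (mul_nonneg (div_nonneg hCpos.le h1α.le) (Real.rpow_nonneg hx0.le _))
    have hnnI : 0 ≤ ∫ ω in {ω | T ω ≤ x}, T ω ∂μ :=
      setIntegral_nonneg hs fun ω _ => hT0 ω
    have hRHSnn : 0 ≤ x * tailP μ T x := mul_nonneg hx0.le (htail_nonneg x)
    rw [Real.norm_eq_abs, Real.norm_eq_abs, abs_of_nonneg hnnI, abs_of_nonneg hRHSnn]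
    have h1 := (hMb x hx).1
    have hfacnn : (0:ℝ) ≤ 2 * C / (1 - α) := by positivity
    have hmul2 : 1/2 * x ^ (1 - α) ≤ x * tailP μ T x := by
      have hm := mul_le_mul_of_nonneg_left h1 hx0.le
      calc 1/2 * x ^ (1 - α) = x * (1/2 * x ^ (-α)) := by rw [← hxpow]; ring
        _ ≤ x * tailP μ T x := hm
    have hfac := mul_le_mul_of_nonneg_left hmul2 hfacnn
    have hrw : 2 * C / (1 - α) * (1/2 * x ^ (1 - α)) = C / (1 - α) * x ^ (1 - α) := by
      ring
    linarith [key, hfac, hrw]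
  -- Part 4
  have P4 : ¬ ((fun x => x * tailP μ X x) =o[atTop] fun x => tailP μ T x) := by
    intro h
    have h1 := h.def one_pos
    have h2 : ∀ᶠ x : ℝ in atTop, x ^ (α + 1 - β) ≤ 2 ^ (β + 1) := by
      filter_upwards [h1, eventually_ge_atTop (max M 1)] with x hxo hxM
      have hx1 : (1:ℝ) ≤ x := le_trans (le_max_right _ _) hxM
      have hx0 : (0:ℝ) < x := by linarith
      have hxMle : M ≤ x := le_trans (le_max_left _ _) hxM
      have hXx : tailP μ X x = (x + 1) ^ (-β) := hXtail x (by linarith)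
      have hXnn : (0:ℝ) ≤ x * tailP μ X x := by
        rw [hXx]; exact mul_nonneg hx0.le (Real.rpow_nonneg (by linarith) _)
      rw [Real.norm_eq_abs, Real.norm_eq_abs, abs_of_nonneg hXnn,
        abs_of_nonneg (htail_nonneg x), one_mul] at hxo
      have hTb : tailP μ T x ≤ 2 * x ^ (-α) := (hMb x hxMle).2
      have hlow : (2 * x) ^ (-β) ≤ (x + 1) ^ (-β) :=
        Real.rpow_le_rpow_of_nonpos (by linarith) (by linarith) (by linarith)
      rw [Real.mul_rpow (by norm_num) hx0.le] at hlow
      have hineq : x * (2 ^ (-β) * x ^ (-β)) ≤ 2 * x ^ (-α) := by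
        have := mul_le_mul_of_nonneg_left hlow hx0.le
        rw [hXx] at hxo
        nlinarith
      have e1 : (2:ℝ) ^ β * 2 ^ (-β) = 1 := by
        rw [← Real.rpow_add two_pos]; simp
      have e2 : x ^ α * x ^ (-α) = 1 := by
        rw [← Real.rpow_add hx0]; simp
      have e3 : x ^ α * x * x ^ (-β) = x ^ (α + 1 - β) := by
        rw [show α + 1 - β = α + 1 + (-β) by ring, Real.rpow_add hx0,
          Real.rpow_add hx0, Real.rpow_one]
      have hposf : (0:ℝ) < 2 ^ β * x ^ α := by positivity
      have hkey := mul_le_mul_of_nonneg_left hineq hposf.le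
      have eL : (2 ^ β * x ^ α) * (x * (2 ^ (-β) * x ^ (-β))) = x ^ (α + 1 - β) := by
        have hr : (2 ^ β * x ^ α) * (x * (2 ^ (-β) * x ^ (-β)))
            = (2 ^ β * 2 ^ (-β)) * (x ^ α * x * x ^ (-β)) := by ring
        rw [hr, e1, e3, one_mul]
      have eR : (2 ^ β * x ^ α) * (2 * x ^ (-α)) = 2 ^ (β + 1) := by
        have hr : (2 ^ β * x ^ α) * (2 * x ^ (-α))
            = ((2:ℝ) ^ β * 2) * (x ^ α * x ^ (-α)) := by ring
        rw [hr, e2, mul_one, Real.rpow_add_one (by norm_num : (2:ℝ) ≠ 0)]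
      rw [eL, eR] at hkey
      exact hkey
    have h3 : Tendsto (fun x : ℝ => x ^ (α + 1 - β)) atTop atTop :=
      tendsto_rpow_atTop (by linarith)
    obtain ⟨x, hxa, hxb⟩ := (h2.and (h3.eventually_gt_atTop (2 ^ (β + 1)))).exists
    linarith
  exact ⟨P1, P2, P3, P4⟩
end

section
/- Under the setting of the matrix convolution tail lemma, if additionally F is square and Σ_{n≥0} (F(∞))^n = (I − F(∞))^{-1} < ∞, then limsup_{x→∞} Σ_{n=0}^∞ (F^{*n})‾(x)/P(Y > x) ≤ (I − F(∞))^{-1} F̃ (I − F(∞))^{-1} entrywise, where F^{*0}(x) = 1(x ≥ 0) I and F^{*n} = F^{*(n−1)} ∗ F. -/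
set_option linter.unusedSectionVars false
set_option linter.unusedVariables false
set_option maxHeartbeats 1000000


open MeasureTheory Filter Set ProbabilityTheory Real

/-- A nonnegative random variable `Y` is subexponential (`Y ∈ 𝓢`) if `P(Y > x) > 0` for all
`x ≥ 0` and `P(Y₁ + Y₂ > x) ∼ 2 P(Y > x)` for independent copies `Y₁, Y₂`. -/
def SubexpRV {Ω : Type*} [MeasurableSpace Ω] (μ : Measure Ω) [IsProbabilityMeasure μ]
    (Y : Ω → ℝ) : Prop :=
  (∀ x ≥ 0, 0 < tailP μ Y x) ∧
  Tendsto (fun x => ((μ.prod μ) {p : Ω × Ω | x < Y p.1 + Y p.2}).toReal / tailP μ Y x)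
    atTop (nhds 2)

/-- The `n`-fold convolution `F^{*n}` of a square matrix-valued d.f. `F`, with
`F^{*0}(x) = 1(x ≥ 0) I` and `F^{*(n+1)} = F^{*n} ∗ F`. -/
noncomputable def iterConv {d : ℕ} (F : Fin d → Fin d → StieltjesFunction ℝ) :
    ℕ → Fin d → Fin d → ℝ → ℝ
  | 0 => fun i j x => if 0 ≤ x then (if i = j then 1 else 0) else 0
  | n + 1 => fun i k x => ∑ j, ∫ y, iterConv F n i j (x - y) ∂(F j k).measure

section Tail2

variable {Ω : Type*} [MeasurableSpace Ω] (μ : Measure Ω) [IsProbabilityMeasure μ]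
  (Y : Ω → ℝ)


variable {Ω : Type*} [MeasurableSpace Ω] (μ : Measure Ω) [IsProbabilityMeasure μ]
  (Y : Ω → ℝ)

lemma tail_ne_top (x : ℝ) : μ {ω | x < Y ω} ≠ ⊤ := measure_ne_top μ _

lemma tail_anti : Antitone (tailP μ Y) := by
  intro a b hab
  exact ENNReal.toReal_mono (tail_ne_top μ Y a)
    (measure_mono (fun ω (h : b < Y ω) => lt_of_le_of_lt hab h))

lemma tail_nonneg (x : ℝ) : 0 ≤ tailP μ Y x := ENNReal.toReal_nonneg

lemma tail_le_one (x : ℝ) : tailP μ Y x ≤ 1 := by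
  have h : μ {ω | x < Y ω} ≤ 1 := by
    simpa using measure_mono (μ := μ) (subset_univ {ω | x < Y ω})
  simpa [tailP] using ENNReal.toReal_mono (by simp) h

lemma tail_neg (hY0 : ∀ ω, 0 ≤ Y ω) {x : ℝ} (hx : x < 0) : tailP μ Y x = 1 := by
  have : {ω | x < Y ω} = univ := eq_univ_iff_forall.2 fun ω => lt_of_lt_of_le hx (hY0 ω)
  simp [tailP, this]

lemma tail_pos (hY0 : ∀ ω, 0 ≤ Y ω) (hpos : ∀ x ≥ 0, 0 < tailP μ Y x) (x : ℝ) :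
    0 < tailP μ Y x := by
  rcases lt_or_ge x 0 with h | h
  · rw [tail_neg μ Y hY0 h]; norm_num
  · exact hpos x h

lemma tail_ofReal (x : ℝ) : ENNReal.ofReal (tailP μ Y x) = μ {ω | x < Y ω} :=
  ENNReal.ofReal_toReal (tail_ne_top μ Y x)

lemma tail_tendsto_zero (hYmeas : Measurable Y) :
    Tendsto (tailP μ Y) atTop (nhds 0) := by
  have hseq : Tendsto (fun n : ℕ => μ {ω | (n : ℝ) < Y ω}) atTop (nhds 0) := by
    have h1 : Tendsto (fun n : ℕ => μ {ω | (n : ℝ) < Y ω}) atTop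
        (nhds (μ (⋂ n : ℕ, {ω | (n : ℝ) < Y ω}))) := by
      refine tendsto_measure_iInter_atTop (fun n => (hYmeas measurableSet_Ioi).nullMeasurableSet)
        (fun a b hab => ?_) ⟨0, measure_ne_top _ _⟩
      exact fun ω (h : (b:ℝ) < Y ω) => lt_of_le_of_lt (by exact_mod_cast hab) h
    have h2 : (⋂ n : ℕ, {ω | (n : ℝ) < Y ω}) = ∅ := by
      ext ω
      simp only [mem_iInter, mem_setOf_eq, mem_empty_iff_false, iff_false, not_forall, not_lt]
      obtain ⟨n, hn⟩ := exists_nat_gt (Y ω)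
      exact ⟨n, hn.le⟩
    rwa [h2, measure_empty] at h1
  have hseqR : Tendsto (fun n : ℕ => tailP μ Y n) atTop (nhds 0) := by
    have := (ENNReal.tendsto_toReal (by simp : (0:ENNReal) ≠ ⊤)).comp hseq
    exact this
  have hcomp : Tendsto (fun x : ℝ => tailP μ Y (⌊x⌋₊ : ℕ)) atTop (nhds 0) :=
    hseqR.comp tendsto_nat_floor_atTop
  refine tendsto_of_tendsto_of_tendsto_of_le_of_le' tendsto_const_nhds hcomp
    (Eventually.of_forall fun x => tail_nonneg μ Y x) ?_
  filter_upwards [eventually_ge_atTop (0:ℝ)] with x hx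
  exact tail_anti μ Y (Nat.floor_le hx)


noncomputable def tailE (x : ℝ) : ENNReal := μ {ω | x < Y ω}

lemma tailE_anti : Antitone (tailE μ Y) := fun _ b hab =>
  measure_mono (fun ω (h : b < Y ω) => lt_of_le_of_lt hab h)

lemma tailE_meas : Measurable (tailE μ Y) := (tailE_anti μ Y).measurable

lemma tailE_ne_top (x : ℝ) : tailE μ Y x ≠ ⊤ := measure_ne_top μ _

lemma tailE_le_one (x : ℝ) : tailE μ Y x ≤ 1 := by
  simpa [tailE] using measure_mono (μ := μ) (subset_univ {ω | x < Y ω})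

lemma tailE_toReal (x : ℝ) : (tailE μ Y x).toReal = tailP μ Y x := rfl

lemma tailE_neg (hY0 : ∀ ω, 0 ≤ Y ω) {x : ℝ} (hx : x < 0) : tailE μ Y x = 1 := by
  have : {ω | x < Y ω} = univ := eq_univ_iff_forall.2 fun ω => lt_of_lt_of_le hx (hY0 ω)
  simp [tailE, this]

lemma slice_meas (hYmeas : Measurable Y) (x : ℝ) :
    Measurable (fun ω => tailE μ Y (x - Y ω)) :=
  (tailE_meas μ Y).comp (measurable_const.sub hYmeas)

lemma prod_eq (hYmeas : Measurable Y) (x : ℝ) :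
    (μ.prod μ) {p : Ω × Ω | x < Y p.1 + Y p.2} = ∫⁻ ω, tailE μ Y (x - Y ω) ∂μ := by
  rw [Measure.prod_apply]
  · refine lintegral_congr fun ω => ?_
    congr 1
    ext ω2
    simp only [mem_preimage, mem_setOf_eq, tailE]
    constructor
    · intro h; linarith
    · intro h; linarith
  · exact measurableSet_lt measurable_const
      ((hYmeas.comp measurable_fst).add (hYmeas.comp measurable_snd))

/-- the middle integral, `ENNReal`-valued -/
noncomputable def midE (h x : ℝ) : ENNReal :=
  ∫⁻ ω in {ω | h < Y ω ∧ Y ω ≤ x - h}, tailE μ Y (x - Y ω) ∂μ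

lemma midE_ne_top (h x : ℝ) : midE μ Y h x ≠ ⊤ := by
  refine ne_of_lt (lt_of_le_of_lt ?_ (lt_of_le_of_lt (le_refl (1:ENNReal)) ENNReal.one_lt_top))
  calc midE μ Y h x ≤ ∫⁻ _ω in {ω | h < Y ω ∧ Y ω ≤ x - h}, 1 ∂μ :=
        setLIntegral_mono measurable_const (fun ω _ => tailE_le_one μ Y _)
    _ ≤ ∫⁻ _ω, (1:ENNReal) ∂μ := setLIntegral_le_lintegral _ _
    _ = 1 := by simp

variable {Y}

lemma sets_meas (hYmeas : Measurable Y) (a : ℝ) : MeasurableSet {ω | a < Y ω} :=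
  hYmeas measurableSet_Ioi

lemma sets_meas' (hYmeas : Measurable Y) (a : ℝ) : MeasurableSet {ω | Y ω ≤ a} :=
  hYmeas measurableSet_Iic

lemma sets_meas'' (hYmeas : Measurable Y) (a b : ℝ) :
    MeasurableSet {ω | a < Y ω ∧ Y ω ≤ b} := by
  have : {ω | a < Y ω ∧ Y ω ≤ b} = Y ⁻¹' (Ioc a b) := rfl
  rw [this]; exact hYmeas measurableSet_Ioc

/-- decomposition bound LB1 -/
lemma LB1 (hYmeas : Measurable Y) (hY0 : ∀ ω, 0 ≤ Y ω) {h x : ℝ} (hh : 0 ≤ h) (hx : 2*h ≤ x) :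
    (1 - tailP μ Y h) * tailP μ Y x + (midE μ Y h x).toReal + tailP μ Y x
      ≤ ((μ.prod μ) {p : Ω × Ω | x < Y p.1 + Y p.2}).toReal := by
  set S1 : Set Ω := {ω | Y ω ≤ h} with hS1
  set S2 : Set Ω := {ω | h < Y ω ∧ Y ω ≤ x - h} with hS2
  set S4 : Set Ω := {ω | x < Y ω} with hS4
  have m1 := sets_meas' hYmeas h
  have m2 := sets_meas'' hYmeas h (x - h)
  have m4 := sets_meas hYmeas x
  have d12 : Disjoint S1 S2 := by
    rw [Set.disjoint_left]; rintro ω (h1 : Y ω ≤ h) ⟨h2, _⟩; exact absurd h1 (not_le.2 h2)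
  have d14 : Disjoint S1 S4 := by
    rw [Set.disjoint_left]; rintro ω (h1 : Y ω ≤ h) (h4 : x < Y ω); linarith
  have d24 : Disjoint S2 S4 := by
    rw [Set.disjoint_left]; rintro ω ⟨_, h2⟩ (h4 : x < Y ω); linarith
  set f : Ω → ENNReal := fun ω => tailE μ Y (x - Y ω) with hf
  have hfmeas : Measurable f := slice_meas μ Y hYmeas x
  -- piecewise lower bounds
  have b1 : tailE μ Y x * μ S1 ≤ ∫⁻ ω in S1, f ω ∂μ := by
    rw [← setLIntegral_const S1 (tailE μ Y x)]
    refine setLIntegral_mono hfmeas fun ω (hω : Y ω ≤ h) => ?_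
    exact tailE_anti μ Y (by have := hY0 ω; linarith)
  have b4 : μ S4 ≤ ∫⁻ ω in S4, f ω ∂μ := by
    have : (1:ENNReal) * μ S4 = μ S4 := one_mul _
    rw [← this, ← setLIntegral_const S4 (1:ENNReal)]
    refine setLIntegral_mono hfmeas fun ω (hω : x < Y ω) => ?_
    exact le_of_eq (tailE_neg μ Y hY0 (by linarith)).symm
  have hsum : ∫⁻ ω in S1, f ω ∂μ + ∫⁻ ω in S2, f ω ∂μ + ∫⁻ ω in S4, f ω ∂μ
      ≤ ∫⁻ ω, f ω ∂μ := by
    rw [← lintegral_union m2 d12, ← lintegral_union m4 (Set.disjoint_union_left.2 ⟨d14, d24⟩)]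
    exact setLIntegral_le_lintegral _ _
  have key : tailE μ Y x * μ S1 + midE μ Y h x + μ S4 ≤ ∫⁻ ω, f ω ∂μ :=
    le_trans (by exact add_le_add (add_le_add b1 (le_refl _)) b4) hsum
  rw [← prod_eq μ Y hYmeas x] at key
  have hfin : (μ.prod μ) {p : Ω × Ω | x < Y p.1 + Y p.2} ≠ ⊤ := measure_ne_top _ _
  have := ENNReal.toReal_mono hfin key
  have hfin1 : tailE μ Y x * μ S1 ≠ ⊤ :=
    ENNReal.mul_ne_top (tailE_ne_top μ Y x) (measure_ne_top μ _)
  rw [ENNReal.toReal_add (ENNReal.add_ne_top.2 ⟨hfin1, midE_ne_top μ Y h x⟩) (measure_ne_top μ _),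
    ENNReal.toReal_add hfin1 (midE_ne_top μ Y h x), ENNReal.toReal_mul] at this
  -- identify μ S1 and μ S4
  have hS1r : (μ S1).toReal = 1 - tailP μ Y h := by
    have hc : S1 = {ω | h < Y ω}ᶜ := by ext ω; simp [hS1, not_lt]
    have := measure_compl (sets_meas hYmeas h) (measure_ne_top μ _)
    have hle : μ {ω | h < Y ω} ≤ 1 := tailE_le_one μ Y h
    rw [hc, this, measure_univ, ENNReal.toReal_sub_of_le hle (by simp)]
    simp [tailP]
  have hS4r : (μ S4).toReal = tailP μ Y x := rfl
  rw [hS1r, hS4r] at this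
  calc (1 - tailP μ Y h) * tailP μ Y x + (midE μ Y h x).toReal + tailP μ Y x
      = (tailE μ Y x).toReal * (1 - tailP μ Y h) + (midE μ Y h x).toReal + tailP μ Y x := by
        rw [tailE_toReal]; ring
    _ ≤ _ := this

/-- decomposition bound LB2 -/
lemma LB2 (hYmeas : Measurable Y) (hY0 : ∀ ω, 0 ≤ Y ω) {h x : ℝ} (hh : 0 ≤ h) (hx : h ≤ x) :
    (1 - tailP μ Y h) * tailP μ Y x + tailP μ Y (x - h) * (tailP μ Y h - tailP μ Y x)
      + tailP μ Y x
      ≤ ((μ.prod μ) {p : Ω × Ω | x < Y p.1 + Y p.2}).toReal := by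
  set S1 : Set Ω := {ω | Y ω ≤ h} with hS1
  set S2 : Set Ω := {ω | h < Y ω ∧ Y ω ≤ x} with hS2
  set S4 : Set Ω := {ω | x < Y ω} with hS4
  have m1 := sets_meas' hYmeas h
  have m2 := sets_meas'' hYmeas h x
  have m4 := sets_meas hYmeas x
  have d12 : Disjoint S1 S2 := by
    rw [Set.disjoint_left]; rintro ω (h1 : Y ω ≤ h) ⟨h2, _⟩; exact absurd h1 (not_le.2 h2)
  have d14 : Disjoint S1 S4 := by
    rw [Set.disjoint_left]; rintro ω (h1 : Y ω ≤ h) (h4 : x < Y ω); linarith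
  have d24 : Disjoint S2 S4 := by
    rw [Set.disjoint_left]; rintro ω ⟨_, h2⟩ (h4 : x < Y ω); linarith
  set f : Ω → ENNReal := fun ω => tailE μ Y (x - Y ω) with hf
  have hfmeas : Measurable f := slice_meas μ Y hYmeas x
  have b1 : tailE μ Y x * μ S1 ≤ ∫⁻ ω in S1, f ω ∂μ := by
    rw [← setLIntegral_const S1 (tailE μ Y x)]
    refine setLIntegral_mono hfmeas fun ω (hω : Y ω ≤ h) => ?_
    exact tailE_anti μ Y (by have := hY0 ω; linarith)
  have b2 : tailE μ Y (x - h) * μ S2 ≤ ∫⁻ ω in S2, f ω ∂μ := by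
    rw [← setLIntegral_const S2 (tailE μ Y (x - h))]
    refine setLIntegral_mono hfmeas fun ω hω => ?_
    exact tailE_anti μ Y (by rcases hω with ⟨h1, _⟩; linarith)
  have b4 : μ S4 ≤ ∫⁻ ω in S4, f ω ∂μ := by
    have : (1:ENNReal) * μ S4 = μ S4 := one_mul _
    rw [← this, ← setLIntegral_const S4 (1:ENNReal)]
    refine setLIntegral_mono hfmeas fun ω (hω : x < Y ω) => ?_
    exact le_of_eq (tailE_neg μ Y hY0 (by linarith)).symm
  have hsum : ∫⁻ ω in S1, f ω ∂μ + ∫⁻ ω in S2, f ω ∂μ + ∫⁻ ω in S4, f ω ∂μ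
      ≤ ∫⁻ ω, f ω ∂μ := by
    rw [← lintegral_union m2 d12, ← lintegral_union m4 (Set.disjoint_union_left.2 ⟨d14, d24⟩)]
    exact setLIntegral_le_lintegral _ _
  have key : tailE μ Y x * μ S1 + tailE μ Y (x - h) * μ S2 + μ S4 ≤ ∫⁻ ω, f ω ∂μ :=
    le_trans (add_le_add (add_le_add b1 b2) b4) hsum
  rw [← prod_eq μ Y hYmeas x] at key
  have hfin : (μ.prod μ) {p : Ω × Ω | x < Y p.1 + Y p.2} ≠ ⊤ := measure_ne_top _ _
  have := ENNReal.toReal_mono hfin key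
  have hfin1 : tailE μ Y x * μ S1 ≠ ⊤ :=
    ENNReal.mul_ne_top (tailE_ne_top μ Y x) (measure_ne_top μ _)
  have hfin2 : tailE μ Y (x - h) * μ S2 ≠ ⊤ :=
    ENNReal.mul_ne_top (tailE_ne_top μ Y _) (measure_ne_top μ _)
  rw [ENNReal.toReal_add (ENNReal.add_ne_top.2 ⟨hfin1, hfin2⟩) (measure_ne_top μ _),
    ENNReal.toReal_add hfin1 hfin2, ENNReal.toReal_mul, ENNReal.toReal_mul] at this
  have hS1r : (μ S1).toReal = 1 - tailP μ Y h := by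
    have hc : S1 = {ω | h < Y ω}ᶜ := by ext ω; simp [hS1, not_lt]
    have h2 := measure_compl (sets_meas hYmeas h) (measure_ne_top μ _)
    have hle : μ {ω | h < Y ω} ≤ 1 := tailE_le_one μ Y h
    rw [hc, h2, measure_univ, ENNReal.toReal_sub_of_le hle (by simp)]
    simp [tailP]
  have hS2r : (μ S2).toReal = tailP μ Y h - tailP μ Y x := by
    have hu : {ω | h < Y ω} = S2 ∪ S4 := by
      ext ω; simp only [hS2, hS4, mem_setOf_eq, mem_union]
      constructor
      · intro h1; rcases le_or_gt (Y ω) x with h2 | h2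
        · exact Or.inl ⟨h1, h2⟩
        · exact Or.inr h2
      · rintro (⟨h1, _⟩ | h1)
        · exact h1
        · linarith
    have : μ (S2 ∪ S4) = μ S2 + μ S4 := measure_union d24 m4
    rw [← hu] at this
    have hr := congrArg ENNReal.toReal this
    rw [ENNReal.toReal_add (measure_ne_top μ _) (measure_ne_top μ _)] at hr
    have : (μ {ω | h < Y ω}).toReal = tailP μ Y h := rfl
    rw [this] at hr
    have : (μ S4).toReal = tailP μ Y x := rfl
    rw [this] at hr
    linarith
  have hS4r : (μ S4).toReal = tailP μ Y x := rfl
  rw [hS1r, hS2r, hS4r] at this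
  calc (1 - tailP μ Y h) * tailP μ Y x + tailP μ Y (x - h) * (tailP μ Y h - tailP μ Y x)
        + tailP μ Y x
      = (tailE μ Y x).toReal * (1 - tailP μ Y h)
        + (tailE μ Y (x-h)).toReal * (tailP μ Y h - tailP μ Y x) + tailP μ Y x := by
        rw [tailE_toReal, tailE_toReal]; ring
    _ ≤ _ := this

/-- long-tailedness, `∀ᶠ` form -/
lemma LTail (hYmeas : Measurable Y) (hY0 : ∀ ω, 0 ≤ Y ω)
    (hpos : ∀ x ≥ 0, 0 < tailP μ Y x)
    (hsub2 : Tendsto (fun x => ((μ.prod μ) {p : Ω × Ω | x < Y p.1 + Y p.2}).toReal / tailP μ Y x)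
      atTop (nhds 2))
    (h : ℝ) {ε : ℝ} (hε : 0 < ε) :
    ∀ᶠ x in atTop, tailP μ Y (x - h) ≤ (1 + ε) * tailP μ Y x := by
  have Tpos : ∀ x, 0 < tailP μ Y x := tail_pos μ Y hY0 hpos
  rcases le_or_gt h 0 with hh | hh
  · filter_upwards with x
    have h1 : tailP μ Y (x - h) ≤ tailP μ Y x := tail_anti μ Y (by linarith)
    nlinarith [ (Tpos x).le ]
  · set Th := tailP μ Y h with hTh
    have hThpos : 0 < Th := hpos h hh.le
    set δ := ε * Th / 2 with hδ
    have hδpos : 0 < δ := by positivity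
    set η := ε * Th / (2 * (1 + ε)) with hη
    have hηpos : 0 < η := by positivity
    have hηTh : η < Th := by
      rw [hη, div_lt_iff₀ (by positivity)]
      nlinarith
    have ev1 : ∀ᶠ x in atTop,
        ((μ.prod μ) {p : Ω × Ω | x < Y p.1 + Y p.2}).toReal ≤ (2 + δ) * tailP μ Y x := by
      have := hsub2.eventually (eventually_le_nhds (show (2:ℝ) < 2 + δ by linarith))
      filter_upwards [this] with x hx
      rw [div_le_iff₀ (Tpos x)] at hx
      exact hx
    have ev2 : ∀ᶠ x in atTop, tailP μ Y x ≤ η := by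
      have := (tail_tendsto_zero μ Y hYmeas).eventually (eventually_le_nhds hηpos)
      filter_upwards [this] with x hx using hx
    filter_upwards [ev1, ev2, eventually_ge_atTop h] with x h1 h2 h3
    have hLB := LB2 μ hYmeas hY0 hh.le h3
    set Tx := tailP μ Y x
    set Txh := tailP μ Y (x - h)
    have key : Txh * (Th - Tx) ≤ (Th + δ) * Tx := by nlinarith
    have hpos2 : 0 < Th - Tx := by linarith
    have step : (Th + δ) * Tx ≤ ((1 + ε) * Tx) * (Th - Tx) / (Th - Tx) * (Th - Tx) := by
      rw [div_mul_cancel₀ _ (ne_of_gt hpos2)]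
      have : Th + δ ≤ (1 + ε) * (Th - Tx) := by
        have he : (1+ε) * η = ε * Th / 2 := by
          rw [hη]; field_simp
        nlinarith
      nlinarith [(Tpos x).le]
    have : Txh * (Th - Tx) ≤ ((1 + ε) * Tx) * (Th - Tx) := by
      calc Txh * (Th - Tx) ≤ (Th + δ) * Tx := key
        _ ≤ ((1 + ε) * Tx) * (Th - Tx) / (Th - Tx) * (Th - Tx) := step
        _ = ((1 + ε) * Tx) * (Th - Tx) := by rw [div_mul_cancel₀ _ (ne_of_gt hpos2)]
    exact le_of_mul_le_mul_right this hpos2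

/-- middle-part smallness: the subexponential core -/
lemma MID (hYmeas : Measurable Y) (hY0 : ∀ ω, 0 ≤ Y ω)
    (hpos : ∀ x ≥ 0, 0 < tailP μ Y x)
    (hsub2 : Tendsto (fun x => ((μ.prod μ) {p : Ω × Ω | x < Y p.1 + Y p.2}).toReal / tailP μ Y x)
      atTop (nhds 2))
    {ε : ℝ} (hε : 0 < ε) :
    ∃ h0 : ℝ, 0 < h0 ∧ ∀ h ≥ h0, ∀ᶠ x in atTop,
      (midE μ Y h x).toReal ≤ ε * tailP μ Y x := by
  have Tpos : ∀ x, 0 < tailP μ Y x := tail_pos μ Y hY0 hpos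
  have hev : ∀ᶠ z in atTop, tailP μ Y z ≤ ε / 2 :=
    (tail_tendsto_zero μ Y hYmeas).eventually (eventually_le_nhds (by positivity))
  rcases (eventually_atTop).1 hev with ⟨z0, hz0⟩
  refine ⟨max z0 1, lt_of_lt_of_le zero_lt_one (le_max_right _ _), fun h hh => ?_⟩
  have hh0 : 0 < h := lt_of_lt_of_le zero_lt_one (le_trans (le_max_right _ _) hh)
  have hTh : tailP μ Y h ≤ ε / 2 := hz0 h (le_trans (le_max_left _ _) hh)
  have ev1 : ∀ᶠ x in atTop,
      ((μ.prod μ) {p : Ω × Ω | x < Y p.1 + Y p.2}).toReal ≤ (2 + ε/2) * tailP μ Y x := by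
    have := hsub2.eventually (eventually_le_nhds (show (2:ℝ) < 2 + ε/2 by linarith))
    filter_upwards [this] with x hx
    rw [div_le_iff₀ (Tpos x)] at hx
    exact hx
  filter_upwards [ev1, eventually_ge_atTop (2*h)] with x h1 h2
  have hLB := LB1 μ hYmeas hY0 hh0.le h2
  nlinarith [Tpos x, Tpos h]

lemma tailE_eq_ofReal (x : ℝ) : tailE μ Y x = ENNReal.ofReal (tailP μ Y x) :=
  (ENNReal.ofReal_toReal (tailE_ne_top μ Y x)).symm

/-- transfer of the middle-lemma to a tail-comparable Stieltjes measure -/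
lemma transfer (hYmeas : Measurable Y) (hY0 : ∀ ω, 0 ≤ Y ω)
    (hpos : ∀ x ≥ 0, 0 < tailP μ Y x)
    (hsub2 : Tendsto (fun x => ((μ.prod μ) {p : Ω × Ω | x < Y p.1 + Y p.2}).toReal / tailP μ Y x)
      atTop (nhds 2))
    (G : StieltjesFunction ℝ) (Ginf cbot C : ℝ) (hC : 0 ≤ C)
    (hGtop : Tendsto G atTop (nhds Ginf)) (hGbot : Tendsto G atBot (nhds cbot))
    (z0 : ℝ) (hGtail : ∀ z ≥ z0, Ginf - G z ≤ C * tailP μ Y z)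
    {ε : ℝ} (hε : 0 < ε) :
    ∃ h : ℝ, 0 < h ∧ z0 ≤ h ∧ ∀ᶠ x in atTop,
      ∫ y in Ioc h (x - h), tailP μ Y (x - y) ∂G.measure ≤ ε * tailP μ Y x := by
  haveI : IsFiniteMeasure G.measure := G.isFiniteMeasure hGbot hGtop
  have hGle : ∀ z, G z ≤ Ginf := fun z => Monotone.ge_of_tendsto G.mono hGtop z
  have Tpos : ∀ x, 0 < tailP μ Y x := tail_pos μ Y hY0 hpos
  set ε1 := ε / (3 * (C + 1)) with hε1
  have hε1pos : 0 < ε1 := by positivity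
  obtain ⟨h0, hh0pos, hmid⟩ := MID μ hYmeas hY0 hpos hsub2 hε1pos
  have hev : ∀ᶠ z in atTop, tailP μ Y z ≤ ε1 :=
    (tail_tendsto_zero μ Y hYmeas).eventually (eventually_le_nhds hε1pos)
  rcases (eventually_atTop).1 hev with ⟨z1, hz1⟩
  set h := max (max h0 z0) z1 with hh
  have hpos0 : 0 < h := lt_of_lt_of_le hh0pos (le_trans (le_max_left _ _) (le_max_left _ _))
  have hz0h : z0 ≤ h := le_trans (le_max_right _ _) (le_max_left _ _)
  have hTh : tailP μ Y h ≤ ε1 := hz1 h (le_max_right _ _)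
  refine ⟨h, hpos0, hz0h, ?_⟩
  filter_upwards [hmid h (le_trans (le_max_left _ _) (le_max_left _ _)),
    LTail μ hYmeas hY0 hpos hsub2 h (by norm_num : (0:ℝ) < 1),
    eventually_ge_atTop (2*h)] with x hmidx hlt hx2h
  set s : Set (ℝ × Ω) := {p : ℝ × Ω | (h < p.1 ∧ p.1 ≤ x - h) ∧ x - p.1 < Y p.2} with hs
  have hsmeas : MeasurableSet s :=
    ((measurable_fst measurableSet_Ioi).inter (measurable_fst measurableSet_Iic)).inter
      (measurableSet_lt (measurable_const.sub measurable_fst) (hYmeas.comp measurable_snd))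
  have e1 : (G.measure.prod μ) s = ∫⁻ y in Ioc h (x - h), tailE μ Y (x - y) ∂G.measure := by
    rw [Measure.prod_apply hsmeas, ← lintegral_indicator measurableSet_Ioc]
    refine lintegral_congr fun y => ?_
    by_cases hy : y ∈ Ioc h (x - h)
    · rw [indicator_of_mem hy]
      have hpre : Prod.mk y ⁻¹' s = {ω | x - y < Y ω} := by
        ext ω
        simp only [mem_preimage, hs, mem_setOf_eq]
        exact ⟨fun h' => h'.2, fun h' => ⟨⟨(mem_Ioc.1 hy).1, (mem_Ioc.1 hy).2⟩, h'⟩⟩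
      rw [hpre]; rfl
    · rw [indicator_of_notMem hy]
      have hpre : Prod.mk y ⁻¹' s = ∅ := by
        ext ω
        simp only [mem_preimage, hs, mem_setOf_eq, mem_empty_iff_false, iff_false, not_and]
        intro hab _; exact hy (mem_Ioc.2 hab)
      rw [hpre]; simp
  have e2 : (G.measure.prod μ) s = ∫⁻ ω, G.measure (Ioc (max h (x - Y ω)) (x - h)) ∂μ := by
    rw [Measure.prod_apply_symm hsmeas]
    refine lintegral_congr fun ω => ?_
    congr 1
    ext y
    simp only [mem_preimage, hs, mem_setOf_eq, mem_Ioc, max_lt_iff]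
    constructor
    · rintro ⟨⟨a, b⟩, c⟩; exact ⟨⟨a, by linarith⟩, b⟩
    · rintro ⟨⟨a, b⟩, c⟩; exact ⟨⟨a, c⟩, by linarith⟩
  set A : Set Ω := {ω | h < Y ω ∧ Y ω ≤ x - h} with hA
  set B : Set Ω := {ω | x - h < Y ω} with hB
  have e3 : ∀ ω, G.measure (Ioc (max h (x - Y ω)) (x - h)) ≤
      (A.indicator (fun ω => ENNReal.ofReal C * tailE μ Y (x - Y ω)) ω)
      + (B.indicator (fun _ => ENNReal.ofReal C * tailE μ Y h) ω) := by
    intro ω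
    rcases le_or_gt (Y ω) h with hc1 | hc1
    · have hemp : Ioc (max h (x - Y ω)) (x - h) = ∅ :=
        Ioc_eq_empty (not_lt.2 (le_max_of_le_right (by linarith)))
      rw [hemp]
      simp only [measure_empty]
      exact zero_le
    · rcases le_or_gt (Y ω) (x - h) with hc2 | hc2
      · have hmax : max h (x - Y ω) = x - Y ω := max_eq_right (by linarith)
        rw [hmax, StieltjesFunction.measure_Ioc]
        have hfirst : ENNReal.ofReal (G (x - h) - G (x - Y ω))
            ≤ ENNReal.ofReal C * tailE μ Y (x - Y ω) := by
          calc ENNReal.ofReal (G (x - h) - G (x - Y ω))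
              ≤ ENNReal.ofReal (Ginf - G (x - Y ω)) :=
                ENNReal.ofReal_le_ofReal (by linarith [hGle (x - h)])
            _ ≤ ENNReal.ofReal (C * tailP μ Y (x - Y ω)) :=
                ENNReal.ofReal_le_ofReal (hGtail _ (by linarith))
            _ = ENNReal.ofReal C * tailE μ Y (x - Y ω) := by
                rw [ENNReal.ofReal_mul hC, tailE_eq_ofReal]
        rw [indicator_of_mem (show ω ∈ A from ⟨hc1, hc2⟩)]
        exact le_trans hfirst le_self_add
      · have hsub : G.measure (Ioc (max h (x - Y ω)) (x - h)) ≤ G.measure (Ioc h (x - h)) :=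
          measure_mono (Ioc_subset_Ioc_left (le_max_left _ _))
        have hsecond : G.measure (Ioc h (x - h)) ≤ ENNReal.ofReal C * tailE μ Y h := by
          rw [StieltjesFunction.measure_Ioc]
          calc ENNReal.ofReal (G (x - h) - G h) ≤ ENNReal.ofReal (Ginf - G h) :=
                ENNReal.ofReal_le_ofReal (by linarith [hGle (x - h)])
            _ ≤ ENNReal.ofReal (C * tailP μ Y h) := ENNReal.ofReal_le_ofReal (hGtail _ hz0h)
            _ = ENNReal.ofReal C * tailE μ Y h := by rw [ENNReal.ofReal_mul hC, tailE_eq_ofReal]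
        rw [indicator_of_mem (show ω ∈ B from hc2)]
        exact le_trans (le_trans hsub hsecond) le_add_self
  have hAmeas : MeasurableSet A := sets_meas'' hYmeas h (x - h)
  have hBmeas : MeasurableSet B := sets_meas hYmeas (x - h)
  have e4 : ∫⁻ ω, G.measure (Ioc (max h (x - Y ω)) (x - h)) ∂μ
      ≤ ENNReal.ofReal C * midE μ Y h x + ENNReal.ofReal C * (tailE μ Y h * tailE μ Y (x - h)) := by
    calc ∫⁻ ω, G.measure (Ioc (max h (x - Y ω)) (x - h)) ∂μ
        ≤ ∫⁻ ω, ((A.indicator (fun ω => ENNReal.ofReal C * tailE μ Y (x - Y ω)) ω)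
          + (B.indicator (fun _ => ENNReal.ofReal C * tailE μ Y h) ω)) ∂μ := lintegral_mono e3
      _ = ∫⁻ ω, A.indicator (fun ω => ENNReal.ofReal C * tailE μ Y (x - Y ω)) ω ∂μ
          + ∫⁻ ω, B.indicator (fun _ => ENNReal.ofReal C * tailE μ Y h) ω ∂μ :=
          lintegral_add_left ((measurable_const.mul (slice_meas μ Y hYmeas x)).indicator hAmeas) _
      _ = ENNReal.ofReal C * midE μ Y h x + ENNReal.ofReal C * (tailE μ Y h * tailE μ Y (x - h)) := by
          rw [lintegral_indicator hAmeas, lintegral_indicator hBmeas,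
            lintegral_const_mul _ (slice_meas μ Y hYmeas x), setLIntegral_const, mul_assoc]
          rfl
  -- put everything together, in ℝ≥0∞ first
  have e5 : (G.measure.prod μ) s ≤ ENNReal.ofReal (ε * tailP μ Y x) := by
    rw [e2]
    refine le_trans e4 ?_
    have b1 : midE μ Y h x ≤ ENNReal.ofReal (ε1 * tailP μ Y x) := by
      rw [← ENNReal.ofReal_toReal (midE_ne_top μ Y h x)]
      exact ENNReal.ofReal_le_ofReal hmidx
    have b2 : tailE μ Y h ≤ ENNReal.ofReal ε1 := by
      rw [tailE_eq_ofReal]; exact ENNReal.ofReal_le_ofReal hTh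
    have b3 : tailE μ Y (x - h) ≤ ENNReal.ofReal ((1 + 1) * tailP μ Y x) := by
      rw [tailE_eq_ofReal]; exact ENNReal.ofReal_le_ofReal hlt
    calc ENNReal.ofReal C * midE μ Y h x + ENNReal.ofReal C * (tailE μ Y h * tailE μ Y (x - h))
        ≤ ENNReal.ofReal C * ENNReal.ofReal (ε1 * tailP μ Y x)
          + ENNReal.ofReal C * (ENNReal.ofReal ε1 * ENNReal.ofReal ((1 + 1) * tailP μ Y x)) := by
          exact add_le_add (mul_le_mul_right b1 _) (mul_le_mul_right (mul_le_mul' b2 b3) _)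
      _ = ENNReal.ofReal (C * (ε1 * tailP μ Y x) + C * (ε1 * ((1 + 1) * tailP μ Y x))) := by
          have t0 : 0 ≤ tailP μ Y x := (Tpos x).le
          rw [← ENNReal.ofReal_mul hC, ← ENNReal.ofReal_mul hε1pos.le,
            ← ENNReal.ofReal_mul hC,
            ← ENNReal.ofReal_add (mul_nonneg hC (mul_nonneg hε1pos.le t0))
              (mul_nonneg hC (mul_nonneg hε1pos.le (by linarith)))]
      _ ≤ ENNReal.ofReal (ε * tailP μ Y x) := by
          refine ENNReal.ofReal_le_ofReal ?_
          have hcancel : ε1 * (3 * (C + 1)) = ε := by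
            rw [hε1]; field_simp
          have : C * ε1 * 3 ≤ ε := by nlinarith [hε1pos]
          nlinarith [Tpos x, hε1pos]
  have e0 : ∫ y in Ioc h (x - h), tailP μ Y (x - y) ∂G.measure
      = (∫⁻ y in Ioc h (x - h), tailE μ Y (x - y) ∂G.measure).toReal := by
    have hm : Measurable (fun y : ℝ => tailE μ Y (x - y)) :=
      (tailE_meas μ Y).comp (measurable_const.sub measurable_id)
    exact integral_toReal hm.aemeasurable (Eventually.of_forall fun y =>
      lt_of_le_of_lt (tailE_le_one μ Y _) ENNReal.one_lt_top)
  rw [e0, ← e1]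
  calc ((G.measure.prod μ) s).toReal ≤ (ENNReal.ofReal (ε * tailP μ Y x)).toReal :=
        ENNReal.toReal_mono ENNReal.ofReal_ne_top e5
    _ = ε * tailP μ Y x := ENNReal.toReal_ofReal (mul_nonneg hε.le (Tpos x).le)



lemma LTshift (hYmeas : Measurable Y) (hY0 : ∀ ω, 0 ≤ Y ω)
    (hpos : ∀ x ≥ 0, 0 < tailP μ Y x)
    (hsub2 : Tendsto (fun x => ((μ.prod μ) {p : Ω × Ω | x < Y p.1 + Y p.2}).toReal / tailP μ Y x)
      atTop (nhds 2)) (s : ℝ) :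
    ∀ᶠ x in atTop, tailP μ Y x ≤ 2 * tailP μ Y (x - s) := by
  rcases le_or_gt 0 s with hs | hs
  · filter_upwards with x
    have h1 : tailP μ Y x ≤ tailP μ Y (x - s) := tail_anti μ Y (by linarith)
    have h2 : 0 ≤ tailP μ Y (x - s) := tail_nonneg μ Y _
    linarith
  · have h := LTail μ hYmeas hY0 hpos hsub2 (-s) (by norm_num : (0:ℝ) < 1)
    rcases eventually_atTop.1 h with ⟨w0, hw0⟩
    rw [eventually_atTop]
    refine ⟨w0 + s, fun x hx => ?_⟩
    have := hw0 (x - s) (by linarith)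
    have harg : x - s - -s = x - s + s := by ring
    rw [harg] at this
    have : tailP μ Y x ≤ (1 + 1) * tailP μ Y (x - s) := by
      have hxx : x - s + s = x := by ring
      rwa [hxx] at this
    linarith

lemma tailP_meas : Measurable (tailP μ Y) := (tail_anti μ Y).measurable

/-- key estimate for one convolution step -/
lemma keystep (hYmeas : Measurable Y) (hY0 : ∀ ω, 0 ≤ Y ω)
    (hpos : ∀ x ≥ 0, 0 < tailP μ Y x)
    (hsub2 : Tendsto (fun x => ((μ.prod μ) {p : Ω × Ω | x < Y p.1 + Y p.2}).toReal / tailP μ Y x)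
      atTop (nhds 2))
    (w : ℝ → ℝ) (hwa : Antitone w) (hw0 : ∀ z, 0 ≤ w z) (Bw : ℝ) (hwB : ∀ z, w z ≤ Bw)
    (Lw : ℝ) (hLw0 : 0 ≤ Lw) (hwL : ∀ δ > 0, ∀ᶠ z in atTop, w z ≤ (Lw + δ) * tailP μ Y z)
    (G : StieltjesFunction ℝ) (Ginf cbot CG : ℝ) (hCG : 0 ≤ CG)
    (hGtop : Tendsto G atTop (nhds Ginf)) (hGbot : Tendsto G atBot (nhds cbot))
    (hcbot0 : 0 ≤ cbot)
    (hGtail : ∀ᶠ z in atTop, Ginf - G z ≤ CG * tailP μ Y z)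
    {ε : ℝ} (hε : 0 < ε) :
    ∀ᶠ x in atTop, ∫ y, w (x - y) ∂G.measure ≤ (Lw * Ginf + Bw * CG + ε) * tailP μ Y x := by
  haveI : IsFiniteMeasure G.measure := G.isFiniteMeasure hGbot hGtop
  have hGle : ∀ z, G z ≤ Ginf := fun z => Monotone.ge_of_tendsto G.mono hGtop z
  have hcbotle : ∀ z, cbot ≤ G z := fun z => Monotone.le_of_tendsto G.mono hGbot z
  have hGinf0 : 0 ≤ Ginf := le_trans hcbot0 (le_trans (hcbotle 0) (hGle 0))
  have hBw0 : 0 ≤ Bw := le_trans (hw0 0) (hwB 0)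
  have Tpos : ∀ x, 0 < tailP μ Y x := tail_pos μ Y hY0 hpos
  have hwmeas : Measurable w := hwa.measurable
  set D := Ginf * (Lw + 2) + 1 + Bw * CG + 1 with hD
  have hDpos : 0 < D := by positivity
  set ε1 := min 1 (ε / D) with hε1
  have hε1pos : 0 < ε1 := lt_min one_pos (by positivity)
  have hε1le1 : ε1 ≤ 1 := min_le_left _ _
  have hε1D : ε1 * D ≤ ε := by
    calc ε1 * D ≤ (ε / D) * D := mul_le_mul_of_nonneg_right (min_le_right _ _) hDpos.le
      _ = ε := div_mul_cancel₀ _ (ne_of_gt hDpos)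
  obtain ⟨z0, hz0⟩ := eventually_atTop.1 hGtail
  set ε2 := ε1 / (Lw + 1 + 1) with hε2
  have hε2pos : 0 < ε2 := by positivity
  obtain ⟨h2, hh2pos, hz0h2, htr⟩ :=
    transfer μ hYmeas hY0 hpos hsub2 G Ginf cbot CG hCG hGtop hGbot z0 hz0 hε2pos
  obtain ⟨z1, hz1⟩ := eventually_atTop.1 (hwL ε1 hε1pos)
  obtain ⟨z2, hz2⟩ := eventually_atTop.1 (hwL 1 one_pos)
  set h := max h2 (max z1 z2) with hh
  have hh2h : h2 ≤ h := le_max_left _ _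
  have hz1h : z1 ≤ h := le_trans (le_max_left _ _) (le_max_right _ _)
  have hz2h : z2 ≤ h := le_trans (le_max_right _ _) (le_max_right _ _)
  have hhpos : 0 < h := lt_of_lt_of_le hh2pos hh2h
  have hz0h : z0 ≤ h := le_trans hz0h2 hh2h
  filter_upwards [htr, LTail μ hYmeas hY0 hpos hsub2 h hε1pos,
    eventually_ge_atTop (2*h), eventually_ge_atTop (h + z1)] with x htrx hltx hx2h hxz1
  have hxh : h ≤ x - h := by linarith
  have hxz1' : z1 ≤ x - h := by linarith
  have hxz0' : z0 ≤ x - h := by linarith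
  have hintg : ∀ s : Set ℝ, IntegrableOn (fun y => w (x - y)) s G.measure := by
    intro s
    refine Integrable.integrableOn ?_
    refine Integrable.mono' (integrable_const Bw)
      ((hwmeas.comp (measurable_const.sub measurable_id)).aestronglyMeasurable) ?_
    refine Eventually.of_forall fun y => ?_
    rw [Real.norm_eq_abs, abs_of_nonneg (hw0 _)]
    exact hwB _
  have hintT : ∀ s : Set ℝ, IntegrableOn (fun y => tailP μ Y (x - y)) s G.measure := by
    intro s
    refine Integrable.integrableOn ?_
    refine Integrable.mono' (integrable_const 1)
      (((tailP_meas μ).comp (measurable_const.sub measurable_id)).aestronglyMeasurable) ?_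
    refine Eventually.of_forall fun y => ?_
    rw [Real.norm_eq_abs, abs_of_nonneg (tail_nonneg μ Y _)]
    exact tail_le_one μ Y _
  have hd1 : Disjoint (Iic h) (Ioc h (x - h)) := by
    rw [Set.disjoint_left]; rintro y (hy1 : y ≤ h) ⟨hy2, _⟩; linarith
  have hd2 : Disjoint (Iic (x - h)) (Ioi (x - h)) := by
    rw [Set.disjoint_left]; rintro y (hy1 : y ≤ x - h) (hy2 : x - h < y); linarith
  have hsplit : ∫ y, w (x - y) ∂G.measure
      = ∫ y in Iic h, w (x - y) ∂G.measure + ∫ y in Ioc h (x - h), w (x - y) ∂G.measure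
        + ∫ y in Ioi (x - h), w (x - y) ∂G.measure := by
    rw [← setIntegral_union hd1 measurableSet_Ioc (hintg _) (hintg _),
      Iic_union_Ioc_eq_Iic hxh,
      ← setIntegral_union hd2 measurableSet_Ioi (hintg _) (hintg _), Iic_union_Ioi]
    exact setIntegral_univ.symm
  -- part 1
  have hmassIic : (G.measure (Iic h)).toReal ≤ Ginf := by
    rw [G.measure_Iic hGbot, ENNReal.toReal_ofReal (by linarith [hcbotle h])]
    linarith [hGle h, hcbotle h]
  have p1 : ∫ y in Iic h, w (x - y) ∂G.measure
      ≤ ((Lw + ε1) * Ginf * (1 + ε1)) * tailP μ Y x := by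
    calc ∫ y in Iic h, w (x - y) ∂G.measure ≤ ∫ _y in Iic h, w (x - h) ∂G.measure := by
          refine setIntegral_mono_on (hintg _) (by
            simpa using integrableOn_const (measure_ne_top _ _))
            measurableSet_Iic fun y hy => ?_
          exact hwa (by simp only [mem_Iic] at hy; linarith)
      _ = (G.measure (Iic h)).toReal * w (x - h) := by
          rw [setIntegral_const, smul_eq_mul, measureReal_def]
      _ ≤ Ginf * ((Lw + ε1) * tailP μ Y (x - h)) :=
          mul_le_mul hmassIic (hz1 _ hxz1') (hw0 _) hGinf0
      _ = ((Lw + ε1) * Ginf) * tailP μ Y (x - h) := by ring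
      _ ≤ ((Lw + ε1) * Ginf) * ((1 + ε1) * tailP μ Y x) := by
          refine mul_le_mul_of_nonneg_left hltx ?_
          have : 0 ≤ Lw + ε1 := by linarith
          positivity
      _ = ((Lw + ε1) * Ginf * (1 + ε1)) * tailP μ Y x := by ring
  -- part 2
  have p2 : ∫ y in Ioc h (x - h), w (x - y) ∂G.measure ≤ ε1 * tailP μ Y x := by
    have step1 : ∫ y in Ioc h (x - h), w (x - y) ∂G.measure
        ≤ ∫ y in Ioc h (x - h), (Lw + 1) * tailP μ Y (x - y) ∂G.measure := by
      refine setIntegral_mono_on (hintg _) ((hintT _).const_mul _) measurableSet_Ioc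
        fun y hy => ?_
      rcases mem_Ioc.1 hy with ⟨hy1, hy2⟩
      exact hz2 (x - y) (by linarith)
    have step2 : ∫ y in Ioc h (x - h), (Lw + 1) * tailP μ Y (x - y) ∂G.measure
        = (Lw + 1) * ∫ y in Ioc h (x - h), tailP μ Y (x - y) ∂G.measure :=
      integral_const_mul _ _
    have step3 : ∫ y in Ioc h (x - h), tailP μ Y (x - y) ∂G.measure
        ≤ ∫ y in Ioc h2 (x - h2), tailP μ Y (x - y) ∂G.measure := by
      refine setIntegral_mono_set (hintT _)
        (Eventually.of_forall fun y => tail_nonneg μ Y _)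
        (HasSubset.Subset.eventuallyLE (Ioc_subset_Ioc hh2h (by linarith)))
    calc ∫ y in Ioc h (x - h), w (x - y) ∂G.measure
        ≤ (Lw + 1) * ∫ y in Ioc h2 (x - h2), tailP μ Y (x - y) ∂G.measure := by
          refine le_trans step1 ?_
          rw [step2]
          exact mul_le_mul_of_nonneg_left step3 (by linarith)
      _ ≤ (Lw + 1) * (ε2 * tailP μ Y x) := mul_le_mul_of_nonneg_left htrx (by linarith)
      _ ≤ ε1 * tailP μ Y x := by
          rw [hε2]
          have hq : (Lw + 1) / (Lw + 1 + 1) ≤ 1 := (div_le_one (by linarith)).2 (by linarith)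
          have h7 := mul_le_mul_of_nonneg_right hq (mul_nonneg hε1pos.le (Tpos x).le)
          calc (Lw + 1) * (ε1 / (Lw + 1 + 1) * tailP μ Y x)
              = (Lw + 1) / (Lw + 1 + 1) * (ε1 * tailP μ Y x) := by ring
            _ ≤ 1 * (ε1 * tailP μ Y x) := h7
            _ = ε1 * tailP μ Y x := one_mul _
  -- part 3
  have hmassIoi : (G.measure (Ioi (x - h))).toReal ≤ CG * tailP μ Y (x - h) := by
    have hIoi : G.measure (Ioi (x - h)) = ENNReal.ofReal (Ginf - G (x - h)) := by
      rw [← compl_Iic, measure_compl measurableSet_Iic (measure_ne_top _ _),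
        G.measure_univ hGbot hGtop, G.measure_Iic hGbot,
        ← ENNReal.ofReal_sub _ (by linarith [hcbotle (x - h)])]
      congr 1
      ring
    rw [hIoi, ENNReal.toReal_ofReal (by linarith [hGle (x - h)])]
    exact hz0 _ hxz0'
  have p3 : ∫ y in Ioi (x - h), w (x - y) ∂G.measure
      ≤ (Bw * CG * (1 + ε1)) * tailP μ Y x := by
    calc ∫ y in Ioi (x - h), w (x - y) ∂G.measure ≤ ∫ _y in Ioi (x - h), Bw ∂G.measure := by
          refine setIntegral_mono_on (hintg _) (by
            simpa using integrableOn_const (measure_ne_top _ _))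
            measurableSet_Ioi fun y _hy => hwB _
      _ = (G.measure (Ioi (x - h))).toReal * Bw := by rw [setIntegral_const, smul_eq_mul, measureReal_def]
      _ ≤ (CG * tailP μ Y (x - h)) * Bw := mul_le_mul_of_nonneg_right hmassIoi hBw0
      _ = (Bw * CG) * tailP μ Y (x - h) := by ring
      _ ≤ (Bw * CG) * ((1 + ε1) * tailP μ Y x) :=
          mul_le_mul_of_nonneg_left hltx (mul_nonneg hBw0 hCG)
      _ = (Bw * CG * (1 + ε1)) * tailP μ Y x := by ring
  -- combine
  have hcoef : (Lw + ε1) * Ginf * (1 + ε1) + ε1 + Bw * CG * (1 + ε1)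
      ≤ Lw * Ginf + Bw * CG + ε := by
    have hsq : ε1 * ε1 ≤ 1 * ε1 := mul_le_mul_of_nonneg_right hε1le1 hε1pos.le
    nlinarith [hε1D, hε1pos.le, hGinf0, hBw0, hCG, hLw0]
  calc ∫ y, w (x - y) ∂G.measure
      = ∫ y in Iic h, w (x - y) ∂G.measure + ∫ y in Ioc h (x - h), w (x - y) ∂G.measure
        + ∫ y in Ioi (x - h), w (x - y) ∂G.measure := hsplit
    _ ≤ ((Lw + ε1) * Ginf * (1 + ε1)) * tailP μ Y x + ε1 * tailP μ Y x
        + (Bw * CG * (1 + ε1)) * tailP μ Y x := by linarith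
    _ = ((Lw + ε1) * Ginf * (1 + ε1) + ε1 + Bw * CG * (1 + ε1)) * tailP μ Y x := by ring
    _ ≤ (Lw * Ginf + Bw * CG + ε) * tailP μ Y x :=
        mul_le_mul_of_nonneg_right hcoef (Tpos x).le

end Tail2

section Iter

lemma integrable_of_bdd {ν : Measure ℝ} [IsFiniteMeasure ν] {g : ℝ → ℝ} (hm : Measurable g)
    (c : ℝ) (hb : ∀ z, |g z| ≤ c) : Integrable g ν :=
  Integrable.mono' (integrable_const c) hm.aestronglyMeasurable (Eventually.of_forall hb)

variable {d : ℕ} (F : Fin d → Fin d → StieltjesFunction ℝ) (FInf : Matrix (Fin d) (Fin d) ℝ)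

/-- the left limit of an entry -/
noncomputable def cbot (j k : Fin d) : ℝ := ⨅ x, (F j k) x

variable (hFnn : ∀ i j x, 0 ≤ F i j x) (hFInf : ∀ i j, Tendsto (F i j) atTop (nhds (FInf i j)))

section basic
include hFnn

lemma cbot_bdd (j k : Fin d) : BddBelow (Set.range (F j k)) := by
  refine ⟨0, ?_⟩
  rintro y ⟨x, rfl⟩
  exact hFnn j k x

lemma cbot_tendsto (j k : Fin d) : Tendsto (F j k) atBot (nhds (cbot F j k)) :=
  tendsto_atBot_ciInf (F j k).mono (cbot_bdd F hFnn j k)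

lemma cbot_nonneg (j k : Fin d) : 0 ≤ cbot F j k :=
  le_ciInf fun x => hFnn j k x

lemma cbot_le (j k : Fin d) (x : ℝ) : cbot F j k ≤ F j k x :=
  ciInf_le (cbot_bdd F hFnn j k) x

include hFInf

lemma FInf_ge (j k : Fin d) (x : ℝ) : F j k x ≤ FInf j k :=
  Monotone.ge_of_tendsto (F j k).mono (hFInf j k) x

lemma FInf_nonneg (j k : Fin d) : 0 ≤ FInf j k :=
  le_trans (hFnn j k 0) (FInf_ge F FInf hFnn hFInf j k 0)

lemma cbot_le_FInf (j k : Fin d) : cbot F j k ≤ FInf j k :=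
  le_trans (cbot_le F hFnn j k 0) (FInf_ge F FInf hFnn hFInf j k 0)

lemma finF (j k : Fin d) : IsFiniteMeasure (F j k).measure :=
  (F j k).isFiniteMeasure (cbot_tendsto F hFnn j k) (hFInf j k)

lemma mass_toReal (j k : Fin d) :
    ((F j k).measure univ).toReal = FInf j k - cbot F j k := by
  rw [(F j k).measure_univ (cbot_tendsto F hFnn j k) (hFInf j k),
    ENNReal.toReal_ofReal (sub_nonneg.2 (cbot_le_FInf F FInf hFnn hFInf j k))]

end basic

lemma pow_entry_nonneg (hFnn : ∀ i j x, 0 ≤ F i j x)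
    (hFInf : ∀ i j, Tendsto (F i j) atTop (nhds (FInf i j))) :
    ∀ (n : ℕ) (i j : Fin d), 0 ≤ (FInf ^ n) i j := by
  intro n
  induction n with
  | zero => intro i j; rw [pow_zero, Matrix.one_apply]; split <;> norm_num
  | succ n ih =>
    intro i j
    rw [pow_succ, Matrix.mul_apply]
    exact Finset.sum_nonneg fun l _ =>
      mul_nonneg (ih i l) (FInf_nonneg F FInf hFnn hFInf l j)

lemma pow_entry (n : ℕ) (i k : Fin d) :
    (FInf ^ (n+1)) i k = ∑ j, (FInf ^ n) i j * FInf j k := by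
  rw [pow_succ, Matrix.mul_apply]

/-- basic joint properties of the iterated convolutions -/
lemma iter_prop (hFnn : ∀ i j x, 0 ≤ F i j x)
    (hFInf : ∀ i j, Tendsto (F i j) atTop (nhds (FInf i j))) :
    ∀ n : ℕ, (∀ i j, Monotone (fun x => iterConv F n i j x))
      ∧ (∀ i j x, 0 ≤ iterConv F n i j x)
      ∧ (∀ i j x, iterConv F n i j x ≤ (FInf ^ n) i j) := by
  intro n
  induction n with
  | zero =>
    refine ⟨fun i j x x' hxx' => ?_, fun i j x => ?_, fun i j x => ?_⟩
    · show (if 0 ≤ x then (if i = j then (1:ℝ) else 0) else 0)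
        ≤ (if 0 ≤ x' then (if i = j then 1 else 0) else 0)
      rcases le_or_gt 0 x with h | h
      · rw [if_pos h, if_pos (le_trans h hxx')]
      · rw [if_neg (not_le.2 h)]
        split <;> [skip; exact le_refl _]
        split <;> norm_num
    · show 0 ≤ (if 0 ≤ x then (if i = j then (1:ℝ) else 0) else 0)
      split <;> [skip; exact le_refl _]
      split <;> norm_num
    · show (if 0 ≤ x then (if i = j then (1:ℝ) else 0) else 0) ≤ (FInf ^ 0) i j
      rw [pow_zero, Matrix.one_apply]
      split
      · exact le_refl _
      · split <;> norm_num
  | succ n ih =>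
    obtain ⟨ihm, ih0, ihle⟩ := ih
    have hmeas : ∀ i j, Measurable (fun x => iterConv F n i j x) :=
      fun i j => (ihm i j).measurable
    have hbd : ∀ i j z, |iterConv F n i j z| ≤ (FInf ^ n) i j := fun i j z => by
      rw [abs_of_nonneg (ih0 i j z)]; exact ihle i j z
    have hint : ∀ (i j k : Fin d) (x : ℝ),
        Integrable (fun y => iterConv F n i j (x - y)) (F j k).measure := by
      intro i j k x
      haveI := finF F FInf hFnn hFInf j k
      exact integrable_of_bdd ((hmeas i j).comp (measurable_const.sub measurable_id))
        ((FInf ^ n) i j) (fun z => hbd i j _)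
    refine ⟨fun i k x x' hxx' => ?_, fun i k x => ?_, fun i k x => ?_⟩
    · show ∑ j, ∫ y, iterConv F n i j (x - y) ∂(F j k).measure
        ≤ ∑ j, ∫ y, iterConv F n i j (x' - y) ∂(F j k).measure
      refine Finset.sum_le_sum fun j _ => ?_
      refine integral_mono (hint i j k x) (hint i j k x') fun y => ?_
      exact ihm i j (by linarith : x - y ≤ x' - y)
    · show 0 ≤ ∑ j, ∫ y, iterConv F n i j (x - y) ∂(F j k).measure
      exact Finset.sum_nonneg fun j _ => integral_nonneg fun y => ih0 i j _
    · show ∑ j, ∫ y, iterConv F n i j (x - y) ∂(F j k).measure ≤ (FInf ^ (n+1)) i k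
      rw [pow_entry]
      refine Finset.sum_le_sum fun j _ => ?_
      haveI := finF F FInf hFnn hFInf j k
      calc ∫ y, iterConv F n i j (x - y) ∂(F j k).measure
          ≤ ∫ _y, (FInf ^ n) i j ∂(F j k).measure :=
            integral_mono (hint i j k x) (integrable_const _) fun y => ihle i j _
        _ = ((F j k).measure univ).toReal * (FInf ^ n) i j := by
            rw [integral_const, smul_eq_mul, measureReal_def]
        _ = (FInf j k - cbot F j k) * (FInf ^ n) i j := by
            rw [mass_toReal F FInf hFnn hFInf j k]
        _ ≤ (FInf ^ n) i j * FInf j k := by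
            have h1 := cbot_nonneg F hFnn j k
            have h2 := pow_entry_nonneg F FInf hFnn hFInf n i j
            nlinarith

/-- the one-step recursion identity -/
lemma iter_rec (hFnn : ∀ i j x, 0 ≤ F i j x)
    (hFInf : ∀ i j, Tendsto (F i j) atTop (nhds (FInf i j)))
    (n : ℕ) (i k : Fin d) (x : ℝ) :
    (FInf ^ (n+1)) i k - iterConv F (n+1) i k x
      = (∑ j, (FInf ^ n) i j * cbot F j k)
        + ∑ j, ∫ y, ((FInf ^ n) i j - iterConv F n i j (x - y)) ∂(F j k).measure := by
  obtain ⟨ihm, ih0, ihle⟩ := iter_prop F FInf hFnn hFInf n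
  have hint : ∀ (j : Fin d),
      Integrable (fun y => iterConv F n i j (x - y)) (F j k).measure := by
    intro j
    haveI := finF F FInf hFnn hFInf j k
    refine integrable_of_bdd (((ihm i j).measurable).comp
      (measurable_const.sub measurable_id)) ((FInf ^ n) i j) (fun z => ?_)
    rw [abs_of_nonneg (ih0 i j _)]; exact ihle i j _
  have hj : ∀ j : Fin d, ∫ y, ((FInf ^ n) i j - iterConv F n i j (x - y)) ∂(F j k).measure
      = (FInf ^ n) i j * (FInf j k - cbot F j k)
        - ∫ y, iterConv F n i j (x - y) ∂(F j k).measure := by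
    intro j
    haveI := finF F FInf hFnn hFInf j k
    rw [integral_sub (integrable_const _) (hint j), integral_const, smul_eq_mul, measureReal_def,
      mass_toReal F FInf hFnn hFInf j k, mul_comm]
  have hconv : iterConv F (n+1) i k x
      = ∑ j, ∫ y, iterConv F n i j (x - y) ∂(F j k).measure := rfl
  rw [hconv, pow_entry, Finset.sum_congr rfl (fun j _ => hj j), ← Finset.sum_sub_distrib,
    ← Finset.sum_add_distrib]
  refine Finset.sum_congr rfl fun j _ => ?_
  ring


lemma measure_Ioi_toReal (hFnn : ∀ i j x, 0 ≤ F i j x)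
    (hFInf : ∀ i j, Tendsto (F i j) atTop (nhds (FInf i j))) (j k : Fin d) (t : ℝ) :
    ((F j k).measure (Ioi t)).toReal = FInf j k - F j k t := by
  haveI := finF F FInf hFnn hFInf j k
  have h1 : (F j k).measure (Ioi t) = ENNReal.ofReal (FInf j k - F j k t) := by
    rw [← compl_Iic, measure_compl measurableSet_Iic (measure_ne_top _ _),
      (F j k).measure_univ (cbot_tendsto F hFnn j k) (hFInf j k),
      (F j k).measure_Iic (cbot_tendsto F hFnn j k),
      ← ENNReal.ofReal_sub _ (sub_nonneg.2 (cbot_le F hFnn j k t))]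
    congr 1
    ring
  rw [h1, ENNReal.toReal_ofReal (sub_nonneg.2 (FInf_ge F FInf hFnn hFInf j k t))]

end Iter

section USec

variable {d : ℕ} (F : Fin d → Fin d → StieltjesFunction ℝ) (FInf : Matrix (Fin d) (Fin d) ℝ)

/-- the total expected number of visits type series -/
noncomputable def Uf (i j : Fin d) : ℝ → ℝ :=
  fun x => ∑' n : ℕ, ((FInf ^ n) i j - iterConv F n i j x)

variable (hFnn : ∀ i j x, 0 ≤ F i j x) (hFInf : ∀ i j, Tendsto (F i j) atTop (nhds (FInf i j)))
  (hS : ∀ i j, Summable (fun n : ℕ => (FInf ^ n) i j))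

include hFnn hFInf hS

lemma g_nonneg (n : ℕ) (i j : Fin d) (x : ℝ) :
    0 ≤ (FInf ^ n) i j - iterConv F n i j x :=
  sub_nonneg.2 ((iter_prop F FInf hFnn hFInf n).2.2 i j x)

lemma g_le (n : ℕ) (i j : Fin d) (x : ℝ) :
    (FInf ^ n) i j - iterConv F n i j x ≤ (FInf ^ n) i j := by
  have := (iter_prop F FInf hFnn hFInf n).2.1 i j x
  linarith

lemma g_sum (i j : Fin d) (x : ℝ) :
    Summable (fun n : ℕ => (FInf ^ n) i j - iterConv F n i j x) :=
  Summable.of_nonneg_of_le (fun n => g_nonneg F FInf hFnn hFInf hS n i j x)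
    (fun n => g_le F FInf hFnn hFInf hS n i j x) (hS i j)

lemma Uf_nonneg (i j : Fin d) (x : ℝ) : 0 ≤ Uf F FInf i j x :=
  tsum_nonneg (fun n => g_nonneg F FInf hFnn hFInf hS n i j x)

lemma Uf_le (i j : Fin d) (x : ℝ) : Uf F FInf i j x ≤ ∑' n : ℕ, (FInf ^ n) i j :=
  Summable.tsum_le_tsum (fun n => g_le F FInf hFnn hFInf hS n i j x)
    (g_sum F FInf hFnn hFInf hS i j x) (hS i j)

lemma Uf_anti (i j : Fin d) : Antitone (Uf F FInf i j) := by
  intro x x' hxx'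
  refine Summable.tsum_le_tsum (fun n => ?_) (g_sum F FInf hFnn hFInf hS i j x')
    (g_sum F FInf hFnn hFInf hS i j x)
  have := (iter_prop F FInf hFnn hFInf n).1 i j hxx'
  simp only at this
  linarith

lemma Uf_ge (n : ℕ) (i j : Fin d) (x : ℝ) :
    (FInf ^ n) i j - iterConv F n i j x ≤ Uf F FInf i j x :=
  Summable.le_tsum (g_sum F FInf hFnn hFInf hS i j x) n
    (fun m _ => g_nonneg F FInf hFnn hFInf hS m i j x)

/-- the renewal-type recursion for `Uf` -/
lemma Uf_rec (i k : Fin d) (x : ℝ) :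
    Uf F FInf i k x = ((FInf ^ 0) i k - iterConv F 0 i k x)
      + (∑ j, (∑' n : ℕ, (FInf ^ n) i j) * cbot F j k)
      + ∑ j, ∫ y, Uf F FInf i j (x - y) ∂(F j k).measure := by
  have hg : ∀ j, Summable (fun n : ℕ => (FInf ^ n) i j * cbot F j k) :=
    fun j => (hS i j).mul_right _
  have hintmeas : ∀ (n : ℕ) (j : Fin d),
      Measurable (fun y => (FInf ^ n) i j - iterConv F n i j (x - y)) := by
    intro n j
    exact measurable_const.sub ((((iter_prop F FInf hFnn hFInf n).1 i j).measurable).comp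
      (measurable_const.sub measurable_id))
  have hintble : ∀ (n : ℕ) (j : Fin d),
      Integrable (fun y => (FInf ^ n) i j - iterConv F n i j (x - y)) (F j k).measure := by
    intro n j
    haveI := finF F FInf hFnn hFInf j k
    refine integrable_of_bdd (hintmeas n j) ((FInf ^ n) i j) (fun z => ?_)
    rw [abs_of_nonneg (g_nonneg F FInf hFnn hFInf hS n i j _)]
    exact g_le F FInf hFnn hFInf hS n i j _
  have hIsum : ∀ j, Summable (fun n : ℕ =>
      ∫ y, ((FInf ^ n) i j - iterConv F n i j (x - y)) ∂(F j k).measure) := by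
    intro j
    haveI := finF F FInf hFnn hFInf j k
    refine Summable.of_nonneg_of_le (fun n => integral_nonneg fun y =>
        g_nonneg F FInf hFnn hFInf hS n i j _) (fun n => ?_)
      ((hS i j).mul_right ((FInf j k - cbot F j k)))
    calc ∫ y, ((FInf ^ n) i j - iterConv F n i j (x - y)) ∂(F j k).measure
        ≤ ∫ _y, (FInf ^ n) i j ∂(F j k).measure :=
          integral_mono (hintble n j) (integrable_const _)
            (fun y => g_le F FInf hFnn hFInf hS n i j _)
      _ = ((F j k).measure univ).toReal * (FInf ^ n) i j := by
          rw [integral_const, smul_eq_mul, measureReal_def]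
      _ = (FInf ^ n) i j * (FInf j k - cbot F j k) := by
          rw [mass_toReal F FInf hFnn hFInf j k, mul_comm]
  -- the shifted tsum
  have h0 : Uf F FInf i k x = ((FInf ^ 0) i k - iterConv F 0 i k x)
      + ∑' n : ℕ, ((FInf ^ (n+1)) i k - iterConv F (n+1) i k x) :=
    Summable.tsum_eq_zero_add (g_sum F FInf hFnn hFInf hS i k x)
  rw [h0]
  have h1 : ∀ n : ℕ, (FInf ^ (n+1)) i k - iterConv F (n+1) i k x
      = (∑ j, (FInf ^ n) i j * cbot F j k)
        + ∑ j, ∫ y, ((FInf ^ n) i j - iterConv F n i j (x - y)) ∂(F j k).measure :=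
    fun n => iter_rec F FInf hFnn hFInf n i k x
  rw [tsum_congr h1, Summable.tsum_add (summable_sum (fun j _ => hg j))
    (summable_sum (fun j _ => hIsum j)), add_assoc]
  congr 1
  congr 1
  · rw [Summable.tsum_finsetSum (fun j _ => hg j)]
    exact Finset.sum_congr rfl fun j _ => tsum_mul_right
  · rw [Summable.tsum_finsetSum (fun j _ => hIsum j)]
    refine Finset.sum_congr rfl fun j _ => ?_
    haveI := finF F FInf hFnn hFInf j k
    rw [← integral_tsum (fun n => (hintmeas n j).aestronglyMeasurable) ?_]
    · rfl
    · -- finiteness of the sum of lintegrals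
      have hb : ∀ n : ℕ, ∫⁻ y, ‖(FInf ^ n) i j - iterConv F n i j (x - y)‖₊ ∂(F j k).measure
          ≤ ENNReal.ofReal ((FInf ^ n) i j) * (F j k).measure univ := by
        intro n
        calc ∫⁻ y, ‖(FInf ^ n) i j - iterConv F n i j (x - y)‖₊ ∂(F j k).measure
            ≤ ∫⁻ _y, ENNReal.ofReal ((FInf ^ n) i j) ∂(F j k).measure := by
              refine lintegral_mono fun y => ?_
              rw [← enorm_eq_nnnorm, Real.enorm_eq_ofReal (g_nonneg F FInf hFnn hFInf hS n i j _)]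
              exact ENNReal.ofReal_le_ofReal (g_le F FInf hFnn hFInf hS n i j _)
          _ = ENNReal.ofReal ((FInf ^ n) i j) * (F j k).measure univ := lintegral_const _
      refine ne_top_of_le_ne_top ?_ (ENNReal.tsum_le_tsum hb)
      rw [ENNReal.tsum_mul_right, ← ENNReal.ofReal_tsum_of_nonneg
        (fun n => pow_entry_nonneg F FInf hFnn hFInf n i j) (hS i j)]
      exact ENNReal.mul_ne_top ENNReal.ofReal_ne_top (measure_ne_top _ _)

end USec

section Helpers

lemma limsup_junk {f : ℝ → ℝ} (h : ¬ ∃ a : ℝ, ∀ᶠ x in atTop, f x ≤ a) :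
    Filter.limsup f atTop = 0 := by
  rw [Filter.limsup_eq]
  have he : {a : ℝ | ∀ᶠ x in atTop, f x ≤ a} = ∅ := by
    rw [eq_empty_iff_forall_notMem]
    intro a ha
    exact h ⟨a, ha⟩
  rw [he]
  exact Real.sInf_empty

lemma ev_le_limsup {f : ℝ → ℝ} (hb : IsBoundedUnder (· ≤ ·) atTop f) {ε : ℝ} (hε : 0 < ε) :
    ∀ᶠ x in atTop, f x ≤ Filter.limsup f atTop + ε := by
  have h := eventually_lt_of_limsup_lt
    (show Filter.limsup f atTop < Filter.limsup f atTop + ε by linarith) hb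
  filter_upwards [h] with x hx using hx.le

lemma limsup_nonneg' {f : ℝ → ℝ} (hb : IsBoundedUnder (· ≤ ·) atTop f)
    (h0 : ∀ x, 0 ≤ f x) : 0 ≤ Filter.limsup f atTop :=
  le_limsup_of_frequently_le ((Eventually.of_forall h0).frequently) hb

lemma limsup_le_of_ev {f : ℝ → ℝ} (h0 : ∀ x, 0 ≤ f x) {a : ℝ}
    (h : ∀ᶠ x in atTop, f x ≤ a) : Filter.limsup f atTop ≤ a :=
  limsup_le_of_le (isCoboundedUnder_le_of_eventually_le atTop (Eventually.of_forall h0)) h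

/-- iteration of the matrix fixed point inequality -/
lemma iter_fixpoint {d : ℕ} (A : Matrix (Fin d) (Fin d) ℝ) (hA0 : ∀ i j, 0 ≤ A i j)
    (l r : Fin d → ℝ) (hl0 : ∀ j, 0 ≤ l j) (hr0 : ∀ j, 0 ≤ r j)
    (hrec : ∀ k, l k ≤ ∑ j, l j * A j k + r k)
    (Bm : Matrix (Fin d) (Fin d) ℝ) (hsum : ∀ i j, HasSum (fun n : ℕ => (A ^ n) i j) (Bm i j)) :
    ∀ k, l k ≤ ∑ j, r j * Bm j k := by
  have hA0n : ∀ (n : ℕ) (i j : Fin d), 0 ≤ (A ^ n) i j := by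
    intro n
    induction n with
    | zero => intro i j; rw [pow_zero, Matrix.one_apply]; split <;> norm_num
    | succ n ih =>
      intro i j
      rw [pow_succ, Matrix.mul_apply]
      exact Finset.sum_nonneg fun p _ => mul_nonneg (ih i p) (hA0 p j)
  have step : ∀ (m : ℕ) (k : Fin d),
      l k ≤ (∑ j, l j * (A ^ m) j k) + ∑ t ∈ Finset.range m, ∑ j, r j * (A ^ t) j k := by
    intro m
    induction m with
    | zero =>
      intro k
      simp only [pow_zero, Finset.range_zero, Finset.sum_empty, add_zero]
      have h1 : ∑ j, l j * (1 : Matrix (Fin d) (Fin d) ℝ) j k = l k := by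
        rw [Finset.sum_eq_single k]
        · rw [Matrix.one_apply_eq, mul_one]
        · intro b _ hb; rw [Matrix.one_apply_ne hb, mul_zero]
        · intro hk; exact absurd (Finset.mem_univ k) hk
      rw [h1]
    | succ m ih =>
      intro k
      have key : ∑ j, l j * (A ^ m) j k
          ≤ (∑ p, l p * (A ^ (m+1)) p k) + ∑ j, r j * (A ^ m) j k := by
        calc ∑ j, l j * (A ^ m) j k
            ≤ ∑ j, (∑ p, l p * A p j + r j) * (A ^ m) j k := by
              refine Finset.sum_le_sum fun j _ => ?_
              exact mul_le_mul_of_nonneg_right (hrec j) (hA0n m j k)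
          _ = ∑ j, ((∑ p, l p * A p j * (A ^ m) j k) + r j * (A ^ m) j k) := by
              refine Finset.sum_congr rfl fun j _ => ?_
              rw [add_mul, Finset.sum_mul]
          _ = (∑ j, ∑ p, l p * A p j * (A ^ m) j k) + ∑ j, r j * (A ^ m) j k :=
              Finset.sum_add_distrib
          _ = (∑ p, l p * (A ^ (m+1)) p k) + ∑ j, r j * (A ^ m) j k := by
              congr 1
              rw [Finset.sum_comm]
              refine Finset.sum_congr rfl fun p _ => ?_
              rw [pow_succ', Matrix.mul_apply, Finset.mul_sum]
              refine Finset.sum_congr rfl fun j _ => ?_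
              ring
      calc l k ≤ (∑ j, l j * (A ^ m) j k) + ∑ t ∈ Finset.range m, ∑ j, r j * (A ^ t) j k :=
            ih k
        _ ≤ ((∑ p, l p * (A ^ (m+1)) p k) + ∑ j, r j * (A ^ m) j k)
            + ∑ t ∈ Finset.range m, ∑ j, r j * (A ^ t) j k := by linarith
        _ = (∑ p, l p * (A ^ (m+1)) p k)
            + ∑ t ∈ Finset.range (m+1), ∑ j, r j * (A ^ t) j k := by
            rw [Finset.sum_range_succ]
            ring
  intro k
  have h1 : Tendsto (fun m : ℕ => ∑ j, l j * (A ^ m) j k) atTop (nhds 0) := by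
    have : Tendsto (fun m : ℕ => ∑ j : Fin d, l j * (A ^ m) j k) atTop
        (nhds (∑ j : Fin d, l j * 0)) := by
      refine tendsto_finset_sum _ fun j _ => ?_
      exact Tendsto.const_mul _ ((hsum j k).summable.tendsto_atTop_zero)
    simpa using this
  have h2 : Tendsto (fun m : ℕ => ∑ t ∈ Finset.range m, ∑ j, r j * (A ^ t) j k) atTop
      (nhds (∑ j, r j * Bm j k)) := by
    have hc : ∀ m : ℕ, ∑ t ∈ Finset.range m, ∑ j, r j * (A ^ t) j k
        = ∑ j, r j * (∑ t ∈ Finset.range m, (A ^ t) j k) := by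
      intro m
      rw [Finset.sum_comm]
      exact Finset.sum_congr rfl fun j _ => by rw [Finset.mul_sum]
    simp only [hc]
    refine tendsto_finset_sum _ fun j _ => ?_
    exact Tendsto.const_mul _ ((hsum j k).tendsto_sum_nat)
  have h3 : Tendsto (fun m : ℕ => (∑ j, l j * (A ^ m) j k)
      + ∑ t ∈ Finset.range m, ∑ j, r j * (A ^ t) j k) atTop
      (nhds (0 + ∑ j, r j * Bm j k)) := h1.add h2
  rw [zero_add] at h3
  exact ge_of_tendsto h3 (Eventually.of_forall fun m => step m k)

end Helpers


/-- If additionally `Σ_{n≥0} (F(∞))^n = (I - F(∞))^{-1} < ∞`, then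
`limsup Σ_{n=0}^∞ (F^{*n})‾(x)/P(Y>x) ≤ (I - F(∞))^{-1} F̃ (I - F(∞))^{-1}` entrywise. -/
theorem stmt16 {Ω : Type*} [MeasurableSpace Ω] (μ : Measure Ω) [IsProbabilityMeasure μ]
    (Y : Ω → ℝ) (hYmeas : Measurable Y) (hY0 : ∀ ω, 0 ≤ Y ω) (hYsub : SubexpRV μ Y)
    {d : ℕ}
    (F : Fin d → Fin d → StieltjesFunction ℝ)
    (hFnn : ∀ i j x, 0 ≤ F i j x)
    (FInf : Matrix (Fin d) (Fin d) ℝ)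
    (hFInf : ∀ i j, Tendsto (F i j) atTop (nhds (FInf i j)))
    (Ft : Matrix (Fin d) (Fin d) ℝ) (hFt0 : ∀ i j, 0 ≤ Ft i j)
    (hFlim : ∀ i j,
      Filter.limsup (fun x => (FInf i j - F i j x) / tailP μ Y x) atTop ≤ Ft i j)
    (hsum : ∀ i j, HasSum (fun n : ℕ => (FInf ^ n) i j) (((1 - FInf)⁻¹ : Matrix (Fin d) (Fin d) ℝ) i j)) :
    ∀ i j, Filter.limsup (fun x =>
        (∑' n : ℕ, ((FInf ^ n) i j - iterConv F n i j x)) / tailP μ Y x) atTop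
      ≤ ((1 - FInf)⁻¹ * Ft * (1 - FInf)⁻¹ : Matrix (Fin d) (Fin d) ℝ) i j := by
  classical
  obtain ⟨hpos, hsub2⟩ : (∀ x ≥ 0, 0 < tailP μ Y x) ∧
      Tendsto (fun x => ((μ.prod μ) {p : Ω × Ω | x < Y p.1 + Y p.2}).toReal / tailP μ Y x)
        atTop (nhds 2) := hYsub
  intro i k
  have Tpos : ∀ x, 0 < tailP μ Y x := tail_pos μ Y hY0 hpos
  have hS : ∀ a b, Summable (fun n : ℕ => (FInf ^ n) a b) := fun a b => (hsum a b).summable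
  set Bv : Fin d → Fin d → ℝ := fun a b => ∑' n : ℕ, (FInf ^ n) a b with hBv
  have hBveq : ∀ a b, Bv a b = ((1 - FInf)⁻¹ : Matrix (Fin d) (Fin d) ℝ) a b :=
    fun a b => (hsum a b).tsum_eq
  have hBv0 : ∀ a b, 0 ≤ Bv a b :=
    fun a b => tsum_nonneg fun n => pow_entry_nonneg F FInf hFnn hFInf n a b
  set M := ((1 - FInf)⁻¹ * Ft * (1 - FInf)⁻¹ : Matrix (Fin d) (Fin d) ℝ) i k with hMdef
  set r : Fin d → ℝ := fun j' => ∑ j, Bv i j * Ft j j' with hr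
  have hr0 : ∀ j', 0 ≤ r j' :=
    fun j' => Finset.sum_nonneg fun j _ => mul_nonneg (hBv0 i j) (hFt0 j j')
  have hMsum : M = ∑ j', r j' * Bv j' k := by
    rw [hMdef, Matrix.mul_apply]
    refine Finset.sum_congr rfl fun j' _ => ?_
    rw [Matrix.mul_apply, ← hBveq j' k, hr]
    congr 1
    exact Finset.sum_congr rfl fun j _ => by rw [← hBveq i j]
  have hM0 : 0 ≤ M := by
    rw [hMsum]
    exact Finset.sum_nonneg fun j' _ => mul_nonneg (hr0 j') (hBv0 j' k)
  set P : Fin d → Prop := fun j => ∃ a : ℝ, ∀ᶠ x in atTop, Uf F FInf i j x ≤ a * tailP μ Y x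
    with hP
  -- integrability of shifted U
  have hUint : ∀ (j j' : Fin d) (x : ℝ),
      Integrable (fun y => Uf F FInf i j (x - y)) (F j j').measure := by
    intro j j' x
    haveI := finF F FInf hFnn hFInf j j'
    refine integrable_of_bdd (((Uf_anti F FInf hFnn hFInf hS i j).measurable).comp
      (measurable_const.sub measurable_id)) (Bv i j) (fun z => ?_)
    rw [abs_of_nonneg (Uf_nonneg F FInf hFnn hFInf hS i j _)]
    exact Uf_le F FInf hFnn hFInf hS i j _
  -- lower bound of U by set integrals
  have hUlow : ∀ (j j' : Fin d) (s : Set ℝ) (x : ℝ),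
      ∫ y in s, Uf F FInf i j (x - y) ∂(F j j').measure ≤ Uf F FInf i j' x := by
    intro j j' s x
    rw [Uf_rec F FInf hFnn hFInf hS i j' x]
    have h1 : ∫ y in s, Uf F FInf i j (x - y) ∂(F j j').measure
        ≤ ∫ y, Uf F FInf i j (x - y) ∂(F j j').measure :=
      setIntegral_le_integral (hUint j j' x)
        (Eventually.of_forall fun y => Uf_nonneg F FInf hFnn hFInf hS i j _)
    have h2 : ∫ y, Uf F FInf i j (x - y) ∂(F j j').measure
        ≤ ∑ q, ∫ y, Uf F FInf i q (x - y) ∂(F q j').measure :=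
      Finset.single_le_sum (f := fun q => ∫ y, Uf F FInf i q (x - y) ∂(F q j').measure)
        (fun q _ => integral_nonneg fun y => Uf_nonneg F FInf hFnn hFInf hS i q _)
        (Finset.mem_univ j)
    have h3 : 0 ≤ (FInf ^ 0) i j' - iterConv F 0 i j' x :=
      g_nonneg F FInf hFnn hFInf hS 0 i j' x
    have h4 : 0 ≤ ∑ q, (∑' n : ℕ, (FInf ^ n) i q) * cbot F q j' :=
      Finset.sum_nonneg fun q _ => mul_nonneg (hBv0 i q) (cbot_nonneg F hFnn q j')
    linarith
  -- propagation of unboundedness through a nonzero measure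
  have PROPa : ∀ (j j' : Fin d), (F j j').measure univ ≠ 0 → P j' → P j := by
    intro j j' hm0 hPj'
    haveI := finF F FInf hFnn hFInf j j'
    -- find an interval with positive mass
    have huniv : (⋃ m : ℕ, Ioc (-(m:ℝ)) (m:ℝ)) = univ := by
      ext y
      simp only [mem_iUnion, mem_Ioc, mem_univ, iff_true]
      obtain ⟨m, hm⟩ := exists_nat_gt |y|
      exact ⟨m, by linarith [(abs_lt.1 hm).1], le_of_lt (lt_of_le_of_lt (le_abs_self y) hm)⟩
    have hex : ∃ m : ℕ, (F j j').measure (Ioc (-(m:ℝ)) (m:ℝ)) ≠ 0 := by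
      by_contra hall
      push_neg at hall
      have := measure_iUnion_null (μ := (F j j').measure) hall
      rw [huniv] at this
      exact hm0 this
    obtain ⟨m, hμm⟩ := hex
    set δm := ((F j j').measure (Ioc (-(m:ℝ)) (m:ℝ))).toReal with hδm
    have hδmpos : 0 < δm := ENNReal.toReal_pos hμm (measure_ne_top _ _)
    have hlow : ∀ x : ℝ, Uf F FInf i j (x + m) * δm ≤ Uf F FInf i j' x := by
      intro x
      have e1 : Uf F FInf i j (x + m) * δm
          = ∫ _y in Ioc (-(m:ℝ)) (m:ℝ), Uf F FInf i j (x + m) ∂(F j j').measure := by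
        rw [setIntegral_const, smul_eq_mul, measureReal_def, mul_comm]
      rw [e1]
      refine le_trans (setIntegral_mono_on ((integrableOn_const
        (measure_ne_top _ _))) ((hUint j j' x).integrableOn)
        measurableSet_Ioc fun y hy => ?_) (hUlow j j' _ x)
      rcases mem_Ioc.1 hy with ⟨hy1, _⟩
      exact Uf_anti F FInf hFnn hFInf hS i j (by linarith : x - y ≤ x + m)
    obtain ⟨a, ha⟩ := hPj'
    obtain ⟨w0, hw0⟩ := eventually_atTop.1 (LTshift μ hYmeas hY0 hpos hsub2 (-(m:ℝ)))
    obtain ⟨x0, hx0⟩ := eventually_atTop.1 ha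
    refine ⟨2 * |a| / δm, eventually_atTop.2 ⟨max x0 w0 + m + 1, fun z hz => ?_⟩⟩
    set x := z - m with hx
    have hxx0 : x ≥ x0 := by
      have h1 : (0:ℝ) ≤ m := Nat.cast_nonneg m
      have := le_max_left x0 w0
      simp only [hx]; linarith
    have hxw0 : x ≥ w0 := by
      have := le_max_right x0 w0
      simp only [hx]; linarith
    have h5 : Uf F FInf i j' x ≤ a * tailP μ Y x := hx0 x hxx0
    have h6 : tailP μ Y x ≤ 2 * tailP μ Y (x - -(m:ℝ)) := hw0 x hxw0
    have h7 : x - -(m:ℝ) = z := by simp only [hx]; ring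
    rw [h7] at h6
    have h8 : x + m = z := by simp only [hx]; ring
    have h9 := hlow x
    rw [h8] at h9
    have h10 : a * tailP μ Y x ≤ |a| * tailP μ Y x :=
      mul_le_mul_of_nonneg_right (le_abs_self a) (Tpos x).le
    have h11 : |a| * tailP μ Y x ≤ |a| * (2 * tailP μ Y z) :=
      mul_le_mul_of_nonneg_left h6 (abs_nonneg a)
    have h12 : Uf F FInf i j z * δm ≤ 2 * |a| * tailP μ Y z := by linarith
    calc Uf F FInf i j z = (Uf F FInf i j z * δm) / δm := by
          field_simp
      _ ≤ (2 * |a| * tailP μ Y z) / δm := by gcongr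
      _ = 2 * |a| / δm * tailP μ Y z := by ring
  -- tail comparability propagation
  have PROPb : ∀ (j j' : Fin d), (∃ z0 : ℝ, 0 < Uf F FInf i j z0) → P j' →
      ∃ a : ℝ, ∀ᶠ x in atTop, FInf j j' - F j j' x ≤ a * tailP μ Y x := by
    intro j j' ⟨z0, hz0⟩ hPj'
    have hlow2 : ∀ x : ℝ, Uf F FInf i j z0 * (FInf j j' - F j j' (x - z0))
        ≤ Uf F FInf i j' x := by
      intro x
      haveI := finF F FInf hFnn hFInf j j'
      have e1 : Uf F FInf i j z0 * (FInf j j' - F j j' (x - z0))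
          = ∫ _y in Ioi (x - z0), Uf F FInf i j z0 ∂(F j j').measure := by
        rw [setIntegral_const, smul_eq_mul, measureReal_def, mul_comm,
          measure_Ioi_toReal F FInf hFnn hFInf j j' (x - z0)]
      rw [e1]
      refine le_trans (setIntegral_mono_on ((integrableOn_const
        (measure_ne_top _ _))) ((hUint j j' x).integrableOn)
        measurableSet_Ioi fun y hy => ?_) (hUlow j j' _ x)
      have : x - z0 < y := hy
      exact Uf_anti F FInf hFnn hFInf hS i j (by linarith : x - y ≤ z0)
    obtain ⟨a, ha⟩ := hPj'
    obtain ⟨w0, hw0⟩ := eventually_atTop.1 (LTshift μ hYmeas hY0 hpos hsub2 z0)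
    obtain ⟨x0, hx0⟩ := eventually_atTop.1 ha
    refine ⟨2 * |a| / Uf F FInf i j z0, eventually_atTop.2 ⟨max x0 w0 - z0, fun z hz => ?_⟩⟩
    set x := z + z0 with hxdef
    have hxx0 : x ≥ x0 := by
      have := le_max_left x0 w0
      simp only [hxdef]; linarith
    have hxw0 : x ≥ w0 := by
      have := le_max_right x0 w0
      simp only [hxdef]; linarith
    have hxz : x - z0 = z := by simp only [hxdef]; ring
    have h5 : Uf F FInf i j' x ≤ a * tailP μ Y x := hx0 x hxx0
    have h6 : tailP μ Y x ≤ 2 * tailP μ Y (x - z0) := hw0 x hxw0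
    rw [hxz] at h6
    have h9 := hlow2 x
    rw [hxz] at h9
    have h10 : a * tailP μ Y x ≤ |a| * tailP μ Y x :=
      mul_le_mul_of_nonneg_right (le_abs_self a) (Tpos x).le
    have h11 : |a| * tailP μ Y x ≤ |a| * (2 * tailP μ Y z) :=
      mul_le_mul_of_nonneg_left h6 (abs_nonneg a)
    have h12 : Uf F FInf i j z0 * (FInf j j' - F j j' z) ≤ 2 * |a| * tailP μ Y z := by
      linarith
    calc FInf j j' - F j j' z
        = (Uf F FInf i j z0 * (FInf j j' - F j j' z)) / Uf F FInf i j z0 := by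
          field_simp
      _ ≤ (2 * |a| * tailP μ Y z) / Uf F FInf i j z0 := by gcongr
      _ = 2 * |a| / Uf F FInf i j z0 * tailP μ Y z := by ring
  by_cases hPk : P k
  case neg =>
    have hnb : ¬ ∃ a : ℝ, ∀ᶠ x in atTop, Uf F FInf i k x / tailP μ Y x ≤ a := by
      rintro ⟨a, ha⟩
      refine hPk ⟨a, ?_⟩
      filter_upwards [ha] with x hx
      exact (div_le_iff₀ (Tpos x)).1 hx
    have hls : Filter.limsup (fun x => Uf F FInf i k x / tailP μ Y x) atTop = 0 :=
      limsup_junk hnb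
    show Filter.limsup (fun x => Uf F FInf i k x / tailP μ Y x) atTop ≤ M
    rw [hls]
    exact hM0
  case pos =>
  set l : Fin d → ℝ := fun j =>
    if P j then Filter.limsup (fun x => Uf F FInf i j x / tailP μ Y x) atTop else 0 with hl
  have hfb : ∀ j, P j → IsBoundedUnder (· ≤ ·) atTop
      (fun x => Uf F FInf i j x / tailP μ Y x) := by
    rintro j ⟨a, ha⟩
    refine ⟨a, ?_⟩
    rw [eventually_map]
    filter_upwards [ha] with x hx
    exact (div_le_iff₀ (Tpos x)).2 hx
  have hl0 : ∀ j, 0 ≤ l j := by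
    intro j
    simp only [hl]
    split_ifs with hPj
    · exact limsup_nonneg' (hfb j hPj)
        (fun x => div_nonneg (Uf_nonneg F FInf hFnn hFInf hS i j x) (Tpos x).le)
    · exact le_refl 0
  have hlev : ∀ j, P j → ∀ δ : ℝ, 0 < δ → ∀ᶠ x in atTop,
      Uf F FInf i j x ≤ (l j + δ) * tailP μ Y x := by
    intro j hPj δ hδ
    have h1 := ev_le_limsup (hfb j hPj) hδ
    filter_upwards [h1] with x hx
    have h2 : l j = Filter.limsup (fun x => Uf F FInf i j x / tailP μ Y x) atTop := by
      simp only [hl, if_pos hPj]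
    rw [h2]
    exact (div_le_iff₀ (Tpos x)).1 hx
  -- vanishing of the atom part for entries with P
  have hcb0 : ∀ j', P j' → ∑ q, (∑' n : ℕ, (FInf ^ n) i q) * cbot F q j' = 0 := by
    intro j' hPj'
    by_contra hne
    set c := ∑ q, (∑' n : ℕ, (FInf ^ n) i q) * cbot F q j' with hc
    have hc0 : 0 ≤ c :=
      Finset.sum_nonneg fun q _ => mul_nonneg (hBv0 i q) (cbot_nonneg F hFnn q j')
    have hcpos : 0 < c := lt_of_le_of_ne hc0 (Ne.symm hne)
    have hUc : ∀ x, c ≤ Uf F FInf i j' x := by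
      intro x
      rw [Uf_rec F FInf hFnn hFInf hS i j' x]
      have h3 : 0 ≤ (FInf ^ 0) i j' - iterConv F 0 i j' x :=
        g_nonneg F FInf hFnn hFInf hS 0 i j' x
      have h4 : 0 ≤ ∑ q, ∫ y, Uf F FInf i q (x - y) ∂(F q j').measure :=
        Finset.sum_nonneg fun q _ =>
          integral_nonneg fun y => Uf_nonneg F FInf hFnn hFInf hS i q _
      rw [← hc]
      linarith
    obtain ⟨a, ha⟩ := hPj'
    have hTev : ∀ᶠ x in atTop, tailP μ Y x ≤ c / (2 * (|a| + 1)) :=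
      (tail_tendsto_zero μ Y hYmeas).eventually (eventually_le_nhds (by positivity))
    obtain ⟨x, hx1, hx2⟩ := (ha.and hTev).exists
    have h5 : c ≤ a * tailP μ Y x := le_trans (hUc x) hx1
    have h6 : a * tailP μ Y x ≤ |a| * tailP μ Y x :=
      mul_le_mul_of_nonneg_right (le_abs_self a) (Tpos x).le
    have h7 : |a| * tailP μ Y x ≤ |a| * (c / (2 * (|a| + 1))) :=
      mul_le_mul_of_nonneg_left hx2 (abs_nonneg a)
    have h8 : |a| * (c / (2 * (|a| + 1))) < c := by
      rw [mul_div_assoc']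
      rw [div_lt_iff₀ (by positivity)]
      nlinarith [abs_nonneg a, hcpos]
    linarith
  -- the per-term estimate
  have hterm : ∀ (j' : Fin d), P j' → ∀ (j : Fin d) (δ : ℝ), 0 < δ →
      ∀ᶠ x in atTop, ∫ y, Uf F FInf i j (x - y) ∂(F j j').measure
        ≤ (l j * FInf j j' + Bv i j * Ft j j' + δ) * tailP μ Y x := by
    intro j' hPj' j δ hδ
    have hRHS0 : ∀ x, 0 ≤ (l j * FInf j j' + Bv i j * Ft j j' + δ) * tailP μ Y x := by
      intro x
      refine mul_nonneg ?_ (Tpos x).le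
      have h1 : 0 ≤ l j * FInf j j' :=
        mul_nonneg (hl0 j) (FInf_nonneg F FInf hFnn hFInf j j')
      have h2 : 0 ≤ Bv i j * Ft j j' := mul_nonneg (hBv0 i j) (hFt0 j j')
      linarith
    by_cases hz : ∀ z, Uf F FInf i j z = 0
    · filter_upwards with x
      have : (fun y => Uf F FInf i j (x - y)) = fun _ => (0:ℝ) := funext fun y => hz _
      rw [this, integral_const, smul_eq_mul, mul_zero]
      exact hRHS0 x
    · push_neg at hz
      obtain ⟨z0, hz0ne⟩ := hz
      have hz0pos : 0 < Uf F FInf i j z0 :=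
        lt_of_le_of_ne (Uf_nonneg F FInf hFnn hFInf hS i j z0) (Ne.symm hz0ne)
      by_cases hm0 : (F j j').measure univ = 0
      · have hν : (F j j').measure = 0 := Measure.measure_univ_eq_zero.1 hm0
        filter_upwards with x
        rw [hν, integral_zero_measure]
        exact hRHS0 x
      · have hPj : P j := PROPa j j' hm0 hPj'
        obtain ⟨ta, hta⟩ := PROPb j j' ⟨z0, hz0pos⟩ hPj'
        have hbd : IsBoundedUnder (· ≤ ·) atTop
            (fun x => (FInf j j' - F j j' x) / tailP μ Y x) := by
          refine ⟨ta, ?_⟩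
          rw [eventually_map]
          filter_upwards [hta] with x hx
          exact (div_le_iff₀ (Tpos x)).2 hx
        set δ' := δ / (2 * (Bv i j + 1)) with hδ'
        have hδ'pos : 0 < δ' := by
          rw [hδ']
          have h9 := hBv0 i j
          refine div_pos hδ (by linarith)
        have hGtail : ∀ᶠ z in atTop, FInf j j' - F j j' z
            ≤ (Ft j j' + δ') * tailP μ Y z := by
          have h1 := eventually_lt_of_limsup_lt
            (lt_of_le_of_lt (hFlim j j') (lt_add_of_pos_right _ hδ'pos)) hbd
          filter_upwards [h1] with z hzz
          exact le_of_lt ((div_lt_iff₀ (Tpos z)).1 hzz)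
        have hks := keystep μ hYmeas hY0 hpos hsub2 (Uf F FInf i j)
          (Uf_anti F FInf hFnn hFInf hS i j) (Uf_nonneg F FInf hFnn hFInf hS i j)
          (Bv i j) (Uf_le F FInf hFnn hFInf hS i j) (l j) (hl0 j)
          (fun δ'' hδ'' => hlev j hPj δ'' hδ'')
          (F j j') (FInf j j') (cbot F j j') (Ft j j' + δ')
          (by linarith [hFt0 j j'] : 0 ≤ Ft j j' + δ')
          (hFInf j j') (cbot_tendsto F hFnn j j') (cbot_nonneg F hFnn j j')
          hGtail (show 0 < δ/2 by linarith)
        filter_upwards [hks] with x hx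
        refine le_trans hx ?_
        refine mul_le_mul_of_nonneg_right ?_ (Tpos x).le
        have hkey : Bv i j * δ' ≤ δ / 2 := by
          rw [hδ', mul_div_assoc']
          rw [div_le_iff₀ (by linarith [hBv0 i j] : (0:ℝ) < 2 * (Bv i j + 1))]
          nlinarith [hBv0 i j]
        nlinarith [hBv0 i j]
  -- the recursion inequality for l
  have hrec : ∀ j', l j' ≤ ∑ j, l j * FInf j j' + r j' := by
    intro j'
    by_cases hPj' : P j'
    case neg =>
      have : l j' = 0 := by simp only [hl]; rw [if_neg hPj']
      rw [this]
      refine add_nonneg (Finset.sum_nonneg fun j _ =>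
        mul_nonneg (hl0 j) (FInf_nonneg F FInf hFnn hFInf j j')) (hr0 j')
    case pos =>
      refine le_of_forall_pos_le_add fun δ hδ => ?_
      set δ1 := δ / (d + 1) with hδ1
      have hδ1pos : 0 < δ1 := by
        rw [hδ1]
        have : (0:ℝ) < (d:ℝ) + 1 := by positivity
        positivity
      have hall : ∀ᶠ x in atTop, ∀ j : Fin d,
          ∫ y, Uf F FInf i j (x - y) ∂(F j j').measure
            ≤ (l j * FInf j j' + Bv i j * Ft j j' + δ1) * tailP μ Y x :=
        eventually_all.2 fun j => hterm j' hPj' j δ1 hδ1pos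
      have hev : ∀ᶠ x in atTop, Uf F FInf i j' x
          ≤ (∑ j, l j * FInf j j' + r j' + δ) * tailP μ Y x := by
        filter_upwards [hall, eventually_ge_atTop (0:ℝ)] with x hx hx0
        have hg0 : (FInf ^ 0) i j' - iterConv F 0 i j' x = 0 := by
          have : iterConv F 0 i j' x = if i = j' then 1 else 0 := if_pos hx0
          rw [this, pow_zero, Matrix.one_apply]
          split <;> norm_num
        rw [Uf_rec F FInf hFnn hFInf hS i j' x, hg0, hcb0 j' hPj', zero_add, zero_add]
        calc ∑ j, ∫ y, Uf F FInf i j (x - y) ∂(F j j').measure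
            ≤ ∑ j, (l j * FInf j j' + Bv i j * Ft j j' + δ1) * tailP μ Y x :=
              Finset.sum_le_sum fun j _ => hx j
          _ = (∑ j, l j * FInf j j' + r j' + d * δ1) * tailP μ Y x := by
              rw [← Finset.sum_mul]
              congr 1
              rw [Finset.sum_add_distrib, Finset.sum_add_distrib, hr]
              congr 1
              simp [Finset.sum_const, Finset.card_univ]
          _ ≤ (∑ j, l j * FInf j j' + r j' + δ) * tailP μ Y x := by
              refine mul_le_mul_of_nonneg_right ?_ (Tpos x).le
              have : (d : ℝ) * δ1 ≤ δ := by
                rw [hδ1, mul_div_assoc']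
                rw [div_le_iff₀ (by positivity : (0:ℝ) < (d:ℝ) + 1)]
                nlinarith [Nat.cast_nonneg (α := ℝ) d, hδ.le]
              linarith
      have hlj' : l j' = Filter.limsup (fun x => Uf F FInf i j' x / tailP μ Y x) atTop := by
        simp only [hl, if_pos hPj']
      rw [hlj']
      refine limsup_le_of_ev
        (fun x => div_nonneg (Uf_nonneg F FInf hFnn hFInf hS i j' x) (Tpos x).le) ?_
      filter_upwards [hev] with x hx
      exact (div_le_iff₀ (Tpos x)).2 hx
  -- conclude via the fixed point iteration
  have hfinal := iter_fixpoint FInf (FInf_nonneg F FInf hFnn hFInf) l r hl0 hr0 hrec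
    ((1 - FInf)⁻¹) hsum k
  have hlk : l k = Filter.limsup (fun x => Uf F FInf i k x / tailP μ Y x) atTop := by
    simp only [hl, if_pos hPk]
  show Filter.limsup (fun x => Uf F FInf i k x / tailP μ Y x) atTop ≤ M
  rw [← hlk, hMsum]
  refine le_trans hfinal (le_of_eq ?_)
  exact Finset.sum_congr rfl fun j' _ => by rw [hBveq j' k]
end
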